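/- arXiv:2510.07913 — 13 statements merged into one kernel-verified Lean document; each statement's English description precedes it below -/
import Mathlib

section
/- For every real a ≥ 0, every ε ∈ (0,1), and every natural number m with m ≥ 2.24·a + 0.648·ln(12/ε), there exists a real polynomial p with deg p ≤ m such that for all u ∈ [−1,1], |p(u) − e^{−au}| ≤ (ε/6)·e^{−au}. (Writing a = βK/2, a degree of 1.12·βK + 0.648·ln(12/ε) thus suffices to approximate e^{−βKu/2} on [−1,1] to relative error ε/6.) -/
open Finset Polynomial

lemma my_cos_pow (n : ℕ) (θ : ℝ) :
    Real.cos θ ^ n = ∑ j ∈ Finset.range (n+1),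
      (n.choose j : ℝ)/2^n * Real.cos (((n:ℝ) - 2*(j:ℝ)) * θ) := by
  apply Complex.ofReal_injective
  push_cast [Complex.ofReal_cos]
  set E : ℝ → ℂ := fun x => Complex.exp (x * Complex.I) with hE
  have hEpow : ∀ (x : ℝ) (k : ℕ), (E x)^k = E (k * x) := by
    intro x k
    simp only [hE, ← Complex.exp_nat_mul]
    push_cast
    ring_nf
  have hEmul : ∀ x y : ℝ, E x * E y = E (x + y) := by
    intro x y
    simp only [hE, ← Complex.exp_add]
    push_cast
    ring_nf
  have hcos : ∀ x : ℝ, Complex.cos (x : ℂ) = (E x + E (-x))/2 := by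
    intro x
    simp only [Complex.cos, hE]
    push_cast
    ring_nf
  have key : ∀ j ∈ Finset.range (n+1),
      (n.choose j : ℂ)/2^n * Complex.cos (((n:ℂ) - 2*(j:ℂ)) * (θ:ℂ)) =
      (n.choose j : ℂ)/2^n * (E (((n:ℝ) - 2*j) * θ) + E ((2*(j:ℝ) - n) * θ))/2 := by
    intro j _
    have h1 : ((n:ℂ) - 2*(j:ℂ)) * (θ:ℂ) = ((((n:ℝ) - 2*j) * θ : ℝ) : ℂ) := by push_cast; ring
    rw [h1, hcos]
    have h2 : -(((n:ℝ) - 2*j) * θ) = (2*(j:ℝ) - n) * θ := by ring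
    rw [h2]
    ring
  rw [Finset.sum_congr rfl key]
  have reflect : ∑ j ∈ Finset.range (n+1), (n.choose j : ℂ)/2^n * E (((n:ℝ) - 2*j) * θ)
      = ∑ j ∈ Finset.range (n+1), (n.choose j : ℂ)/2^n * E ((2*(j:ℝ) - n) * θ) := by
    rw [← Finset.sum_range_reflect (fun j => (n.choose j : ℂ)/2^n * E ((2*(j:ℝ) - n) * θ)) (n+1)]
    apply Finset.sum_congr rfl
    intro j hj
    have hjn : j ≤ n := Nat.lt_succ_iff.mp (Finset.mem_range.mp hj)
    have e1 : n + 1 - 1 - j = n - j := by omega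
    rw [e1, Nat.choose_symm hjn]
    congr 2
    push_cast [Nat.cast_sub hjn]
    ring
  have lhs : Complex.cos (θ:ℂ) ^ n
      = ∑ j ∈ Finset.range (n+1), (n.choose j : ℂ)/2^n * E ((2*(j:ℝ) - n) * θ) := by
    rw [hcos, div_pow, add_pow]
    rw [Finset.sum_div]
    apply Finset.sum_congr rfl
    intro j hj
    have hjn : j ≤ n := Nat.lt_succ_iff.mp (Finset.mem_range.mp hj)
    rw [hEpow, hEpow, hEmul]
    have : (j:ℝ) * θ + ((n - j : ℕ):ℝ) * (-θ) = (2*(j:ℝ) - n) * θ := by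
      push_cast [Nat.cast_sub hjn]; ring
    rw [this]
    ring
  have expand : ∑ j ∈ Finset.range (n+1), (n.choose j : ℂ)/2^n * (E (((n:ℝ) - 2*j) * θ) + E ((2*(j:ℝ) - n) * θ))/2
      = ((∑ j ∈ Finset.range (n+1), (n.choose j : ℂ)/2^n * E (((n:ℝ) - 2*j) * θ))
        + ∑ j ∈ Finset.range (n+1), (n.choose j : ℂ)/2^n * E ((2*(j:ℝ) - n) * θ))/2 := by
    rw [← Finset.sum_add_distrib, ← Finset.sum_div]
    congr 1
    apply Finset.sum_congr rfl
    intro j _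
    ring
  rw [lhs, expand, reflect]
  ring

lemma my_natDegree_T_le (k : ℕ) : (Polynomial.Chebyshev.T ℝ (k:ℤ)).natDegree ≤ k := by
  induction k using Nat.strong_induction_on with
  | _ k ih =>
    match k with
    | 0 => simp [Polynomial.Chebyshev.T_zero]
    | 1 => simpa [Polynomial.Chebyshev.T_one] using Polynomial.natDegree_X_le
    | (j+2) =>
      have h : ((j+2 : ℕ) : ℤ) = (j:ℤ) + 2 := by push_cast; ring
      rw [h, Polynomial.Chebyshev.T_add_two]
      apply le_trans (Polynomial.natDegree_sub_le _ _)
      have h1 : (2 * Polynomial.X * Polynomial.Chebyshev.T ℝ ((j:ℤ)+1)).natDegree ≤ j + 2 := by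
        apply le_trans (Polynomial.natDegree_mul_le)
        have hx : (2 * Polynomial.X : ℝ[X]).natDegree ≤ 1 :=
          le_trans (Polynomial.natDegree_mul_le) (by simp)
        have ihj : (Polynomial.Chebyshev.T ℝ (((j+1:ℕ)):ℤ)).natDegree ≤ j+1 := ih (j+1) (by omega)
        have hcast : (((j+1:ℕ)):ℤ) = (j:ℤ)+1 := by push_cast; ring
        rw [hcast] at ihj
        omega
      have h2 : (Polynomial.Chebyshev.T ℝ (j:ℤ)).natDegree ≤ j := ih j (by omega)
      simp only [max_le_iff]
      exact ⟨h1, le_trans h2 (by omega)⟩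

lemma my_cos_natAbs (x : ℤ) (θ : ℝ) :
    Real.cos ((x.natAbs : ℝ) * θ) = Real.cos ((x:ℝ) * θ) := by
  rw [Nat.cast_natAbs, Int.cast_abs]
  rcases abs_cases (x:ℝ) with ⟨h,_⟩ | ⟨h,_⟩
  · rw [h]
  · rw [h, neg_mul, Real.cos_neg]

lemma my_binom_exp (n : ℕ) (t : ℝ) :
    ∑ j ∈ Finset.range (n+1), (n.choose j : ℝ) * Real.exp (t * ((n:ℝ) - 2*j))
      = (Real.exp t + Real.exp (-t))^n := by
  rw [add_comm (Real.exp t), add_pow]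
  apply Finset.sum_congr rfl
  intro j hj
  have hjn : j ≤ n := Nat.lt_succ_iff.mp (Finset.mem_range.mp hj)
  rw [← Real.exp_nat_mul, ← Real.exp_nat_mul, ← Real.exp_add]
  rw [mul_comm ((n.choose j : ℝ)) _]
  congr 2
  push_cast [Nat.cast_sub hjn]
  ring

noncomputable def myW (n k : ℕ) : ℝ :=
  ∑ j ∈ Finset.range (n+1), if ((n:ℤ) - 2*j).natAbs = k then (n.choose j : ℝ)/2^n else 0

lemma myW_nonneg (n k : ℕ) : 0 ≤ myW n k := by
  apply Finset.sum_nonneg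
  intro j _
  split <;> positivity

lemma myW_le_one (n k : ℕ) : myW n k ≤ 1 := by
  have h1 : myW n k ≤ ∑ j ∈ Finset.range (n+1), (n.choose j : ℝ)/2^n := by
    apply Finset.sum_le_sum
    intro j _
    split
    · exact le_refl _
    · positivity
  have h2 : ∑ j ∈ Finset.range (n+1), (n.choose j:ℝ)/2^n = 1 := by
    rw [← Finset.sum_div,
      show (∑ j ∈ Finset.range (n+1), (n.choose j:ℝ)) = 2^n from by
        exact_mod_cast Nat.sum_range_choose n]
    exact div_self (by positivity)
  linarith

lemma my_collect (m n : ℕ) (θ : ℝ) :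
    ∑ k ∈ Finset.range (m+1), myW n k * Real.cos ((k:ℝ)*θ)
      = ∑ j ∈ Finset.range (n+1), (if ((n:ℤ)-2*(j:ℤ)).natAbs ≤ m then
          (n.choose j : ℝ)/2^n * Real.cos (((n:ℝ)-2*(j:ℝ))*θ) else 0) := by
  unfold myW
  simp only [Finset.sum_mul]
  rw [Finset.sum_comm]
  apply Finset.sum_congr rfl
  intro j _
  simp only [ite_mul, zero_mul]
  rw [Finset.sum_ite_eq]
  simp only [Finset.mem_range, Nat.lt_succ_iff]
  by_cases hc : ((n:ℤ) - 2*(j:ℤ)).natAbs ≤ m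
  · rw [if_pos hc, if_pos hc]
    have h := my_cos_natAbs ((n:ℤ)-2*(j:ℤ)) θ
    push_cast at h
    rw [h]
  · rw [if_neg hc, if_neg hc]

lemma my_trunc_bound (m n : ℕ) (θ t : ℝ) (ht : 0 ≤ t) :
    |(∑ j ∈ Finset.range (n+1), (n.choose j : ℝ)/2^n * Real.cos (((n:ℝ)-2*(j:ℝ))*θ))
      - ∑ j ∈ Finset.range (n+1), (if ((n:ℤ)-2*(j:ℤ)).natAbs ≤ m then
          (n.choose j : ℝ)/2^n * Real.cos (((n:ℝ)-2*(j:ℝ))*θ) else 0)|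
    ≤ 2 * Real.exp (-(t*((m:ℝ)+1))) * ((Real.exp t + Real.exp (-t))/2)^n := by
  rw [← Finset.sum_sub_distrib]
  refine le_trans (Finset.abs_sum_le_sum_abs _ _) ?_
  have step1 : ∀ j ∈ Finset.range (n+1),
      |(n.choose j : ℝ)/2^n * Real.cos (((n:ℝ)-2*(j:ℝ))*θ)
        - (if ((n:ℤ)-2*(j:ℤ)).natAbs ≤ m then
            (n.choose j : ℝ)/2^n * Real.cos (((n:ℝ)-2*(j:ℝ))*θ) else 0)|
      ≤ Real.exp (-(t*((m:ℝ)+1))) * ((n.choose j : ℝ)/2^n) *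
          (Real.exp (t*((n:ℝ)-2*(j:ℝ))) + Real.exp (-(t*((n:ℝ)-2*(j:ℝ))))) := by
    intro j _
    set x : ℝ := (n:ℝ)-2*(j:ℝ) with hxdef
    by_cases hc : ((n:ℤ)-2*(j:ℤ)).natAbs ≤ m
    · rw [if_pos hc, sub_self, abs_zero]; positivity
    · rw [if_neg hc, sub_zero]
      have hcnn : (0:ℝ) ≤ (n.choose j : ℝ)/2^n := by positivity
      have hb : |(n.choose j : ℝ)/2^n * Real.cos (x*θ)| ≤ (n.choose j : ℝ)/2^n := by
        rw [abs_mul, abs_of_nonneg hcnn]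
        calc (n.choose j : ℝ)/2^n * |Real.cos (x*θ)| ≤ (n.choose j : ℝ)/2^n * 1 :=
              mul_le_mul_of_nonneg_left (Real.abs_cos_le_one _) hcnn
          _ = (n.choose j : ℝ)/2^n := mul_one _
      have hx : ((m:ℝ)+1) ≤ |x| := by
        have h1 : m+1 ≤ ((n:ℤ)-2*(j:ℤ)).natAbs := by omega
        have hcast : ((((n:ℤ)-2*(j:ℤ)).natAbs : ℝ)) = |x| := by
          rw [Nat.cast_natAbs, Int.cast_abs]
          congr 1
          push_cast
          rfl
        calc (m:ℝ)+1 = ((m+1 : ℕ):ℝ) := by push_cast; ring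
          _ ≤ ((((n:ℤ)-2*(j:ℤ)).natAbs : ℝ)) := by exact_mod_cast h1
          _ = |x| := hcast
      have hge : Real.exp (t*((m:ℝ)+1)) ≤ Real.exp (t*x) + Real.exp (-(t*x)) := by
        rcases abs_cases x with ⟨h,_⟩|⟨h,_⟩
        · have h2 : Real.exp (t*((m:ℝ)+1)) ≤ Real.exp (t*x) :=
            Real.exp_le_exp.mpr (by nlinarith)
          linarith [Real.exp_pos (-(t*x))]
        · have h2 : Real.exp (t*((m:ℝ)+1)) ≤ Real.exp (-(t*x)) :=
            Real.exp_le_exp.mpr (by nlinarith)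
          linarith [Real.exp_pos (t*x)]
      have key : 1 ≤ Real.exp (-(t*((m:ℝ)+1))) * (Real.exp (t*x) + Real.exp (-(t*x))) := by
        have h3 := mul_le_mul_of_nonneg_left hge (le_of_lt (inv_pos.mpr (Real.exp_pos (t*((m:ℝ)+1)))))
        rw [inv_mul_cancel₀ (ne_of_gt (Real.exp_pos _))] at h3
        rw [Real.exp_neg]
        exact h3
      calc |(n.choose j : ℝ)/2^n * Real.cos (x*θ)| ≤ (n.choose j : ℝ)/2^n := hb
        _ ≤ (n.choose j : ℝ)/2^n *
            (Real.exp (-(t*((m:ℝ)+1))) * (Real.exp (t*x) + Real.exp (-(t*x)))) :=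
          le_mul_of_one_le_right hcnn key
        _ = Real.exp (-(t*((m:ℝ)+1))) * ((n.choose j : ℝ)/2^n) *
            (Real.exp (t*x) + Real.exp (-(t*x))) := by ring
  refine le_trans (Finset.sum_le_sum step1) ?_
  have expand : ∑ j ∈ Finset.range (n+1), Real.exp (-(t*((m:ℝ)+1))) * ((n.choose j : ℝ)/2^n) *
        (Real.exp (t*((n:ℝ)-2*(j:ℝ))) + Real.exp (-(t*((n:ℝ)-2*(j:ℝ)))))
      = Real.exp (-(t*((m:ℝ)+1))) / 2^n *
        ((∑ j ∈ Finset.range (n+1), (n.choose j:ℝ) * Real.exp (t*((n:ℝ)-2*(j:ℝ))))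
          + ∑ j ∈ Finset.range (n+1), (n.choose j:ℝ) * Real.exp ((-t)*((n:ℝ)-2*(j:ℝ)))) := by
    rw [← Finset.sum_add_distrib, Finset.mul_sum]
    apply Finset.sum_congr rfl
    intro j _
    rw [show (-t)*((n:ℝ)-2*(j:ℝ)) = -(t*((n:ℝ)-2*(j:ℝ))) from by ring]
    ring
  rw [expand, my_binom_exp n t, my_binom_exp n (-t), neg_neg, add_comm (Real.exp (-t)) (Real.exp t)]
  rw [div_pow]
  ring_nf
  exact le_refl _

lemma my_exp_upper : Real.exp (125/162 : ℝ) ≤ 2.1633 := by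
  have hx : |(125/162 : ℝ)| ≤ 1 := by rw [abs_of_pos (by norm_num)]; norm_num
  have hb := Real.exp_bound hx (n := 8) (by norm_num)
  obtain ⟨h1, h2⟩ := abs_sub_le_iff.mp hb
  have hS : (∑ i ∈ Finset.range 8, (125/162:ℝ)^i / i.factorial)
      + |(125/162:ℝ)|^8 * ((8:ℕ).succ / ((8:ℕ).factorial * 8)) ≤ 2.1633 := by
    rw [abs_of_pos (by norm_num)]
    simp [Finset.sum_range_succ, Nat.factorial]
    norm_num
  linarith

lemma my_exp_lower : (2.163 : ℝ) ≤ Real.exp (125/162 : ℝ) := by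
  have hx : |(125/162 : ℝ)| ≤ 1 := by rw [abs_of_pos (by norm_num)]; norm_num
  have hb := Real.exp_bound hx (n := 8) (by norm_num)
  obtain ⟨h1, h2⟩ := abs_sub_le_iff.mp hb
  have hS : (2.163:ℝ) ≤ (∑ i ∈ Finset.range 8, (125/162:ℝ)^i / i.factorial)
      - |(125/162:ℝ)|^8 * ((8:ℕ).succ / ((8:ℕ).factorial * 8)) := by
    rw [abs_of_pos (by norm_num)]
    simp [Finset.sum_range_succ, Nat.factorial]
    norm_num
  linarith

lemma myCq_bound : (Real.exp (125/81 : ℝ) + Real.exp (-(125/81) : ℝ))/2 ≤ 199/81 := by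
  have hsq : Real.exp (125/81 : ℝ) = Real.exp (125/162 : ℝ) * Real.exp (125/162 : ℝ) := by
    rw [← Real.exp_add]; norm_num
  have h1 : Real.exp (125/81 : ℝ) ≤ 2.1633 * 2.1633 := by
    rw [hsq]
    exact mul_le_mul my_exp_upper my_exp_upper (Real.exp_pos _).le (by norm_num)
  have h1' : (2.163 : ℝ) * 2.163 ≤ Real.exp (125/81 : ℝ) := by
    rw [hsq]
    exact mul_le_mul my_exp_lower my_exp_lower (by norm_num) (Real.exp_pos _).le
  have h2 : Real.exp (-(125/81) : ℝ) ≤ ((2.163 : ℝ) * 2.163)⁻¹ := by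
    rw [Real.exp_neg]
    exact inv_anti₀ (by norm_num) h1'
  have : (2.1633 : ℝ) * 2.1633 + ((2.163:ℝ)*2.163)⁻¹ ≤ 2 * (199/81) := by norm_num
  linarith

lemma my_exp_tsum (x : ℝ) : Real.exp x = ∑' n : ℕ, x^n / (n.factorial : ℝ) := by
  rw [Real.exp_eq_exp_ℝ, NormedSpace.exp_eq_tsum_div]

theorem stmt1 (a : ℝ) (ha : 0 ≤ a) (ε : ℝ) (hε : ε ∈ Set.Ioo (0 : ℝ) 1)
    (m : ℕ) (hm : 2.24 * a + 0.648 * Real.log (12 / ε) ≤ (m : ℝ)) :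
    ∃ p : Polynomial ℝ, p.natDegree ≤ m ∧
      ∀ u ∈ Set.Icc (-1 : ℝ) 1,
        |p.eval u - Real.exp (-a * u)| ≤ (ε / 6) * Real.exp (-a * u) := by
  obtain ⟨hε0, hε1⟩ := hε
  set t : ℝ := 125/81 with htdef
  set Cq : ℝ := (Real.exp t + Real.exp (-t))/2 with hCqdef
  have hCqle : Cq ≤ 199/81 := myCq_bound
  have hCqpos : 0 < Cq := by positivity
  have ht0 : (0:ℝ) ≤ t := by norm_num [htdef]
  set c : ℕ → ℝ := fun n => (-a)^n / (n.factorial : ℝ) with hcdef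
  have habs : ∀ n, |c n| = a^n / (n.factorial : ℝ) := by
    intro n
    rw [hcdef]
    rw [abs_div, abs_pow, abs_neg, abs_of_nonneg ha, abs_of_pos (by positivity)]
  have hsumW : ∀ k : ℕ, Summable (fun n => c n * myW n k) := by
    intro k
    apply Summable.of_norm_bounded (Real.summable_pow_div_factorial a)
    intro n
    rw [Real.norm_eq_abs, abs_mul, habs, abs_of_nonneg (myW_nonneg n k)]
    calc a^n / (n.factorial : ℝ) * myW n k ≤ a^n / (n.factorial : ℝ) * 1 :=
          mul_le_mul_of_nonneg_left (myW_le_one n k) (by positivity)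
      _ = a^n / (n.factorial : ℝ) := mul_one _
  set b : ℕ → ℝ := fun k => ∑' n, c n * myW n k with hbdef
  refine ⟨∑ k ∈ Finset.range (m+1), Polynomial.C (b k) * Polynomial.Chebyshev.T ℝ (k:ℤ), ?_, ?_⟩
  · apply Polynomial.natDegree_sum_le_of_forall_le
    intro k hk
    refine le_trans (Polynomial.natDegree_mul_le) ?_
    have h1 := my_natDegree_T_le k
    have h2 : k ≤ m := Nat.lt_succ_iff.mp (Finset.mem_range.mp hk)
    simp only [Polynomial.natDegree_C, zero_add]
    omega
  · intro u hu
    obtain ⟨hu1, hu2⟩ := hu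
    set θ : ℝ := Real.arccos u with hθdef
    have hcosθ : Real.cos θ = u := Real.cos_arccos hu1 hu2
    set s : ℕ → ℝ := fun n => ∑ k ∈ Finset.range (m+1), myW n k * Real.cos ((k:ℝ)*θ)
      with hsdef
    have hsumF : ∀ k ∈ Finset.range (m+1),
        Summable (fun n => (c n * myW n k) * Real.cos ((k:ℝ)*θ)) :=
      fun k _ => (hsumW k).mul_right _
    have heval : Polynomial.eval u (∑ k ∈ Finset.range (m+1),
        Polynomial.C (b k) * Polynomial.Chebyshev.T ℝ (k:ℤ))
        = ∑ k ∈ Finset.range (m+1), b k * Real.cos ((k:ℝ)*θ) := by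
      rw [Polynomial.eval_finset_sum]
      apply Finset.sum_congr rfl
      intro k _
      rw [Polynomial.eval_mul, Polynomial.eval_C, ← hcosθ,
        Polynomial.Chebyshev.T_real_cos]
      norm_num
    have hps : Polynomial.eval u (∑ k ∈ Finset.range (m+1),
        Polynomial.C (b k) * Polynomial.Chebyshev.T ℝ (k:ℤ)) = ∑' n, c n * s n := by
      rw [heval]
      calc ∑ k ∈ Finset.range (m+1), b k * Real.cos ((k:ℝ)*θ)
          = ∑ k ∈ Finset.range (m+1), ∑' n, (c n * myW n k) * Real.cos ((k:ℝ)*θ) := by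
            apply Finset.sum_congr rfl
            intro k _
            rw [tsum_mul_right]
        _ = ∑' n, ∑ k ∈ Finset.range (m+1), (c n * myW n k) * Real.cos ((k:ℝ)*θ) :=
            (Summable.tsum_finsetSum hsumF).symm
        _ = ∑' n, c n * s n := by
            apply tsum_congr
            intro n
            rw [hsdef]
            simp only []
            rw [Finset.mul_sum]
            apply Finset.sum_congr rfl
            intro k _
            ring
    have hexp : Real.exp (-a*u) = ∑' n, c n * u^n := by
      rw [my_exp_tsum]
      apply tsum_congr
      intro n
      rw [hcdef]
      simp only []
      rw [mul_pow]
      ring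
    have hsum1 : Summable (fun n => c n * u^n) := by
      apply Summable.congr (Real.summable_pow_div_factorial (-a*u))
      intro n
      rw [hcdef]
      simp only []
      rw [mul_pow]
      ring
    have hsum2 : Summable (fun n => c n * s n) := by
      apply Summable.congr (summable_sum hsumF)
      intro n
      rw [hsdef]
      simp only []
      rw [Finset.mul_sum]
      apply Finset.sum_congr rfl
      intro k _
      ring
    set E : ℝ := Real.exp (-(t*((m:ℝ)+1))) with hEdef
    have hEpos : 0 < E := Real.exp_pos _
    have hdiff : ∀ n, |c n * s n - c n * u^n| ≤ a^n / (n.factorial : ℝ) * (2 * E * Cq^n) := by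
      intro n
      rw [show c n * s n - c n * u^n = c n * (s n - u^n) from by ring, abs_mul, habs]
      apply mul_le_mul_of_nonneg_left _ (by positivity)
      rw [abs_sub_comm]
      have hu : u^n = ∑ j ∈ Finset.range (n+1),
          (n.choose j : ℝ)/2^n * Real.cos (((n:ℝ)-2*(j:ℝ))*θ) := by
        rw [← hcosθ]
        exact my_cos_pow n θ
      have hs : s n = ∑ j ∈ Finset.range (n+1), (if ((n:ℤ)-2*(j:ℤ)).natAbs ≤ m then
          (n.choose j : ℝ)/2^n * Real.cos (((n:ℝ)-2*(j:ℝ))*θ) else 0) := my_collect m n θ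
      rw [hu, hs, hEdef, hCqdef]
      exact my_trunc_bound m n θ t ht0
    set g : ℕ → ℝ := fun n => a^n / (n.factorial : ℝ) * (2 * E * Cq^n) with hgdef
    have hgsum : Summable g := by
      apply Summable.congr ((Real.summable_pow_div_factorial (a*Cq)).mul_left (2*E))
      intro n
      rw [hgdef]
      simp only []
      rw [mul_pow]
      ring
    have htsg : ∑' n, g n = 2 * E * Real.exp (a*Cq) := by
      rw [show g = fun n => (2*E) * ((a*Cq)^n/(n.factorial:ℝ)) from by
        funext n
        rw [hgdef]
        simp only []
        rw [mul_pow]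
        ring]
      rw [tsum_mul_left, ← my_exp_tsum]
    have habssum : Summable (fun n => |c n * s n - c n * u^n|) :=
      Summable.of_nonneg_of_le (fun n => abs_nonneg _) hdiff hgsum
    have hmain : |Polynomial.eval u (∑ k ∈ Finset.range (m+1),
        Polynomial.C (b k) * Polynomial.Chebyshev.T ℝ (k:ℤ)) - Real.exp (-a*u)|
        ≤ 2 * E * Real.exp (a*Cq) := by
      rw [hps, hexp, ← Summable.tsum_sub hsum2 hsum1]
      calc |∑' n, (c n * s n - c n * u^n)| ≤ ∑' n, |c n * s n - c n * u^n| := by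
            have := norm_tsum_le_tsum_norm (f := fun n => c n * s n - c n * u^n)
              (by simpa [Real.norm_eq_abs] using habssum)
            simpa [Real.norm_eq_abs] using this
        _ ≤ ∑' n, g n := Summable.tsum_le_tsum hdiff habssum hgsum
        _ = 2 * E * Real.exp (a*Cq) := htsg
    refine le_trans hmain ?_
    -- numeric endgame
    have hL0 : 0 < 12/ε := by positivity
    have hkey : a*Cq - t*((m:ℝ)+1) + a ≤ Real.log (ε/12) := by
      have hlog : Real.log (ε/12) = - Real.log (12/ε) := by
        rw [← Real.log_inv]
        congr 1
        field_simp
      rw [hlog]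
      have hmt : (280/81) * a + Real.log (12/ε) ≤ t * m := by
        rw [htdef]
        nlinarith [hm]
      nlinarith [mul_le_mul_of_nonneg_left hCqle ha, ht0]
    have hfinal : 2 * E * Real.exp (a*Cq) ≤ (ε/6) * Real.exp (-a) := by
      have hE2 : E * Real.exp (a*Cq) = Real.exp (a*Cq - t*((m:ℝ)+1)) := by
        rw [hEdef, ← Real.exp_add]
        congr 1
        ring
      rw [mul_assoc, hE2]
      have h2 : Real.exp (a*Cq - t*((m:ℝ)+1)) ≤ ε/12 * Real.exp (-a) := by
        have h3 : Real.exp (Real.log (ε/12) + -a) = ε/12 * Real.exp (-a) := by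
          rw [Real.exp_add, Real.exp_log (by positivity)]
        rw [← h3]
        exact Real.exp_le_exp.mpr (by linarith)
      linarith
    refine le_trans hfinal ?_
    apply mul_le_mul_of_nonneg_left _ (by positivity)
    apply Real.exp_le_exp.mpr
    nlinarith
end

section
/- Let I be a nonempty finite index set, let w : I → ℝ with w_i > 0 for all i, let 0 ≤ η < 1, and let w' : I → ℝ satisfy |w'_i − w_i| ≤ η·w_i for all i. Set W = ∑_i w_i and W' = ∑_i w'_i (so W' ≥ (1−η)W > 0). Then (1/2)·∑_i | w'_i/W' − w_i/W | ≤ η/(1−η). -/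
theorem stmt2 {I : Type*} [Fintype I] [Nonempty I] (w w' : I → ℝ)
    (hw : ∀ i, 0 < w i) (η : ℝ) (hη0 : 0 ≤ η) (hη1 : η < 1)
    (hw' : ∀ i, |w' i - w i| ≤ η * w i) :
    (1 / 2) * ∑ i, |w' i / (∑ j, w' j) - w i / (∑ j, w j)| ≤ η / (1 - η) := by
  set W := ∑ j, w j with hWdef
  set W' := ∑ j, w' j with hW'def
  have hW : 0 < W := Finset.sum_pos (fun i _ => hw i) Finset.univ_nonempty
  have hsum : ∑ i, |w' i - w i| ≤ η * W := by
    rw [hWdef, Finset.mul_sum]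
    exact Finset.sum_le_sum fun i _ => hw' i
  have hdiff : |W' - W| ≤ η * W := by
    calc |W' - W| = |∑ i, (w' i - w i)| := by rw [Finset.sum_sub_distrib]
    _ ≤ ∑ i, |w' i - w i| := Finset.abs_sum_le_sum_abs _ _
    _ ≤ η * W := hsum
  have hW'lb : (1 - η) * W ≤ W' := by nlinarith [abs_le.mp hdiff]
  have hW' : 0 < W' := lt_of_lt_of_le (by nlinarith) hW'lb
  have hdiff2 : |W - W'| ≤ η * W := abs_sub_comm W' W ▸ hdiff
  have key : ∀ i, |w' i / W' - w i / W| ≤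
      |w' i - w i| / W' + w i * |W - W'| / (W * W') := by
    intro i
    have heq : w' i / W' - w i / W = (w' i - w i) / W' + (w i * (W - W')) / (W * W') := by
      field_simp; ring
    rw [heq]
    calc |(w' i - w i) / W' + (w i * (W - W')) / (W * W')|
        ≤ |(w' i - w i) / W'| + |(w i * (W - W')) / (W * W')| := abs_add_le _ _
      _ = |w' i - w i| / W' + w i * |W - W'| / (W * W') := by
          rw [abs_div, abs_div, abs_mul, abs_of_pos hW', abs_of_pos (mul_pos hW hW'),
            abs_of_pos (hw i)]
  have hsum2 : ∑ i, |w' i / W' - w i / W| ≤ 2 * (η * W) / W' := by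
    calc ∑ i, |w' i / W' - w i / W|
        ≤ ∑ i, (|w' i - w i| / W' + w i * |W - W'| / (W * W')) :=
          Finset.sum_le_sum fun i _ => key i
      _ = (∑ i, |w' i - w i|) / W' + W * |W - W'| / (W * W') := by
          rw [Finset.sum_add_distrib, ← Finset.sum_div, ← Finset.sum_div, ← Finset.sum_mul]
      _ ≤ (η * W) / W' + W * (η * W) / (W * W') := by gcongr
      _ = 2 * (η * W) / W' := by field_simp; ring
  have h1 : η * ((1 - η) * W) ≤ η * W' := mul_le_mul_of_nonneg_left hW'lb hη0
  have h2 : (0:ℝ) < 1 - η := by linarith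
  have hfinal : 2 * (η * W) / W' ≤ 2 * (η / (1 - η)) := by
    rw [div_le_iff₀ hW', mul_assoc, mul_le_mul_iff_right₀ (by norm_num : (0:ℝ) < 2),
      div_mul_eq_mul_div, le_div_iff₀ h2]
    nlinarith [h1]
  linarith
end

section
/- Let P be a real polynomial of degree at most ℓ and let m ≥ 1. Then there exist real numbers w_0, …, w_ℓ, depending only on P and m, such that for every commutative ℝ-algebra R and all elements z_1, …, z_m ∈ R with z_i² = 1 for all i, one has P(z_1 + … + z_m) = ∑_{j=0}^{ℓ} w_j · ∑_{y ∈ {0,1}^m, |y| = j} z_1^{y_1} ⋯ z_m^{y_m}, where |y| denotes the Hamming weight of y. -/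
open Finset

def elemSym {R : Type*} [CommRing R] (m : ℕ) (z : Fin m → R) (j : ℕ) : R :=
  ∑ S ∈ Finset.powersetCard j (Finset.univ : Finset (Fin m)), ∏ i ∈ S, z i

lemma elemSym_zero {R : Type*} [CommRing R] (m : ℕ) (z : Fin m → R) :
    elemSym m z 0 = 1 := by simp [elemSym]

lemma elemSym_one {R : Type*} [CommRing R] (m : ℕ) (z : Fin m → R) :
    elemSym m z 1 = ∑ i, z i := by
  simp [elemSym, Finset.powersetCard_one, Finset.sum_map]

lemma partA {R : Type*} [CommRing R] (m j : ℕ) (z : Fin m → R) :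
    ∑ S ∈ powersetCard (j+1) (univ : Finset (Fin m)), ∑ i ∈ S, ∏ k ∈ S.erase i, z k
      = ∑ T ∈ powersetCard j (univ : Finset (Fin m)), ∑ i ∈ Tᶜ, ∏ k ∈ T, z k := by
  rw [Finset.sum_sigma', Finset.sum_sigma']
  refine Finset.sum_nbij'
    (fun p => (⟨p.1.erase p.2, p.2⟩ : Σ _ : Finset (Fin m), Fin m))
    (fun q => (⟨insert q.2 q.1, q.2⟩ : Σ _ : Finset (Fin m), Fin m))
    ?_ ?_ ?_ ?_ ?_
  · rintro ⟨S, i⟩ hp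
    rw [Finset.mem_sigma] at hp ⊢
    obtain ⟨hS, hi⟩ := hp
    refine ⟨?_, by simp⟩
    rw [Finset.mem_powersetCard_univ, Finset.card_erase_of_mem hi,
      Finset.mem_powersetCard_univ.mp hS]
    omega
  · rintro ⟨T, i⟩ hq
    rw [Finset.mem_sigma] at hq ⊢
    obtain ⟨hT, hi⟩ := hq
    rw [Finset.mem_compl] at hi
    refine ⟨?_, Finset.mem_insert_self _ _⟩
    rw [Finset.mem_powersetCard_univ, Finset.card_insert_of_notMem hi,
      Finset.mem_powersetCard_univ.mp hT]
  · rintro ⟨S, i⟩ hp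
    rw [Finset.mem_sigma] at hp
    exact congrArg (fun s => (⟨s, i⟩ : Σ _ : Finset (Fin m), Fin m))
      (Finset.insert_erase hp.2)
  · rintro ⟨T, i⟩ hq
    rw [Finset.mem_sigma] at hq
    exact congrArg (fun s => (⟨s, i⟩ : Σ _ : Finset (Fin m), Fin m))
      (Finset.erase_insert (Finset.mem_compl.mp hq.2))
  · rintro ⟨S, i⟩ _; rfl

lemma partB {R : Type*} [CommRing R] (m j : ℕ) (z : Fin m → R) :
    ∑ S ∈ powersetCard (j+1) (univ : Finset (Fin m)), ∑ i ∈ Sᶜ, ∏ k ∈ insert i S, z k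
      = ∑ U ∈ powersetCard (j+2) (univ : Finset (Fin m)), ∑ i ∈ U, ∏ k ∈ U, z k := by
  rw [Finset.sum_sigma', Finset.sum_sigma']
  refine Finset.sum_nbij'
    (fun p => (⟨insert p.2 p.1, p.2⟩ : Σ _ : Finset (Fin m), Fin m))
    (fun q => (⟨q.1.erase q.2, q.2⟩ : Σ _ : Finset (Fin m), Fin m))
    ?_ ?_ ?_ ?_ ?_
  · rintro ⟨S, i⟩ hp
    rw [Finset.mem_sigma] at hp ⊢
    obtain ⟨hS, hi⟩ := hp
    rw [Finset.mem_compl] at hi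
    refine ⟨?_, Finset.mem_insert_self _ _⟩
    rw [Finset.mem_powersetCard_univ, Finset.card_insert_of_notMem hi,
      Finset.mem_powersetCard_univ.mp hS]
  · rintro ⟨U, i⟩ hq
    rw [Finset.mem_sigma] at hq ⊢
    obtain ⟨hU, hi⟩ := hq
    refine ⟨?_, by simp⟩
    rw [Finset.mem_powersetCard_univ, Finset.card_erase_of_mem hi,
      Finset.mem_powersetCard_univ.mp hU]
    omega
  · rintro ⟨S, i⟩ hp
    rw [Finset.mem_sigma] at hp
    exact congrArg (fun s => (⟨s, i⟩ : Σ _ : Finset (Fin m), Fin m))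
      (Finset.erase_insert (Finset.mem_compl.mp hp.2))
  · rintro ⟨U, i⟩ hq
    rw [Finset.mem_sigma] at hq
    exact congrArg (fun s => (⟨s, i⟩ : Σ _ : Finset (Fin m), Fin m))
      (Finset.insert_erase hq.2)
  · rintro ⟨S, i⟩ _; rfl

lemma key {R : Type*} [CommRing R] [Algebra ℝ R] {m : ℕ} (z : Fin m → R)
    (hz : ∀ i, z i ^ 2 = 1) (j : ℕ) :
    (∑ i, z i) * elemSym m z (j + 1) =
      ((m - j : ℕ) : ℝ) • elemSym m z j + ((j + 2 : ℕ) : ℝ) • elemSym m z (j + 2) := by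
  have expand : (∑ i, z i) * elemSym m z (j + 1)
      = (∑ S ∈ powersetCard (j+1) (univ : Finset (Fin m)), ∑ i ∈ S, ∏ k ∈ S.erase i, z k)
        + ∑ S ∈ powersetCard (j+1) (univ : Finset (Fin m)), ∑ i ∈ Sᶜ, ∏ k ∈ insert i S, z k := by
    rw [elemSym, Finset.mul_sum, ← Finset.sum_add_distrib]
    refine Finset.sum_congr rfl fun S hS => ?_
    rw [Finset.sum_mul, ← Finset.sum_add_sum_compl S (fun i => z i * ∏ k ∈ S, z k)]
    congr 1
    · refine Finset.sum_congr rfl fun i hi => ?_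
      rw [← Finset.mul_prod_erase S z hi, ← mul_assoc, ← sq, hz, one_mul]
    · refine Finset.sum_congr rfl fun i hi => ?_
      rw [Finset.prod_insert (Finset.mem_compl.mp hi)]
  rw [expand, partA, partB]
  congr 1
  · rw [elemSym, Finset.smul_sum]
    refine Finset.sum_congr rfl fun T hT => ?_
    rw [Finset.sum_const, Finset.card_compl, Fintype.card_fin,
      Finset.mem_powersetCard_univ.mp hT, Nat.cast_smul_eq_nsmul ℝ]
  · rw [elemSym, Finset.smul_sum]
    refine Finset.sum_congr rfl fun U hU => ?_
    rw [Finset.sum_const, Finset.mem_powersetCard_univ.mp hU, Nat.cast_smul_eq_nsmul ℝ]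
theorem stmt3 (ℓ m : ℕ) (hm : 1 ≤ m) (P : Polynomial ℝ) (hP : P.natDegree ≤ ℓ) :
    ∃ w : ℕ → ℝ, ∀ (R : Type) [CommRing R] [Algebra ℝ R] (z : Fin m → R),
      (∀ i, z i ^ 2 = 1) →
      (Polynomial.aeval (∑ i, z i)) P =
        ∑ j ∈ Finset.range (ℓ + 1), w j •
          ∑ S ∈ Finset.powersetCard j (Finset.univ : Finset (Fin m)), ∏ i ∈ S, z i := by
  classical
  set I : Ideal (MvPolynomial (Fin m) ℝ) :=
    Ideal.span (Set.range fun i : Fin m => MvPolynomial.X i ^ 2 - 1) with hI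
  let z0 : Fin m → (MvPolynomial (Fin m) ℝ ⧸ I) :=
    fun i => Ideal.Quotient.mk I (MvPolynomial.X i)
  have hz0 : ∀ i, z0 i ^ 2 = 1 := by
    intro i
    have h0 : Ideal.Quotient.mk I (MvPolynomial.X i ^ 2 - 1) = 0 := by
      rw [Ideal.Quotient.eq_zero_iff_mem]
      exact Ideal.subset_span ⟨i, rfl⟩
    have h2 : z0 i ^ 2 - 1 = 0 := by simpa [z0] using h0
    rw [sub_eq_zero] at h2; exact h2
  let V : ℕ → Submodule ℝ (MvPolynomial (Fin m) ℝ ⧸ I) :=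
    fun k => Submodule.span ℝ (elemSym m z0 '' Set.Iic k)
  have VM : ∀ {k k' : ℕ}, k ≤ k' → V k ≤ V k' :=
    fun h => Submodule.span_mono (Set.image_mono (Set.Iic_subset_Iic.mpr h))
  have memE : ∀ {j k : ℕ}, j ≤ k → elemSym m z0 j ∈ V k :=
    fun hj => Submodule.subset_span ⟨_, hj, rfl⟩
  have pow_mem : ∀ k, (∑ i, z0 i) ^ k ∈ V k := by
    intro k
    induction k with
    | zero => simpa [elemSym_zero] using memE (le_refl 0)
    | succ k ih =>
      have step : V k ≤ (V (k + 1)).comap (LinearMap.mulLeft ℝ (∑ i, z0 i)) := by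
        rw [Submodule.span_le]
        rintro x ⟨j, hj, rfl⟩
        simp only [Set.mem_Iic] at hj
        simp only [Set.mem_setOf_eq, SetLike.mem_coe, Submodule.mem_comap,
          LinearMap.mulLeft_apply]
        rcases j with _ | j
        · rw [elemSym_zero, mul_one, ← elemSym_one]
          exact memE (by omega)
        · rw [key z0 hz0 j]
          exact Submodule.add_mem _ (Submodule.smul_mem _ _ (memE (by omega)))
            (Submodule.smul_mem _ _ (memE (by omega)))
      rw [pow_succ']
      exact Submodule.mem_comap.mp (step ih)
  have hdeg : P.natDegree < ℓ + 1 := Nat.lt_succ_of_le hP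
  have hp0 : Polynomial.aeval (∑ i, z0 i) P ∈ V ℓ := by
    rw [Polynomial.aeval_eq_sum_range' hdeg]
    exact Submodule.sum_mem _ fun k hk => Submodule.smul_mem _ _
      (VM (Nat.lt_succ_iff.mp (Finset.mem_range.mp hk)) (pow_mem k))
  have hset : elemSym m z0 '' Set.Iic ℓ
      = Set.range fun j : Fin (ℓ + 1) => elemSym m z0 j := by
    ext x
    constructor
    · rintro ⟨j, hj, rfl⟩; exact ⟨⟨j, Nat.lt_succ_of_le hj⟩, rfl⟩
    · rintro ⟨j, rfl⟩; exact ⟨j, Nat.lt_succ_iff.mp j.2, rfl⟩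
  have hp0' : Polynomial.aeval (∑ i, z0 i) P ∈
      Submodule.span ℝ (Set.range fun j : Fin (ℓ + 1) => elemSym m z0 j) := by
    rw [← hset]; exact hp0
  obtain ⟨c, hc⟩ := (Submodule.mem_span_range_iff_exists_fun ℝ).mp hp0'
  refine ⟨fun j => if h : j < ℓ + 1 then c ⟨j, h⟩ else 0, ?_⟩
  intro R _ _ z hz
  have hker : ∀ a ∈ I, MvPolynomial.aeval z a = 0 := by
    intro a ha
    have hsub : I ≤ RingHom.ker (MvPolynomial.aeval z).toRingHom := by
      rw [hI, Ideal.span_le]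
      rintro _ ⟨i, rfl⟩
      simp only [SetLike.mem_coe, RingHom.mem_ker, AlgHom.toRingHom_eq_coe,
        RingHom.coe_coe, map_sub, map_pow, MvPolynomial.aeval_X, map_one]
      rw [hz i, sub_self]
    exact RingHom.mem_ker.mp (hsub ha)
  let φ : (MvPolynomial (Fin m) ℝ ⧸ I) →ₐ[ℝ] R :=
    Ideal.Quotient.liftₐ I (MvPolynomial.aeval z) hker
  have hφz : ∀ i, φ (z0 i) = z i := by
    intro i
    simp [φ, z0, Ideal.Quotient.liftₐ_apply, Ideal.Quotient.lift_mk]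
    exact MvPolynomial.aeval_X z i
  have hφE : ∀ j, φ (elemSym m z0 j) = elemSym m z j := by
    intro j
    simp only [elemSym, map_sum, map_prod, hφz]
  have hmain := congrArg φ hc
  rw [map_sum] at hmain
  simp only [map_smul, hφE] at hmain
  have hL : φ (Polynomial.aeval (∑ i, z0 i) P) = Polynomial.aeval (∑ i, z i) P := by
    rw [← Polynomial.aeval_algHom_apply, map_sum]
    simp only [hφz]
  rw [hL] at hmain
  rw [← hmain, Finset.sum_range]
  refine Finset.sum_congr rfl fun j _ => ?_
  simp [elemSym, j.isLt]
end

section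
/- Let R be a commutative ℚ-algebra, let m ≥ 1, and let z_1, …, z_m ∈ R with z_i² = 1 for all i. For 0 ≤ r ≤ m let e_r := ∑_{S ⊆ {1,…,m}, |S| = r} ∏_{i ∈ S} z_i. Then for every ℓ ≥ 0, (z_1 + … + z_m)^ℓ = ∑_{r=0}^{m} a(m,ℓ,r)·e_r, where a(m,ℓ,r) := 2^{−m} · ∑_{n₁=0}^{r} ∑_{n₂=0}^{m−r} (−1)^{n₁} · C(r,n₁) · C(m−r,n₂) · (m − 2n₁ − 2n₂)^ℓ ∈ ℚ. -/
open Finset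

/-- The combinatorial coefficient `a(m,ℓ,r)`. -/
def aCoeff (m ℓ r : ℕ) : ℚ :=
  (2 ^ m : ℚ)⁻¹ * ∑ n₁ ∈ Finset.range (r + 1), ∑ n₂ ∈ Finset.range (m - r + 1),
    (-1 : ℚ) ^ n₁ * (r.choose n₁) * ((m - r).choose n₂) *
      ((m : ℚ) - 2 * n₁ - 2 * n₂) ^ ℓ

namespace Stmt4Aux

/-- sign function: -1 on `T`, 1 off `T`. -/
def sg {m : ℕ} (T : Finset (Fin m)) (i : Fin m) : ℚ := if i ∈ T then -1 else 1

lemma sg_mul_self {m : ℕ} (T : Finset (Fin m)) (i : Fin m) : sg T i * sg T i = 1 := by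
  unfold sg; split <;> norm_num

variable {m : ℕ} {R : Type*} [CommRing R] [Algebra ℚ R]

/-- The (unnormalized) projector attached to a sign pattern `T`. -/
def wP (z : Fin m → R) (T : Finset (Fin m)) : R := ∏ i, (1 + sg T i • z i)

lemma wP_eq (z : Fin m → R) (T : Finset (Fin m)) :
    wP z T = (∏ i ∈ T, ((-1 : ℚ) • z i + 1)) * ∏ i ∈ univ \ T, ((1 : ℚ) • z i + 1) := by
  rw [wP, ← Finset.prod_sdiff (subset_univ T), mul_comm]
  congr 1
  · exact Finset.prod_congr rfl fun i hi => by simp [sg, hi, add_comm]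
  · refine Finset.prod_congr rfl fun i hi => ?_
    have : i ∉ T := (mem_sdiff.mp hi).2
    simp [sg, this, add_comm]

lemma sum_wP (z : Fin m → R) :
    ∑ T : Finset (Fin m), wP z T = ((2 : ℚ) ^ m) • (1 : R) := by
  have h := Finset.prod_add (fun i => (-1 : ℚ) • z i + 1) (fun i => (1 : ℚ) • z i + 1)
      (univ : Finset (Fin m))
  have h2 : ∀ i : Fin m, ((-1 : ℚ) • z i + 1) + ((1 : ℚ) • z i + 1) = (2 : R) := by
    intro i; simp [neg_smul]; ring
  rw [Finset.prod_congr rfl (fun i _ => h2 i)] at h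
  simp only [Finset.prod_const, card_univ, Fintype.card_fin] at h
  rw [← Finset.powerset_univ, ← Finset.sum_congr rfl (fun T _ => (wP_eq z T))] at *
  rw [← h]
  rw [Algebra.smul_def, map_pow, map_ofNat, mul_one]

lemma z_mul_wP (z : Fin m → R) (hz : ∀ i, z i ^ 2 = 1) (T : Finset (Fin m)) (j : Fin m) :
    z j * wP z T = sg T j • wP z T := by
  rw [wP, ← Finset.mul_prod_erase univ _ (mem_univ j), ← mul_assoc, ← smul_mul_assoc]
  congr 1
  rw [mul_add, mul_one, mul_smul_comm, ← pow_two, hz, smul_add, smul_smul,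
    sg_mul_self, one_smul, add_comm]

lemma sum_sg (T : Finset (Fin m)) :
    ∑ i, sg T i = (m : ℚ) - 2 * T.card := by
  rw [← Finset.sum_sdiff (subset_univ T)]
  have h1 : ∑ i ∈ univ \ T, sg T i = ((m - T.card : ℕ) : ℚ) := by
    rw [Finset.sum_congr rfl (fun i hi => show sg T i = 1 by
      simp [sg, (mem_sdiff.mp hi).2])]
    simp [Finset.card_sdiff_of_subset (subset_univ T)]
  have h2 : ∑ i ∈ T, sg T i = -(T.card : ℚ) := by
    rw [Finset.sum_congr rfl (fun i hi => show sg T i = -1 by simp [sg, hi])]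
    simp
  rw [h1, h2, Nat.cast_sub (by simpa using Finset.card_le_univ T)]
  ring

lemma sumz_pow_mul_wP (z : Fin m → R) (hz : ∀ i, z i ^ 2 = 1) (T : Finset (Fin m)) (ℓ : ℕ) :
    (∑ i, z i) ^ ℓ * wP z T = (((m : ℚ) - 2 * T.card) ^ ℓ) • wP z T := by
  induction ℓ with
  | zero => simp
  | succ n ih =>
    have h1 : (∑ i, z i) * wP z T = ((m : ℚ) - 2 * T.card) • wP z T := by
      rw [Finset.sum_mul, Finset.sum_congr rfl (fun j _ => z_mul_wP z hz T j),
        ← Finset.sum_smul, sum_sg]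
    rw [pow_succ, mul_assoc, h1, mul_smul_comm, ih, smul_smul, ← pow_succ']

lemma prod_qsmul (S : Finset (Fin m)) (c : Fin m → ℚ) (f : Fin m → R) :
    ∏ i ∈ S, c i • f i = (∏ i ∈ S, c i) • ∏ i ∈ S, f i := by
  simp [Algebra.smul_def, Finset.prod_mul_distrib, map_prod]

lemma wP_expand (z : Fin m → R) (T : Finset (Fin m)) :
    wP z T = ∑ S : Finset (Fin m), (∏ i ∈ S, sg T i) • ∏ i ∈ S, z i := by
  have h := Finset.prod_add (fun i => sg T i • z i) (fun _ => (1 : R))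
      (univ : Finset (Fin m))
  simp only [Finset.prod_const_one, mul_one] at h
  rw [wP, Finset.prod_congr rfl (fun i _ => add_comm (1 : R) (sg T i • z i)), h,
    Finset.powerset_univ]
  exact Finset.sum_congr rfl fun S _ => prod_qsmul S (fun i => sg T i) z

lemma prod_sg (S T : Finset (Fin m)) :
    ∏ i ∈ S, sg T i = (-1 : ℚ) ^ (S ∩ T).card := by
  unfold sg
  rw [Finset.prod_ite_mem, Finset.prod_const]

lemma key (m ℓ : ℕ) (S : Finset (Fin m)) :
    aCoeff m ℓ S.card =
      (2 ^ m : ℚ)⁻¹ * ∑ T : Finset (Fin m),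
        (∏ i ∈ S, sg T i) * ((m : ℚ) - 2 * T.card) ^ ℓ := by
  have hbij : ∑ T : Finset (Fin m), (∏ i ∈ S, sg T i) * ((m : ℚ) - 2 * T.card) ^ ℓ
      = ∑ p ∈ S.powerset ×ˢ (univ \ S).powerset,
          (-1 : ℚ) ^ p.1.card * ((m : ℚ) - 2 * (p.1.card + p.2.card)) ^ ℓ := by
    refine Finset.sum_nbij' (fun T => (S ∩ T, T \ S)) (fun p => p.1 ∪ p.2) ?_ ?_ ?_ ?_ ?_
    · intro T _
      simp only [Finset.mem_product, Finset.mem_powerset]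
      exact ⟨Finset.inter_subset_left, fun i hi => by
        simp only [Finset.mem_sdiff, Finset.mem_univ, true_and]
        exact (Finset.mem_sdiff.mp hi).2⟩
    · intro p _; exact Finset.mem_univ _
    · intro T _
      ext i
      simp only [Finset.mem_union, Finset.mem_inter, Finset.mem_sdiff]
      tauto
    · rintro ⟨A, B⟩ hp
      simp only [Finset.mem_product, Finset.mem_powerset] at hp
      obtain ⟨hA, hB⟩ := hp
      have hBS : ∀ i ∈ B, i ∉ S := fun i hi => (Finset.mem_sdiff.mp (hB hi)).2
      simp only [Prod.mk.injEq]
      constructor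
      · ext i
        simp only [Finset.mem_inter, Finset.mem_union]
        constructor
        · rintro ⟨hiS, hiA | hiB⟩
          · exact hiA
          · exact absurd hiS (hBS i hiB)
        · intro hiA; exact ⟨hA hiA, Or.inl hiA⟩
      · ext i
        simp only [Finset.mem_sdiff, Finset.mem_union]
        constructor
        · rintro ⟨hiA | hiB, hiS⟩
          · exact absurd (hA hiA) hiS
          · exact hiB
        · intro hiB; exact ⟨Or.inr hiB, hBS i hiB⟩
    · intro T _
      rw [prod_sg]
      congr 2
      have h := Finset.card_inter_add_card_sdiff T S
      simp only []
      rw [Finset.inter_comm S T]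
      push_cast [← h]
      ring
  rw [hbij, Finset.sum_product, aCoeff]
  congr 1
  rw [Finset.sum_powerset]
  refine Finset.sum_congr rfl fun n₁ hn₁ => ?_
  have h1 : ∀ A ∈ Finset.powersetCard n₁ S,
      (∑ B ∈ (univ \ S).powerset, (-1 : ℚ) ^ A.card * ((m : ℚ) - 2 * (A.card + B.card)) ^ ℓ)
      = ∑ B ∈ (univ \ S).powerset, (-1 : ℚ) ^ n₁ * ((m : ℚ) - 2 * (n₁ + B.card)) ^ ℓ := by
    intro A hA
    rw [(Finset.mem_powersetCard.mp hA).2]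
  rw [Finset.sum_congr rfl h1, Finset.sum_const, Finset.card_powersetCard]
  have hcards : (univ \ S).card = m - S.card := by
    rw [Finset.card_sdiff_of_subset (Finset.subset_univ S), Finset.card_univ, Fintype.card_fin]
  have h2 : ∀ n₂ : ℕ, (∑ B ∈ Finset.powersetCard n₂ (univ \ S),
      (-1 : ℚ) ^ n₁ * ((m : ℚ) - 2 * (n₁ + B.card)) ^ ℓ)
      = ((m - S.card).choose n₂ : ℚ) * ((-1 : ℚ) ^ n₁ * ((m : ℚ) - 2 * (n₁ + n₂)) ^ ℓ) := by
    intro n₂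
    rw [Finset.sum_congr rfl (fun B hB => by
      rw [(Finset.mem_powersetCard.mp hB).2]), Finset.sum_const,
      Finset.card_powersetCard, hcards, nsmul_eq_mul]
  rw [Finset.sum_powerset, hcards, Finset.sum_congr rfl (fun n₂ _ => h2 n₂), nsmul_eq_mul,
    Finset.mul_sum]
  refine Finset.sum_congr rfl fun n₂ _ => ?_
  ring

end Stmt4Aux

open Stmt4Aux in
theorem stmt4 (m : ℕ) (hm : 1 ≤ m) (ℓ : ℕ) (R : Type*) [CommRing R] [Algebra ℚ R]
    (z : Fin m → R) (hz : ∀ i, z i ^ 2 = 1) :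
    (∑ i, z i) ^ ℓ =
      ∑ r ∈ Finset.range (m + 1), aCoeff m ℓ r •
        ∑ S ∈ Finset.powersetCard r (Finset.univ : Finset (Fin m)), ∏ i ∈ S, z i := by
  classical
  have h2m : ((2 : ℚ) ^ m) ≠ 0 := by positivity
  have hone : (1 : R) = ((2 : ℚ) ^ m)⁻¹ • ∑ T : Finset (Fin m), wP z T := by
    rw [sum_wP, smul_smul, inv_mul_cancel₀ h2m, one_smul]
  have hL : (∑ i, z i) ^ ℓ = ((2 : ℚ) ^ m)⁻¹ • ∑ T : Finset (Fin m),
      (((m : ℚ) - 2 * T.card) ^ ℓ) • wP z T := by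
    conv_lhs => rw [← mul_one ((∑ i, z i) ^ ℓ), hone]
    rw [mul_smul_comm, Finset.mul_sum]
    congr 1
    exact Finset.sum_congr rfl fun T _ => sumz_pow_mul_wP z hz T ℓ
  have hR : (∑ r ∈ Finset.range (m + 1), aCoeff m ℓ r •
        ∑ S ∈ Finset.powersetCard r (Finset.univ : Finset (Fin m)), ∏ i ∈ S, z i)
      = ∑ S : Finset (Fin m), aCoeff m ℓ S.card • ∏ i ∈ S, z i := by
    rw [← Finset.powerset_univ, Finset.sum_powerset, Finset.card_univ, Fintype.card_fin]
    refine Finset.sum_congr rfl fun r hr => ?_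
    rw [Finset.smul_sum]
    exact Finset.sum_congr rfl fun S hS => by rw [(Finset.mem_powersetCard.mp hS).2]
  have hkey : ∀ S : Finset (Fin m), aCoeff m ℓ S.card • (∏ i ∈ S, z i)
      = ((2 : ℚ) ^ m)⁻¹ • ∑ T : Finset (Fin m),
          (((m : ℚ) - 2 * T.card) ^ ℓ) • ((∏ i ∈ S, sg T i) • ∏ i ∈ S, z i) := by
    intro S
    rw [key m ℓ S, mul_smul, Finset.sum_smul]
    congr 1
    refine Finset.sum_congr rfl fun T _ => ?_
    rw [mul_comm, mul_smul]
  rw [hL, hR, Finset.sum_congr rfl fun S _ => hkey S, ← Finset.smul_sum, Finset.sum_comm]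
  congr 1
  refine Finset.sum_congr rfl fun T _ => ?_
  rw [← Finset.smul_sum, ← wP_expand]
end

section
/- Let 0 ≤ r ≤ m and ℓ ≥ 0. The number of functions f : {1,…,ℓ} → {1,…,m} such that the fiber f^{−1}(i) has odd cardinality for every i with 1 ≤ i ≤ r and even cardinality for every i with r < i ≤ m equals 2^{−m} · ∑_{n₁=0}^{r} ∑_{n₂=0}^{m−r} (−1)^{n₁} · C(r,n₁) · C(m−r,n₂) · (m − 2n₁ − 2n₂)^ℓ (an equality of rational numbers). -/
open Finset

namespace Stmt5Aux

variable {m ℓ r : ℕ}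

lemma cardA (hr : r ≤ m) :
    (univ.filter (fun i : Fin m => (i : ℕ) < r)).card = r := by
  rw [← Finset.card_image_of_injective _ Fin.val_injective]
  have : Finset.image Fin.val (univ.filter (fun i : Fin m => (i : ℕ) < r))
      = Finset.range r := by
    ext n
    simp only [mem_image, mem_filter, mem_univ, true_and, Finset.mem_range]
    constructor
    · rintro ⟨i, hi, rfl⟩; exact hi
    · intro hn; exact ⟨⟨n, lt_of_lt_of_le hn hr⟩, hn, rfl⟩
  rw [this, Finset.card_range]

lemma cardB (hr : r ≤ m) :
    (univ.filter (fun i : Fin m => ¬ (i : ℕ) < r)).card = m - r := by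
  have h := Finset.card_filter_add_card_filter_not
    (s := (univ : Finset (Fin m))) (p := fun i : Fin m => (i : ℕ) < r)
  rw [Finset.card_univ, Fintype.card_fin, cardA hr] at h
  omega

lemma prodKey (f : Fin ℓ → Fin m) (S : Finset (Fin m)) :
    (∏ i ∈ S, (-1 : ℚ) ^ (univ.filter (fun x => f x = i)).card)
      = ∏ x : Fin ℓ, (if f x ∈ S then (-1 : ℚ) else 1) := by
  have h1 : ∀ i : Fin m, (-1 : ℚ) ^ (univ.filter (fun x => f x = i)).card
      = ∏ x : Fin ℓ, (if f x = i then (-1 : ℚ) else 1) := by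
    intro i
    rw [← Finset.prod_const, Finset.prod_filter]
  simp_rw [h1]
  rw [Finset.prod_comm]
  exact Finset.prod_congr rfl fun x _ => Finset.prod_ite_eq S (f x) (fun _ => (-1 : ℚ))

lemma sumKey (g : Fin m → ℚ) :
    (∑ f : Fin ℓ → Fin m, ∏ x : Fin ℓ, g (f x)) = (∑ j : Fin m, g j) ^ ℓ := by
  calc ∑ f : Fin ℓ → Fin m, ∏ x : Fin ℓ, g (f x)
      = ∑ f ∈ Fintype.piFinset (fun _ : Fin ℓ => (univ : Finset (Fin m))),
          ∏ x : Fin ℓ, g (f x) := by rw [Fintype.piFinset_univ]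
    _ = ∏ _x : Fin ℓ, ∑ j : Fin m, g j := (Finset.prod_univ_sum _ _).symm
    _ = (∑ j : Fin m, g j) ^ ℓ := by
        rw [Finset.prod_const, Finset.card_univ, Fintype.card_fin]

lemma powerSum (S : Finset (Fin m)) :
    (∑ j : Fin m, (if j ∈ S then (-1 : ℚ) else 1)) = (m : ℚ) - 2 * S.card := by
  have h : ∀ j : Fin m, (if j ∈ S then (-1:ℚ) else 1)
      = 1 - 2 * (if j ∈ S then 1 else 0) := by
    intro j; split <;> ring
  simp_rw [h]
  rw [Finset.sum_sub_distrib, Finset.sum_const, ← Finset.mul_sum, Finset.sum_boole]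
  have : Finset.filter (fun j : Fin m => j ∈ S) univ = S := by
    rw [Finset.filter_mem_eq_inter, Finset.univ_inter]
  rw [this, Finset.card_univ, Fintype.card_fin, nsmul_eq_mul, mul_one]

lemma indicator (hr : r ≤ m) (f : Fin ℓ → Fin m) :
    (if (∀ i : Fin m, if (i : ℕ) < r
          then Odd (univ.filter (fun x => f x = i)).card
          else Even (univ.filter (fun x => f x = i)).card) then (2:ℚ)^m else 0)
      = (∏ i ∈ univ.filter (fun i : Fin m => (i:ℕ) < r),
            (1 - (-1:ℚ)^((univ.filter (fun x => f x = i)).card)))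
        * ∏ i ∈ univ.filter (fun i : Fin m => ¬ (i:ℕ) < r),
            (1 + (-1:ℚ)^((univ.filter (fun x => f x = i)).card)) := by
  classical
  split
  case isTrue h =>
    have hA : ∏ i ∈ univ.filter (fun i : Fin m => (i:ℕ) < r),
        (1 - (-1:ℚ)^((univ.filter (fun x => f x = i)).card)) = 2 ^ r := by
      rw [Finset.prod_congr rfl (fun i hi => ?_), Finset.prod_const, cardA hr]
      simp only [mem_filter, mem_univ, true_and] at hi
      have h2 := h i
      rw [if_pos hi] at h2
      rw [h2.neg_one_pow]; ring
    have hB : ∏ i ∈ univ.filter (fun i : Fin m => ¬ (i:ℕ) < r),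
        (1 + (-1:ℚ)^((univ.filter (fun x => f x = i)).card)) = 2 ^ (m - r) := by
      rw [Finset.prod_congr rfl (fun i hi => ?_), Finset.prod_const, cardB hr]
      simp only [mem_filter, mem_univ, true_and] at hi
      have h2 := h i
      rw [if_neg hi] at h2
      rw [h2.neg_one_pow]; ring
    rw [hA, hB, ← pow_add, Nat.add_sub_cancel' hr]
  case isFalse h =>
    push_neg at h
    obtain ⟨i, hi⟩ := h
    by_cases hlt : (i : ℕ) < r
    · rw [if_pos hlt] at hi
      rw [Nat.not_odd_iff_even] at hi
      have : ∏ i ∈ univ.filter (fun i : Fin m => (i:ℕ) < r),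
          (1 - (-1:ℚ)^((univ.filter (fun x => f x = i)).card)) = 0 := by
        refine Finset.prod_eq_zero (i := i) (by simp [hlt]) ?_
        rw [hi.neg_one_pow]; ring
      rw [this, zero_mul]
    · rw [if_neg hlt] at hi
      rw [Nat.not_even_iff_odd] at hi
      have : ∏ i ∈ univ.filter (fun i : Fin m => ¬ (i:ℕ) < r),
          (1 + (-1:ℚ)^((univ.filter (fun x => f x = i)).card)) = 0 := by
        refine Finset.prod_eq_zero (i := i) ?_ ?_
        · simp only [mem_filter, mem_univ, true_and]; exact hlt
        · rw [hi.neg_one_pow]; ring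
      rw [this, mul_zero]

lemma groupPowerset {α : Type*} [DecidableEq α] (s : Finset α) (F : ℕ → ℚ) :
    ∑ T ∈ s.powerset, F T.card
      = ∑ n ∈ Finset.range (s.card + 1), (s.card.choose n : ℚ) * F n := by
  rw [Finset.sum_powerset]
  refine Finset.sum_congr rfl fun n _ => ?_
  calc ∑ T ∈ Finset.powersetCard n s, F T.card
      = ∑ T ∈ Finset.powersetCard n s, F n :=
        Finset.sum_congr rfl fun T hT => by rw [(Finset.mem_powersetCard.mp hT).2]
    _ = (s.card.choose n : ℚ) * F n := by
        rw [Finset.sum_const, Finset.card_powersetCard, nsmul_eq_mul]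

end Stmt5Aux

open Stmt5Aux in
theorem stmt5 (m ℓ r : ℕ) (hr : r ≤ m) :
    (Nat.card {f : Fin ℓ → Fin m //
        ∀ i : Fin m, if (i : ℕ) < r
          then Odd (Finset.univ.filter (fun x => f x = i)).card
          else Even (Finset.univ.filter (fun x => f x = i)).card} : ℚ)
      = (2 ^ m : ℚ)⁻¹ * ∑ n₁ ∈ Finset.range (r + 1), ∑ n₂ ∈ Finset.range (m - r + 1),
          (-1 : ℚ) ^ n₁ * (r.choose n₁) * ((m - r).choose n₂) *
            ((m : ℚ) - 2 * n₁ - 2 * n₂) ^ ℓ := by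
  classical
  set A : Finset (Fin m) := univ.filter (fun i : Fin m => (i:ℕ) < r) with hAdef
  set B : Finset (Fin m) := univ.filter (fun i : Fin m => ¬ (i:ℕ) < r) with hBdef
  have hABdisj : Disjoint A B := by
    rw [hAdef, hBdef]
    exact Finset.disjoint_filter_filter_not _ _ _
  rw [Nat.card_eq_fintype_card, Fintype.card_subtype]
  rw [inv_mul_eq_div, eq_div_iff (by positivity)]
  rw [Finset.card_filter]
  push_cast
  rw [Finset.sum_mul]
  have step1 : ∀ f : Fin ℓ → Fin m,
      ((if (∀ i : Fin m, if (i : ℕ) < r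
          then Odd (univ.filter (fun x => f x = i)).card
          else Even (univ.filter (fun x => f x = i)).card) then (1:ℚ) else 0) * 2 ^ m)
      = ∑ T ∈ A.powerset, ∑ U ∈ B.powerset,
          (-1:ℚ)^T.card * ∏ x : Fin ℓ, (if f x ∈ T ∪ U then (-1:ℚ) else 1) := by
    intro f
    rw [ite_mul, one_mul, zero_mul, indicator hr f]
    have expA : ∏ i ∈ A, (1 - (-1:ℚ)^((univ.filter (fun x => f x = i)).card))
        = ∑ T ∈ A.powerset, (-1:ℚ)^T.card
            * ∏ i ∈ T, (-1:ℚ)^((univ.filter (fun x => f x = i)).card) := by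
      have : ∀ i ∈ A, (1 - (-1:ℚ)^((univ.filter (fun x => f x = i)).card))
          = (-((-1:ℚ)^((univ.filter (fun x => f x = i)).card))) + 1 := by
        intro i _; ring
      rw [Finset.prod_congr rfl this, Finset.prod_add]
      refine Finset.sum_congr rfl fun T _ => ?_
      rw [Finset.prod_const_one, mul_one, ← Finset.prod_const,
        ← Finset.prod_mul_distrib]
      exact Finset.prod_congr rfl fun i _ => (neg_one_mul _).symm
    have expB : ∏ i ∈ B, (1 + (-1:ℚ)^((univ.filter (fun x => f x = i)).card))
        = ∑ U ∈ B.powerset,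
            ∏ i ∈ U, (-1:ℚ)^((univ.filter (fun x => f x = i)).card) := by
      have : ∀ i ∈ B, (1 + (-1:ℚ)^((univ.filter (fun x => f x = i)).card))
          = ((-1:ℚ)^((univ.filter (fun x => f x = i)).card)) + 1 := by
        intro i _; ring
      rw [Finset.prod_congr rfl this, Finset.prod_add]
      refine Finset.sum_congr rfl fun U _ => ?_
      rw [Finset.prod_const_one, mul_one]
    rw [expA, expB, Finset.sum_mul_sum]
    refine Finset.sum_congr rfl fun T hT => Finset.sum_congr rfl fun U hU => ?_
    have hdisj : Disjoint T U :=
      hABdisj.mono (Finset.mem_powerset.mp hT) (Finset.mem_powerset.mp hU)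
    rw [mul_assoc, ← Finset.prod_union hdisj, prodKey f (T ∪ U)]
  rw [Finset.sum_congr rfl (fun f _ => step1 f), Finset.sum_comm]
  have step2 : ∀ T ∈ A.powerset, ∀ U ∈ B.powerset,
      (∑ f : Fin ℓ → Fin m,
          (-1:ℚ)^T.card * ∏ x : Fin ℓ, (if f x ∈ T ∪ U then (-1:ℚ) else 1))
      = (-1:ℚ)^T.card * ((m:ℚ) - 2 * (T.card + U.card)) ^ ℓ := by
    intro T hT U hU
    rw [← Finset.mul_sum, sumKey (fun j => if j ∈ T ∪ U then (-1:ℚ) else 1),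
      powerSum (T ∪ U)]
    have hdisj : Disjoint T U :=
      hABdisj.mono (Finset.mem_powerset.mp hT) (Finset.mem_powerset.mp hU)
    rw [Finset.card_union_of_disjoint hdisj]
    push_cast
    ring
  calc ∑ T ∈ A.powerset, ∑ f : Fin ℓ → Fin m, ∑ U ∈ B.powerset,
          (-1:ℚ)^T.card * ∏ x : Fin ℓ, (if f x ∈ T ∪ U then (-1:ℚ) else 1)
      = ∑ T ∈ A.powerset, ∑ U ∈ B.powerset,
          (-1:ℚ)^T.card * ((m:ℚ) - 2 * (T.card + U.card)) ^ ℓ := by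
        refine Finset.sum_congr rfl fun T hT => ?_
        rw [Finset.sum_comm]
        exact Finset.sum_congr rfl fun U hU => step2 T hT U hU
    _ = ∑ n₁ ∈ Finset.range (r + 1), ∑ n₂ ∈ Finset.range (m - r + 1),
          (-1 : ℚ) ^ n₁ * (r.choose n₁) * ((m - r).choose n₂) *
            ((m : ℚ) - 2 * n₁ - 2 * n₂) ^ ℓ := by
        rw [groupPowerset A (fun n₁ => ∑ U ∈ B.powerset,
          (-1:ℚ)^n₁ * ((m:ℚ) - 2 * (n₁ + U.card)) ^ ℓ), cardA hr]
        refine Finset.sum_congr rfl fun n₁ _ => ?_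
        rw [groupPowerset B (fun n₂ => (-1:ℚ)^n₁ * ((m:ℚ) - 2 * (n₁ + n₂)) ^ ℓ),
          cardB hr, Finset.mul_sum]
        refine Finset.sum_congr rfl fun n₂ _ => ?_
        ring
end

section
/- Fix m ≥ 1 and a symmetric m×m matrix A with entries in {0,1} and zero diagonal. Let R be a (not necessarily commutative) ring containing elements z_1, …, z_m with z_i² = 1 for all i and z_i z_j = (−1)^{A_{ij}} z_j z_i for all i ≠ j. Then for every k ≥ 0, (z_1 + … + z_m)^k = ∑_{y ∈ {0,1}^m} β_G^{(k)}(y) · z_1^{y_1} z_2^{y_2} ⋯ z_m^{y_m}, where the product is taken in increasing index order and integer coefficients act by repeated addition. Moreover β_G^{(k)}(y) = 0 whenever the Hamming weight of y exceeds k. -/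
/-- The sign of a sequence `τ` with respect to the anticommutation graph given by `A`:
`(-1)^N` where `N` is the number of pairs `s < t` with `τ s > τ t` that are edges. -/
def sgnG {m k : ℕ} (A : Fin m → Fin m → Bool) (τ : Fin k → Fin m) : ℤ :=
  (-1 : ℤ) ^ (Finset.univ.filter (fun p : Fin k × Fin k =>
    p.1 < p.2 ∧ τ p.2 < τ p.1 ∧ A (τ p.1) (τ p.2) = true)).card

/-- `Σ_G(μ)`: the sum of `sgnG` over all sequences of length `∑ μ i` in which each
value `i` appears exactly `μ i` times. -/
def SigmaG (m : ℕ) (A : Fin m → Fin m → Bool) (μ : Fin m → ℕ) : ℤ :=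
  ∑ τ ∈ Finset.univ.filter (fun τ : Fin (∑ i, μ i) → Fin m =>
      ∀ i : Fin m, (Finset.univ.filter (fun s => τ s = i)).card = μ i),
    sgnG A τ

/-- `β_G^{(k)}(y)`: the sum of `Σ_G(μ)` over all `μ` with `∑ μ = k` and `μ i ≡ y i (mod 2)`. -/
def betaG (m : ℕ) (A : Fin m → Fin m → Bool) (k : ℕ) (y : Fin m → Bool) : ℤ :=
  ∑ μ ∈ (Finset.Nat.antidiagonalTuple m k).filter
      (fun μ => ∀ i, μ i % 2 = if y i then 1 else 0),
    SigmaG m A μ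

open Finset

/-- multiplicity of `i` in `τ` -/
def cntF {m k : ℕ} (τ : Fin k → Fin m) (i : Fin m) : ℕ :=
  (Finset.univ.filter (fun s => τ s = i)).card

/-- parity vector of `τ` -/
def parF {m k : ℕ} (τ : Fin k → Fin m) (i : Fin m) : Bool :=
  decide (cntF τ i % 2 = 1)

lemma neg_one_pow_congr_mod {a b : ℕ} (h : a % 2 = b % 2) : (-1:ℤ)^a = (-1)^b := by
  conv_lhs => rw [← Nat.div_add_mod a 2]
  conv_rhs => rw [← Nat.div_add_mod b 2]
  rw [pow_add, pow_add, pow_mul, pow_mul, neg_one_sq, one_pow, one_pow, h]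

lemma countP_finRange (m : ℕ) (p : Fin m → Bool) :
    (List.finRange m).countP p = (Finset.univ.filter (fun i => p i = true)).card := by
  have h1 : (Finset.univ.filter (fun i => p i = true)) = ((List.finRange m).filter p).toFinset := by
    ext i; simp
  rw [h1, List.toFinset_card_of_nodup (List.Nodup.filter _ (List.nodup_finRange m)),
    List.countP_eq_length_filter]

lemma cnt_cons {m k : ℕ} (j : Fin m) (τ : Fin k → Fin m) (i : Fin m) :
    cntF (Fin.cons j τ) i = (if j = i then 1 else 0) + cntF τ i := by
  unfold cntF
  rw [Finset.card_filter, Finset.card_filter, Fin.sum_univ_succ]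
  simp

lemma par_cons {m k : ℕ} (j : Fin m) (τ : Fin k → Fin m) :
    parF (Fin.cons j τ) = Function.update (parF τ) j (!(parF τ j)) := by
  funext i
  rw [Function.update_apply]
  by_cases h : i = j
  · subst h
    rcases Nat.mod_two_eq_zero_or_one (cntF τ i) with h2 | h2 <;>
      simp [parF, cnt_cons, Nat.add_mod, h2]
  · simp [parF, cnt_cons, Ne.symm h, h]

lemma sgn_cons {m k : ℕ} (A : Fin m → Fin m → Bool) (j : Fin m) (τ : Fin k → Fin m) :
    sgnG A (Fin.cons j τ) =
      (-1:ℤ) ^ (Finset.univ.filter (fun t => τ t < j ∧ A j (τ t) = true)).card * sgnG A τ := by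
  unfold sgnG
  rw [← pow_add]
  congr 1
  rw [Finset.card_filter, Finset.card_filter, Finset.card_filter, Fintype.sum_prod_type,
    Fintype.sum_prod_type, Fin.sum_univ_succ]
  simp only [Fin.sum_univ_succ, Fin.cons_zero, Fin.cons_succ, Fin.not_lt_zero,
    Fin.succ_pos, Fin.succ_lt_succ_iff, false_and, if_false, lt_self_iff_false, true_and]
  simp
  
lemma sum_cnt {m k : ℕ} (τ : Fin k → Fin m) : ∑ i, cntF τ i = k := by
  have := Finset.card_eq_sum_card_fiberwise (f := τ) (s := Finset.univ) (t := Finset.univ)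
    (fun x _ => Finset.mem_univ _)
  simpa [cntF] using this.symm

lemma card_parity {m k : ℕ} (A : Fin m → Fin m → Bool) (j : Fin m) (τ : Fin k → Fin m) :
    (-1:ℤ) ^ (Finset.univ.filter (fun t => τ t < j ∧ A j (τ t) = true)).card =
    (-1:ℤ) ^ (Finset.univ.filter (fun i => i < j ∧ parF τ i = true ∧ A j i = true)).card := by
  apply neg_one_pow_congr_mod
  have h1 : (Finset.univ.filter (fun t => τ t < j ∧ A j (τ t) = true)).card
      = ∑ i ∈ Finset.univ.filter (fun i => i < j ∧ A j i = true), cntF τ i := by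
    rw [Finset.card_eq_sum_card_fiberwise (f := fun t => τ t)
      (t := Finset.univ.filter (fun i => i < j ∧ A j i = true))
      (by intro x hx; simp only [Finset.mem_coe, mem_filter, mem_univ, true_and] at hx ⊢; exact hx)]
    refine Finset.sum_congr rfl fun i hi => ?_
    simp only [mem_filter, mem_univ, true_and] at hi
    unfold cntF
    congr 1
    ext t
    simp only [mem_filter, mem_univ, true_and]
    constructor
    · rintro ⟨_, h⟩; exact h
    · intro h; exact ⟨⟨h ▸ hi.1, h ▸ hi.2⟩, h⟩
  have h2 : (Finset.univ.filter (fun i => i < j ∧ parF τ i = true ∧ A j i = true)).card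
      = ((Finset.univ.filter (fun i => i < j ∧ A j i = true)).filter (fun i => parF τ i = true)).card := by
    congr 1; ext i; simp; tauto
  rw [h1, h2, Finset.sum_nat_mod, Finset.card_filter]
  have h3 : ∀ i, cntF τ i % 2 = if parF τ i = true then 1 else 0 := by
    intro i
    rcases Nat.mod_two_eq_zero_or_one (cntF τ i) with h | h <;> simp [parF, h]
  rw [Finset.sum_congr rfl (fun i _ => h3 i)]

section ring
variable {m : ℕ} {R : Type*} [Ring R] (A : Fin m → Fin m → Bool) (z : Fin m → R)

lemma move_lemma (hz2 : ∀ i, z i ^ 2 = 1)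
    (hzz : ∀ i j, i ≠ j → z i * z j = if A i j then -(z j * z i) else z j * z i)
    (j : Fin m) (y : Fin m → Bool) :
    ∀ L : List (Fin m), L.Pairwise (· < ·) → j ∈ L →
    z j * (L.map (fun i => if y i then z i else 1)).prod =
    ((-1:ℤ)^(L.countP (fun i => decide (i < j) && y i && A j i))) •
      (L.map (fun i => if Function.update y j (!y j) i then z i else 1)).prod := by
  intro L
  induction L with
  | nil => simp
  | cons a L ih =>
    intro hs hj
    rw [List.pairwise_cons] at hs
    have hmapeq : ∀ (M : List (Fin m)), (∀ b ∈ M, b ≠ j) →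
        (M.map (fun i => if Function.update y j (!y j) i then z i else 1)).prod
        = (M.map (fun i => if y i then z i else 1)).prod := by
      intro M hM
      congr 1
      apply List.map_congr_left
      intro b hb
      rw [Function.update_of_ne (hM b hb)]
    by_cases haj : a = j
    · subst haj
      have hcount : List.countP (fun i => decide (i < a) && y i && A a i) (a :: L) = 0 := by
        rw [List.countP_eq_zero]
        intro b hb
        rcases List.mem_cons.mp hb with rfl | hb
        · simp
        · have h1 : a < b := hs.1 b hb
          simp [Fin.lt_asymm h1]
      rw [hcount, pow_zero, one_zsmul, List.map_cons, List.map_cons, List.prod_cons,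
        List.prod_cons, hmapeq L (fun b hb => (hs.1 b hb).ne'), Function.update_self]
      by_cases hy : y a
      · rw [if_pos hy, hy, Bool.not_true, if_neg (by simp), ← mul_assoc, ← sq, hz2, one_mul]
      · rw [if_neg hy, one_mul, eq_comm]
        have hne : (!y a) = true := by simp [hy]
        rw [hne, if_pos rfl]
    · -- a ≠ j, so j ∈ L and a < j
      have hjL : j ∈ L := by
        rcases List.mem_cons.mp hj with h | h
        · exact absurd h.symm haj
        · exact h
      have haltj : a < j := hs.1 j hjL
      have key := ih hs.2 hjL
      have swap : z j * (if y a then z a else 1) =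
          ((if y a && A j a then (-1:ℤ) else 1)) • ((if y a then z a else 1) * z j) := by
        by_cases hy : y a
        · rw [if_pos hy]
          have hja : j ≠ a := haltj.ne'
          rw [hzz j a hja]
          by_cases hA : A j a
          · simp [hy, hA]
          · simp [hy, hA]
        · simp [hy]
      rw [List.map_cons, List.prod_cons, ← mul_assoc, swap, smul_mul_assoc, mul_assoc, key,
        mul_smul_comm, smul_smul, List.countP_cons, List.map_cons, List.prod_cons,
        Function.update_of_ne haj]
      congr 1
      have hd : (decide (a < j) && y a && A j a) = (y a && A j a) := by simp [haltj]
      rw [hd, pow_add]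
      by_cases hy : y a <;> by_cases hA : A j a <;> simp [hy, hA] <;> ring

lemma zQ_mul (hz2 : ∀ i, z i ^ 2 = 1)
    (hzz : ∀ i j, i ≠ j → z i * z j = if A i j then -(z j * z i) else z j * z i)
    (j : Fin m) (y : Fin m → Bool) :
    z j * ((List.finRange m).map (fun i => if y i then z i else 1)).prod =
    ((-1:ℤ)^((Finset.univ.filter (fun i => i < j ∧ y i = true ∧ A j i = true)).card)) •
      ((List.finRange m).map (fun i => if Function.update y j (!y j) i then z i else 1)).prod := by
  rw [move_lemma A z hz2 hzz j y (List.finRange m) (List.pairwise_lt_finRange m)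
    (List.mem_finRange j), countP_finRange]
  congr 3
  ext i
  simp [and_assoc]


lemma P_eq (hz2 : ∀ i, z i ^ 2 = 1)
    (hzz : ∀ i j, i ≠ j → z i * z j = if A i j then -(z j * z i) else z j * z i) :
    ∀ {k : ℕ} (τ : Fin k → Fin m),
    (List.ofFn (fun s => z (τ s))).prod =
      sgnG A τ • ((List.finRange m).map (fun i => if parF τ i then z i else 1)).prod := by
  intro k
  induction k with
  | zero =>
    intro τ
    have h1 : sgnG A τ = 1 := by simp [sgnG]
    have h2 : ∀ i, parF τ i = false := by intro i; simp [parF, cntF]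
    rw [List.ofFn_zero, List.prod_nil, h1, one_zsmul, eq_comm, List.prod_eq_one]
    intro x hx
    rcases List.mem_map.mp hx with ⟨i, _, rfl⟩
    rw [h2 i, if_neg (by simp)]
  | succ k ih =>
    intro τ
    rw [← Fin.cons_self_tail τ]
    set j := τ 0
    set σ := Fin.tail τ
    have h1 : (List.ofFn (fun s => z ((Fin.cons j σ : Fin (k+1) → Fin m) s))).prod
        = z j * (List.ofFn (fun s => z (σ s))).prod := by
      rw [List.ofFn_succ]
      simp
    rw [h1, ih σ, mul_smul_comm, zQ_mul A z hz2 hzz j (parF σ), smul_smul, sgn_cons,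
      card_parity, par_cons]
    rw [mul_comm]

lemma sumPowAux (hz2 : ∀ i, z i ^ 2 = 1) :
    ∀ k : ℕ, (∑ i, z i) ^ k = ∑ τ : Fin k → Fin m, (List.ofFn (fun s => z (τ s))).prod := by
  intro k
  induction k with
  | zero =>
    rw [pow_zero]
    rw [Finset.sum_eq_single (fun s : Fin 0 => s.elim0)]
    · simp
    · intro b _ hb
      exact absurd (funext fun s => s.elim0) hb
    · intro h
      exact absurd (Finset.mem_univ _) h
  | succ k ih =>
    rw [pow_succ', ih]
    rw [← Equiv.sum_comp (Fin.consEquiv (fun _ => Fin m))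
      (fun τ : Fin (k+1) → Fin m => (List.ofFn (fun s => z (τ s))).prod)]
    rw [Fintype.sum_prod_type, Finset.sum_mul_sum]
    refine Finset.sum_congr rfl fun j _ => ?_
    refine Finset.sum_congr rfl fun σ _ => ?_
    rw [List.ofFn_succ]
    simp [Fin.consEquiv]

end ring

lemma SigmaG_eq {m : ℕ} (A : Fin m → Fin m → Bool) {k : ℕ} (μ : Fin m → ℕ)
    (h : ∑ i, μ i = k) :
    SigmaG m A μ = ∑ τ ∈ Finset.univ.filter
      (fun τ : Fin k → Fin m => ∀ i, cntF τ i = μ i), sgnG A τ := by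
  subst h
  rfl

lemma beta_eq {m : ℕ} (A : Fin m → Fin m → Bool) (k : ℕ) (y : Fin m → Bool) :
    betaG m A k y = ∑ τ ∈ Finset.univ.filter
      (fun τ : Fin k → Fin m => parF τ = y), sgnG A τ := by
  unfold betaG
  have hmaps : ∀ τ ∈ Finset.univ.filter (fun τ : Fin k → Fin m => parF τ = y),
      cntF τ ∈ (Finset.Nat.antidiagonalTuple m k).filter
        (fun μ => ∀ i, μ i % 2 = if y i then 1 else 0) := by
    intro τ hτ
    simp only [mem_filter, mem_univ, true_and] at hτ ⊢
    refine ⟨Finset.Nat.mem_antidiagonalTuple.mpr (sum_cnt τ), fun i => ?_⟩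
    rw [← hτ]
    rcases Nat.mod_two_eq_zero_or_one (cntF τ i) with h | h <;> simp [parF, h]
  rw [← Finset.sum_fiberwise_of_maps_to hmaps (fun τ => sgnG A τ)]
  refine Finset.sum_congr rfl fun μ hμ => ?_
  simp only [mem_filter, Finset.Nat.mem_antidiagonalTuple] at hμ
  rw [SigmaG_eq A μ hμ.1]
  congr 1
  ext τ
  simp only [mem_filter, mem_univ, true_and, funext_iff]
  constructor
  · intro hc
    refine ⟨?_, fun i => hc i⟩
    intro i
    have h2 := hμ.2 i
    rw [← hc i] at h2
    rcases Nat.mod_two_eq_zero_or_one (cntF τ i) with h | h <;>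
      · rw [h] at h2
        cases hyi : y i <;> simp [hyi] at h2 <;> simp [parF, h, hyi]
  · rintro ⟨hp, hc⟩
    exact hc

theorem stmt6 (m : ℕ) (hm : 1 ≤ m) (A : Fin m → Fin m → Bool)
    (hsymm : ∀ i j, A i j = A j i) (hdiag : ∀ i, A i i = false)
    (R : Type*) [Ring R] (z : Fin m → R) (hz2 : ∀ i, z i ^ 2 = 1)
    (hzz : ∀ i j, i ≠ j → z i * z j = if A i j then -(z j * z i) else z j * z i)
    (k : ℕ) :
    ((∑ i, z i) ^ k = ∑ y : Fin m → Bool, betaG m A k y •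
        ((List.finRange m).map (fun i => if y i then z i else 1)).prod) ∧
    ∀ y : Fin m → Bool,
      k < (Finset.univ.filter (fun i => y i = true)).card → betaG m A k y = 0 := by
  constructor
  · rw [sumPowAux z hz2 k]
    rw [Finset.sum_congr rfl (fun τ _ => P_eq A z hz2 hzz τ)]
    rw [← Finset.sum_fiberwise_of_maps_to (g := fun τ : Fin k → Fin m => parF τ)
      (t := Finset.univ) (fun τ _ => Finset.mem_univ _)]
    refine Finset.sum_congr rfl fun y _ => ?_
    rw [beta_eq, Finset.sum_smul]
    refine Finset.sum_congr rfl fun τ hτ => ?_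
    simp only [mem_filter, mem_univ, true_and] at hτ
    rw [hτ]
  · intro y hy
    unfold betaG
    have hempty : (Finset.Nat.antidiagonalTuple m k).filter
        (fun μ => ∀ i, μ i % 2 = if y i then 1 else 0) = ∅ := by
      rw [Finset.eq_empty_iff_forall_notMem]
      intro μ hμ
      simp only [mem_filter, Finset.Nat.mem_antidiagonalTuple] at hμ
      have h1 : ∀ i ∈ Finset.univ.filter (fun i => y i = true), 1 ≤ μ i := by
        intro i hi
        simp only [mem_filter, mem_univ, true_and] at hi
        have := hμ.2 i
        rw [if_pos hi] at this
        omega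
      have h2 : (Finset.univ.filter (fun i => y i = true)).card ≤ ∑ i, μ i := by
        calc (Finset.univ.filter (fun i => y i = true)).card
            = ∑ i ∈ Finset.univ.filter (fun i => y i = true), 1 := by
              rw [Finset.card_eq_sum_ones]
          _ ≤ ∑ i ∈ Finset.univ.filter (fun i => y i = true), μ i := Finset.sum_le_sum h1
          _ ≤ ∑ i, μ i := Finset.sum_le_sum_of_subset (Finset.filter_subset _ _)
      omega
    rw [hempty, Finset.sum_empty]
end

section
/- Fix m ≥ 1 and a symmetric m×m matrix A with entries in {0,1} and zero diagonal. Then for every nonzero μ ∈ ℤ_{≥0}^m, Σ_G(μ) = ∑_{j : μ_j ≥ 1} (−1)^{s_j(μ)} · Σ_G(μ − 𝟙_j), where 𝟙_j is the j-th standard basis vector of ℤ^m and s_j(μ) := ∑_{i > j} A_{ij}·μ_i (so (−1)^{s_j(μ)} depends only on the parity of s_j(μ)). Moreover Σ_G(0) = 1. -/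
lemma count_snoc {m n : ℕ} (σ : Fin n → Fin m) (j i : Fin m) :
    (Finset.univ.filter (fun s : Fin (n+1) => (Fin.snoc σ j : Fin (n+1) → Fin m) s = i)).card
      = (Finset.univ.filter (fun s : Fin n => σ s = i)).card + (if i = j then 1 else 0) := by
  classical
  rw [Finset.card_filter, Finset.card_filter, Fin.sum_univ_castSucc]
  simp [eq_comm]

lemma card_pairs_snoc {m n : ℕ} (A : Fin m → Fin m → Bool) (σ : Fin n → Fin m) (j : Fin m) :
    (Finset.univ.filter (fun p : Fin (n+1) × Fin (n+1) =>
      p.1 < p.2 ∧ (Fin.snoc σ j : Fin (n+1) → Fin m) p.2 < (Fin.snoc σ j : Fin (n+1) → Fin m) p.1 ∧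
        A ((Fin.snoc σ j : Fin (n+1) → Fin m) p.1) ((Fin.snoc σ j : Fin (n+1) → Fin m) p.2) = true)).card
    = (Finset.univ.filter (fun p : Fin n × Fin n =>
        p.1 < p.2 ∧ σ p.2 < σ p.1 ∧ A (σ p.1) (σ p.2) = true)).card
      + (Finset.univ.filter (fun s : Fin n => j < σ s ∧ A (σ s) j = true)).card := by
  classical
  rw [Finset.card_filter, Finset.card_filter, Finset.card_filter,
      Fintype.sum_prod_type, Fintype.sum_prod_type]
  rw [Fin.sum_univ_castSucc]
  have h1 : ∀ a : Fin n, (∑ b : Fin (n+1),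
      if (Fin.castSucc a) < b ∧ (Fin.snoc σ j : Fin (n+1) → Fin m) b < (Fin.snoc σ j : Fin (n+1) → Fin m) (Fin.castSucc a) ∧
        A ((Fin.snoc σ j : Fin (n+1) → Fin m) (Fin.castSucc a)) ((Fin.snoc σ j : Fin (n+1) → Fin m) b) = true then 1 else 0)
      = (∑ b : Fin n, if a < b ∧ σ b < σ a ∧ A (σ a) (σ b) = true then 1 else 0)
        + (if j < σ a ∧ A (σ a) j = true then 1 else 0) := by
    intro a
    rw [Fin.sum_univ_castSucc]
    simp [Fin.castSucc_lt_castSucc_iff, Fin.castSucc_lt_last]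
  have h2 : (∑ b : Fin (n+1),
      if (Fin.last n) < b ∧ (Fin.snoc σ j : Fin (n+1) → Fin m) b < (Fin.snoc σ j : Fin (n+1) → Fin m) (Fin.last n) ∧
        A ((Fin.snoc σ j : Fin (n+1) → Fin m) (Fin.last n)) ((Fin.snoc σ j : Fin (n+1) → Fin m) b) = true then 1 else 0) = 0 := by
    apply Finset.sum_eq_zero
    intro b _
    rw [if_neg]
    rintro ⟨hb, -⟩
    exact absurd hb (by simp [Fin.lt_iff_val_lt_val]; omega)
  rw [h2, Finset.sum_congr rfl (fun a _ => h1 a)]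
  rw [Finset.sum_add_distrib]
  ring

lemma E_eq {m n : ℕ} (A : Fin m → Fin m → Bool) (σ : Fin n → Fin m) (j : Fin m) (μ : Fin m → ℕ)
    (hc : ∀ i, (Finset.univ.filter (fun s => σ s = i)).card = μ i) :
    (Finset.univ.filter (fun s : Fin n => j < σ s ∧ A (σ s) j = true)).card
      = ∑ i ∈ Finset.univ.filter (fun i => j < i), (if A i j then μ i else 0) := by
  classical
  rw [Finset.card_filter]
  rw [← Finset.sum_fiberwise Finset.univ σ
    (fun s => if j < σ s ∧ A (σ s) j = true then (1:ℕ) else 0)]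
  rw [Finset.sum_filter]
  apply Finset.sum_congr rfl
  intro i _
  have h : ∀ s ∈ Finset.univ.filter (fun s => σ s = i),
      (if j < σ s ∧ A (σ s) j = true then (1:ℕ) else 0)
        = (if j < i ∧ A i j = true then 1 else 0) := by
    intro s hs
    simp only [Finset.mem_filter] at hs
    rw [hs.2]
  rw [Finset.sum_congr rfl h, Finset.sum_const, hc i, smul_eq_mul]
  by_cases h1 : j < i <;> by_cases h2 : A i j <;> simp [h1, h2]

def SigAux (m n : ℕ) (A : Fin m → Fin m → Bool) (μ : Fin m → ℕ) : ℤ :=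
  ∑ τ ∈ Finset.univ.filter (fun τ : Fin n → Fin m =>
      ∀ i : Fin m, (Finset.univ.filter (fun s => τ s = i)).card = μ i),
    sgnG A τ

lemma SigAux_cast {m : ℕ} {a b : ℕ} (h : a = b) (A : Fin m → Fin m → Bool) (μ : Fin m → ℕ) :
    SigAux m a A μ = SigAux m b A μ := by subst h; rfl

lemma sgnG_snoc {m n : ℕ} (A : Fin m → Fin m → Bool) (σ : Fin n → Fin m) (j : Fin m) :
    sgnG A (Fin.snoc σ j : Fin (n+1) → Fin m)
      = (-1:ℤ) ^ (Finset.univ.filter (fun s : Fin n => j < σ s ∧ A (σ s) j = true)).card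
        * sgnG A σ := by
  unfold sgnG
  rw [card_pairs_snoc, pow_add]
  ring

def snocEquiv (m n : ℕ) : ((Fin n → Fin m) × Fin m) ≃ (Fin (n+1) → Fin m) where
  toFun p := Fin.snoc p.1 p.2
  invFun τ := (Fin.init τ, τ (Fin.last n))
  left_inv p := by simp
  right_inv τ := by simp [Fin.snoc_init_self]

lemma counts_snoc_iff {m n : ℕ} (σ : Fin n → Fin m) (j : Fin m) (μ : Fin m → ℕ) :
    (∀ i : Fin m, (Finset.univ.filter (fun s => (Fin.snoc σ j : Fin (n+1) → Fin m) s = i)).card = μ i)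
      ↔ (1 ≤ μ j ∧ ∀ i : Fin m,
          (Finset.univ.filter (fun s => σ s = i)).card = Function.update μ j (μ j - 1) i) := by
  classical
  simp only [count_snoc]
  constructor
  · intro h
    have hj := h j
    simp at hj
    constructor
    · omega
    · intro i
      rcases eq_or_ne i j with rfl | hij
      · rw [Function.update_self]; omega
      · rw [Function.update_of_ne hij]
        have := h i
        simp [hij] at this
        omega
  · rintro ⟨hj, h⟩ i
    rcases eq_or_ne i j with rfl | hij
    · have := h i
      rw [Function.update_self] at this
      simp [this]; omega
    · have := h i
      rw [Function.update_of_ne hij] at this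
      simp [hij, this]

lemma Sig_rec {m : ℕ} (A : Fin m → Fin m → Bool) (n : ℕ) (μ : Fin m → ℕ) :
    SigAux m (n+1) A μ = ∑ j ∈ Finset.univ.filter (fun j => 1 ≤ μ j),
      (-1:ℤ) ^ (∑ i ∈ Finset.univ.filter (fun i => j < i), (if A i j then μ i else 0)) *
        SigAux m n A (Function.update μ j (μ j - 1)) := by
  classical
  unfold SigAux
  rw [Finset.sum_filter]
  rw [← Equiv.sum_comp (snocEquiv m n)]
  rw [Fintype.sum_prod_type, Finset.sum_comm]
  -- now: ∑ j : Fin m, ∑ σ : Fin n → Fin m, ite (counts (snoc σ j) = μ) (sgnG (snoc σ j)) 0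
  rw [Finset.sum_filter (s := Finset.univ) (p := fun j => 1 ≤ μ j)]
  apply Finset.sum_congr rfl
  intro j _
  set μ' := Function.update μ j (μ j - 1) with hμ'
  by_cases hj : 1 ≤ μ j
  · rw [if_pos hj]
    have key : ∀ σ : Fin n → Fin m,
        (if (∀ i : Fin m, (Finset.univ.filter
            (fun s => (snocEquiv m n) (σ, j) s = i)).card = μ i)
          then sgnG A ((snocEquiv m n) (σ, j)) else 0)
        = (-1:ℤ) ^ (∑ i ∈ Finset.univ.filter (fun i => j < i), (if A i j then μ i else 0)) *
          (if (∀ i : Fin m, (Finset.univ.filter (fun s => σ s = i)).card = μ' i)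
            then sgnG A σ else 0) := by
      intro σ
      show (if (∀ i : Fin m, (Finset.univ.filter
            (fun s => (Fin.snoc σ j : Fin (n+1) → Fin m) s = i)).card = μ i)
          then sgnG A (Fin.snoc σ j : Fin (n+1) → Fin m) else 0) = _
      by_cases hc : ∀ i : Fin m, (Finset.univ.filter (fun s => σ s = i)).card = μ' i
      · rw [if_pos ((counts_snoc_iff σ j μ).2 ⟨hj, hc⟩), if_pos hc]
        rw [sgnG_snoc, E_eq A σ j μ' hc]
        congr 2
        apply Finset.sum_congr rfl
        intro i hi
        simp only [Finset.mem_filter] at hi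
        rw [hμ', Function.update_of_ne (by rintro rfl; exact lt_irrefl _ hi.2)]
      · rw [if_neg hc, if_neg, mul_zero]
        intro h
        exact hc ((counts_snoc_iff σ j μ).1 h).2
    rw [Finset.sum_congr rfl (fun σ _ => key σ), ← Finset.mul_sum]
    congr 1
    exact (Finset.sum_filter _ _).symm
  · rw [if_neg hj]
    apply Finset.sum_eq_zero
    intro σ _
    rw [if_neg]
    intro h
    show False
    have := ((counts_snoc_iff σ j μ).1 h).1
    omega

theorem stmt7 (m : ℕ) (hm : 1 ≤ m) (A : Fin m → Fin m → Bool)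
    (hsymm : ∀ i j, A i j = A j i) (hdiag : ∀ i, A i i = false) :
    (∀ μ : Fin m → ℕ, μ ≠ 0 →
      SigmaG m A μ = ∑ j ∈ Finset.univ.filter (fun j => 1 ≤ μ j),
        (-1 : ℤ) ^ (∑ i ∈ Finset.univ.filter (fun i => j < i),
            (if A i j then μ i else 0)) *
          SigmaG m A (Function.update μ j (μ j - 1))) ∧
    SigmaG m A 0 = 1 := by
  classical
  constructor
  · intro μ hμ
    have hk : 1 ≤ ∑ i, μ i := by
      by_contra h
      push_neg at h
      apply hμ
      funext i
      have h0 : ∑ i, μ i = 0 := by omega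
      exact (Finset.sum_eq_zero_iff.mp h0) i (Finset.mem_univ i)
    obtain ⟨n, hn⟩ : ∃ n, ∑ i, μ i = n + 1 := ⟨∑ i, μ i - 1, by omega⟩
    have h1 : SigmaG m A μ = SigAux m (∑ i, μ i) A μ := rfl
    rw [h1, SigAux_cast hn A μ, Sig_rec]
    apply Finset.sum_congr rfl
    intro j hj
    simp only [Finset.mem_filter] at hj
    congr 1
    have hsum : ∑ i, Function.update μ j (μ j - 1) i = n := by
      rw [Finset.sum_update_of_mem (Finset.mem_univ j)]
      have h2 : μ j + ∑ i ∈ Finset.univ \ {j}, μ i = ∑ i, μ i := by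
        rw [Finset.sdiff_singleton_eq_erase]
        exact Finset.add_sum_erase _ μ (Finset.mem_univ j)
      omega
    have h3 : SigmaG m A (Function.update μ j (μ j - 1))
        = SigAux m (∑ i, Function.update μ j (μ j - 1) i) A (Function.update μ j (μ j - 1)) := rfl
    rw [h3, SigAux_cast hsum]
  · have h0 : SigmaG m A 0 = SigAux m 0 A 0 := SigAux_cast (by simp) A 0
    rw [h0]
    unfold SigAux sgnG
    simp
end

section
/- Fix m ≥ 1 and a symmetric m×m matrix A with entries in {0,1} and zero diagonal, defining a graph G on {1,…,m} with edges {i,j} whenever A_{ij} = 1. Suppose the connected components of G have vertex sets V_1, …, V_r. Define α_G(μ) := (μ_1! ⋯ μ_m!)·Σ_G(μ)/|μ|! ∈ ℚ. Then for every μ ∈ ℤ_{≥0}^m, α_G(μ) = ∏_{t=1}^{r} α_{G[V_t]}(μ|_{V_t}), where G[V_t] is the induced subgraph of G on V_t and μ|_{V_t} is the restriction of μ to the indices in V_t. -/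
/-- The antisymmetry character `α_G(μ) = (μ₁! ⋯ μ_m!) · Σ_G(μ) / |μ|!`. -/
def alphaG (m : ℕ) (A : Fin m → Fin m → Bool) (μ : Fin m → ℕ) : ℚ :=
  (∏ i, ((μ i).factorial : ℚ)) * (SigmaG m A μ : ℚ) / ((∑ i, μ i).factorial : ℚ)

open Finset

namespace Stmt8Aux

/-- count of occurrences of `i` in `τ` -/
def cnt {k m : ℕ} (τ : Fin k → Fin m) (i : Fin m) : ℕ :=
  (Finset.univ.filter (fun s => τ s = i)).card

/-- `SigmaG` with the length decoupled from `μ`. -/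
def SigmaG' (m k : ℕ) (A : Fin m → Fin m → Bool) (μ : Fin m → ℕ) : ℤ :=
  ∑ τ ∈ Finset.univ.filter (fun τ : Fin k → Fin m => ∀ i : Fin m, cnt τ i = μ i),
    sgnG A τ

def alphaG' (m k : ℕ) (A : Fin m → Fin m → Bool) (μ : Fin m → ℕ) : ℚ :=
  (∏ i, ((μ i).factorial : ℚ)) * (SigmaG' m k A μ : ℚ) / (k.factorial : ℚ)

lemma alphaG_eq (m : ℕ) (A : Fin m → Fin m → Bool) (μ : Fin m → ℕ) :
    alphaG m A μ = alphaG' m (∑ i, μ i) A μ := rfl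

lemma cnt_snoc {k m : ℕ} (τ : Fin k → Fin m) (x i : Fin m) :
    cnt (Fin.snoc τ x) i = cnt τ i + if x = i then 1 else 0 := by
  unfold cnt
  rw [Finset.card_filter, Finset.card_filter, Fin.sum_univ_castSucc]
  simp

lemma sum_cnt {k m : ℕ} (τ : Fin k → Fin m) : ∑ i, cnt τ i = k := by
  unfold cnt
  have h := Finset.card_eq_sum_card_fiberwise
    (s := (univ : Finset (Fin k))) (t := (univ : Finset (Fin m))) (f := τ)
    (fun x _ => mem_univ _)
  simpa using h.symm

lemma count_pred {k m : ℕ} (τ : Fin k → Fin m) (Q : Fin m → Prop) [DecidablePred Q] :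
    (univ.filter (fun s => Q (τ s))).card = ∑ j, if Q j then cnt τ j else 0 := by
  rw [Finset.card_filter,
    ← Finset.sum_fiberwise (univ : Finset (Fin k)) τ (fun s => if Q (τ s) then 1 else 0)]
  refine Finset.sum_congr rfl fun j _ => ?_
  have : ∀ s ∈ univ.filter (fun s => τ s = j),
      (if Q (τ s) then (1:ℕ) else 0) = if Q j then 1 else 0 := by
    intro s hs
    rw [(Finset.mem_filter.1 hs).2]
  rw [Finset.sum_congr rfl this, Finset.sum_const, smul_eq_mul]
  unfold cnt
  by_cases h : Q j <;> simp [h]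

lemma card_pairs_snd {k : ℕ} (P : Fin (k+1) × Fin (k+1) → Prop) [DecidablePred P]
    (hP : ∀ p, P p → p.1 < p.2) (b : Fin (k+1)) :
    (univ.filter (fun p : Fin (k+1) × Fin (k+1) => P p ∧ p.2 = b)).card
      = (univ.filter (fun a : Fin k => P (Fin.castSucc a, b))).card := by
  refine Finset.card_bij' (fun p hp => p.1.castLT (show p.1.val < k by
      have hm := Finset.mem_filter.1 hp
      have h1 : p.1.val < p.2.val := hP p hm.2.1
      have h2 : p.2 = b := hm.2.2
      have h3 : p.2.val < k + 1 := p.2.isLt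
      omega)) (fun a ha => (Fin.castSucc a, b)) ?_ ?_ ?_ ?_
  · intro p hp
    have hm := Finset.mem_filter.1 hp
    simp only [Finset.mem_filter, Finset.mem_univ, true_and, Fin.castSucc_castLT]
    rw [← hm.2.2]
    exact hm.2.1
  · intro a ha
    have hm := Finset.mem_filter.1 ha
    simp only [Finset.mem_filter, Finset.mem_univ, true_and]
    exact ⟨hm.2, trivial⟩
  · intro p hp
    have hm := Finset.mem_filter.1 hp
    simp only [Fin.castSucc_castLT]
    exact Prod.ext rfl hm.2.2.symm
  · intro a ha
    apply Fin.ext; rfl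

lemma card_pairs_fix {α β : Type*} [Fintype α] [Fintype β] [DecidableEq α] [DecidableEq β]
    (R : α × β → Prop) [DecidablePred R] (b : β) :
    (univ.filter (fun p : α × β => R p ∧ p.2 = b)).card
      = (univ.filter (fun a : α => R (a, b))).card := by
  refine Finset.card_bij' (fun p _ => p.1) (fun a _ => (a, b)) ?_ ?_ ?_ ?_
  · intro p hp
    have hm := (Finset.mem_filter.1 hp).2
    simp only [mem_filter, mem_univ, true_and]
    rw [← hm.2]
    exact hm.1
  · intro a ha
    have hm := (Finset.mem_filter.1 ha).2
    simp only [mem_filter, mem_univ, true_and]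
    exact ⟨hm, trivial⟩
  · intro p hp
    have hm := (Finset.mem_filter.1 hp).2
    exact Prod.ext rfl hm.2.symm
  · intro a ha; rfl

lemma sgn_snoc {k m : ℕ} (A : Fin m → Fin m → Bool) (τ : Fin k → Fin m) (x : Fin m) :
    sgnG A (Fin.snoc τ x) =
      (-1 : ℤ) ^ ((univ.filter (fun s : Fin k => x < τ s ∧ A (τ s) x = true)).card)
        * sgnG A τ := by
  unfold sgnG
  rw [← pow_add]
  congr 1
  set σ : Fin (k+1) → Fin m := Fin.snoc τ x with hσ
  set P : Fin (k+1) × Fin (k+1) → Prop :=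
    fun p => p.1 < p.2 ∧ σ p.2 < σ p.1 ∧ A (σ p.1) (σ p.2) = true with hP
  have hPfst : ∀ p, P p → p.1 < p.2 := fun p hp => hp.1
  have hfib := Finset.card_eq_sum_card_fiberwise
    (s := univ.filter P) (t := (univ : Finset (Fin (k+1)))) (f := Prod.snd)
    (fun x _ => mem_univ _)
  rw [show (univ.filter (fun p : Fin (k+1) × Fin (k+1) =>
      p.1 < p.2 ∧ σ p.2 < σ p.1 ∧ A (σ p.1) (σ p.2) = true)) = univ.filter P from rfl]
  rw [hfib]
  have hterm : ∀ b, ((univ.filter P).filter (fun p => p.2 = b)).card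
      = (univ.filter (fun a : Fin k => P (Fin.castSucc a, b))).card := by
    intro b
    rw [Finset.filter_filter, card_pairs_snd P hPfst b]
  calc ∑ b : Fin (k+1), ((univ.filter P).filter (fun p => p.2 = b)).card
      = ∑ b : Fin (k+1), (univ.filter (fun a : Fin k => P (Fin.castSucc a, b))).card :=
        Finset.sum_congr rfl fun b _ => hterm b
    _ = (∑ b : Fin k, (univ.filter
          (fun a : Fin k => P (Fin.castSucc a, Fin.castSucc b))).card)
        + (univ.filter (fun a : Fin k => P (Fin.castSucc a, Fin.last k))).card := by
        rw [Fin.sum_univ_castSucc]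
    _ = (univ.filter (fun p : Fin k × Fin k =>
          p.1 < p.2 ∧ τ p.2 < τ p.1 ∧ A (τ p.1) (τ p.2) = true)).card
        + (univ.filter (fun s : Fin k => x < τ s ∧ A (τ s) x = true)).card := by
        congr 1
        · symm
          rw [Finset.card_eq_sum_card_fiberwise
            (s := univ.filter (fun p : Fin k × Fin k =>
              p.1 < p.2 ∧ τ p.2 < τ p.1 ∧ A (τ p.1) (τ p.2) = true))
            (t := (univ : Finset (Fin k))) (f := Prod.snd) (fun x _ => mem_univ _)]
          refine Finset.sum_congr rfl fun b _ => ?_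
          rw [Finset.filter_filter, card_pairs_fix _ b]
          refine congrArg Finset.card (Finset.filter_congr fun a _ => ?_)
          simp only [hP, hσ, Fin.snoc_castSucc, Fin.castSucc_lt_castSucc_iff]
        · refine congrArg Finset.card (Finset.filter_congr fun a _ => ?_)
          simp only [hP, hσ, Fin.snoc_castSucc, Fin.snoc_last]
          constructor
          · rintro ⟨h1, h2, h3⟩; exact ⟨h2, h3⟩
          · rintro ⟨h2, h3⟩; exact ⟨Fin.castSucc_lt_last a, h2, h3⟩
    _ = (univ.filter (fun s : Fin k => x < τ s ∧ A (τ s) x = true)).card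
        + (univ.filter (fun p : Fin k × Fin k =>
          p.1 < p.2 ∧ τ p.2 < τ p.1 ∧ A (τ p.1) (τ p.2) = true)).card := Nat.add_comm _ _

lemma sigma_rec {m k : ℕ} (A : Fin m → Fin m → Bool) (μ : Fin m → ℕ) :
    SigmaG' m (k+1) A μ = ∑ i : Fin m, (if μ i = 0 then 0 else
      (-1 : ℤ) ^ (∑ j, if i < j ∧ A j i = true then μ j else 0)
        * SigmaG' m k A (fun j => μ j - if j = i then 1 else 0)) := by
  unfold SigmaG'
  rw [← Finset.sum_fiberwise
    (univ.filter (fun τ : Fin (k+1) → Fin m => ∀ i : Fin m, cnt τ i = μ i))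
    (fun τ => τ (Fin.last k)) (fun τ => sgnG A τ)]
  refine Finset.sum_congr rfl fun i _ => ?_
  rw [Finset.filter_filter]
  by_cases hμi : μ i = 0
  · rw [if_pos hμi]
    rw [Finset.filter_false_of_mem, Finset.sum_empty]
    intro τ hτ
    rintro ⟨hc, hlast⟩
    have : 0 < cnt τ i := by
      apply Finset.card_pos.2
      exact ⟨Fin.last k, Finset.mem_filter.2 ⟨mem_univ _, hlast⟩⟩
    rw [hc i, hμi] at this
    exact lt_irrefl 0 this
  · rw [if_neg hμi]
    set ν : Fin m → ℕ := fun j => μ j - if j = i then 1 else 0 with hν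
    have hcnt : ∀ τ : Fin (k+1) → Fin m, (∀ j, cnt τ j = μ j) → τ (Fin.last k) = i →
        ∀ j, cnt (fun s => τ (Fin.castSucc s)) j = ν j := by
      intro τ hc hlast j
      have hsnoc : Fin.snoc (fun s => τ (Fin.castSucc s)) (τ (Fin.last k)) = τ :=
        Fin.snoc_init_self τ
      have := cnt_snoc (fun s => τ (Fin.castSucc s)) (τ (Fin.last k)) j
      rw [hsnoc, hc j, hlast] at this
      simp only [hν]
      rcases eq_or_ne j i with hji | hji
      · subst hji
        rw [if_pos rfl] at this
        rw [if_pos rfl]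
        omega
      · rw [if_neg (fun h : i = j => hji h.symm)] at this
        rw [if_neg hji]
        omega
  
    have hsgn : ∀ σ : Fin k → Fin m, (∀ j, cnt σ j = ν j) →
        sgnG A (Fin.snoc σ i) =
          (-1 : ℤ) ^ (∑ j, if i < j ∧ A j i = true then μ j else 0) * sgnG A σ := by
      intro σ hc
      rw [sgn_snoc A σ i]
      congr 2
      rw [count_pred σ (fun j => i < j ∧ A j i = true)]
      refine Finset.sum_congr rfl fun j _ => ?_
      by_cases hcond : i < j ∧ A j i = true
      · rw [if_pos hcond, if_pos hcond, hc j]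
        simp only [hν]
        rw [if_neg (ne_of_gt hcond.1 : j ≠ i)]
        omega
      · rw [if_neg hcond, if_neg hcond]
    rw [Finset.mul_sum]
    refine Finset.sum_bij' (fun τ _ => (fun s => τ (Fin.castSucc s)))
      (fun σ _ => Fin.snoc σ i) ?_ ?_ ?_ ?_ ?_
    · intro τ hτ
      have hm := (Finset.mem_filter.1 hτ).2
      exact Finset.mem_filter.2 ⟨mem_univ _, hcnt τ hm.1 hm.2⟩
    · intro σ hσm
      have hm := (Finset.mem_filter.1 hσm).2
      refine Finset.mem_filter.2 ⟨mem_univ _, fun j => ?_, by simp⟩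
      rw [cnt_snoc σ i j, hm j]
      simp only [hν]
      rcases eq_or_ne j i with hji | hji
      · subst hji
        simp only [if_true, eq_self_iff_true]
        omega
      · rw [if_neg hji, if_neg (fun h : i = j => hji h.symm)]
        omega
    · intro τ hτ
      have hm := (Finset.mem_filter.1 hτ).2
      have h := Fin.snoc_init_self τ
      rw [hm.2] at h
      exact h
    · intro σ hσm
      funext s
      simp
    · intro τ hτ
      have hm := (Finset.mem_filter.1 hτ).2
      have hτeq : Fin.snoc (fun s => τ (Fin.castSucc s)) i = τ := by
        rw [← hm.2]; exact Fin.snoc_init_self τ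
      rw [← hsgn _ (hcnt τ hm.1 hm.2), hτeq]

lemma alphaG'_zero {n : ℕ} (B : Fin n → Fin n → Bool) :
    alphaG' n 0 B (fun _ => 0) = 1 := by
  unfold alphaG' SigmaG'
  have h1 : (univ.filter (fun τ : Fin 0 → Fin n => ∀ i : Fin n, cnt τ i = 0)) = univ := by
    refine Finset.filter_true_of_mem fun τ _ i => ?_
    unfold cnt
    simp
  rw [h1]
  have h2 : ∀ τ : Fin 0 → Fin n, sgnG B τ = 1 := by
    intro τ
    unfold sgnG
    have : (univ : Finset (Fin 0 × Fin 0)) = ∅ := by simp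
    rw [this]
    simp
  rw [Finset.sum_congr rfl (fun τ _ => h2 τ), Finset.sum_const]
  simp [Finset.card_univ]

lemma alpha_rec {m k : ℕ} (A : Fin m → Fin m → Bool) (μ : Fin m → ℕ) :
    ((k : ℚ) + 1) * alphaG' m (k+1) A μ
      = ∑ i, (μ i : ℚ) * (-1 : ℚ) ^ (∑ j, if i < j ∧ A j i = true then μ j else 0)
          * alphaG' m k A (fun j => μ j - if j = i then 1 else 0) := by
  unfold alphaG'
  rw [sigma_rec A μ]
  push_cast
  rw [Finset.mul_sum, Finset.sum_div, Finset.mul_sum]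
  refine Finset.sum_congr rfl fun i _ => ?_
  by_cases hμi : μ i = 0
  · rw [if_pos hμi, hμi]
    push_cast
    ring
  · rw [if_neg hμi]
    set ν : Fin m → ℕ := fun j => μ j - if j = i then 1 else 0 with hν
    have hfact : (μ i : ℚ) * ∏ j, ((ν j).factorial : ℚ) = ∏ j, ((μ j).factorial : ℚ) := by
      rw [← Finset.mul_prod_erase univ (fun j => ((ν j).factorial : ℚ)) (mem_univ i),
          ← Finset.mul_prod_erase univ (fun j => ((μ j).factorial : ℚ)) (mem_univ i)]
      have h1 : ∀ j ∈ univ.erase i, ((ν j).factorial : ℚ) = ((μ j).factorial : ℚ) := by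
        intro j hj
        have hji : j ≠ i := (Finset.mem_erase.1 hj).1
        simp only [hν, if_neg hji]
        norm_num
      rw [Finset.prod_congr rfl h1, ← mul_assoc]
      congr 1
      have hνi : ν i = μ i - 1 := by simp [hν]
      rw [hνi]
      obtain ⟨n, hn⟩ := Nat.exists_eq_succ_of_ne_zero hμi
      rw [hn]
      simp only [Nat.succ_sub_one, Nat.factorial_succ]
      push_cast
      ring
    have hk1 : ((k+1).factorial : ℚ) = ((k:ℚ)+1) * (k.factorial : ℚ) := by
      rw [Nat.factorial_succ]; push_cast; ring
    rw [hk1]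
    have hkne : (k.factorial : ℚ) ≠ 0 := by positivity
    have hk1ne : ((k:ℚ)+1) ≠ 0 := by positivity
    field_simp
    push_cast
    rw [← hfact]
    push_cast
    ring

lemma sum_orderEmb {M : Type*} [AddCommMonoid M] {m n : ℕ} (s : Finset (Fin m))
    (h : s.card = n) (f : Fin m → M) :
    ∑ a : Fin n, f (s.orderEmbOfFin h a) = ∑ i ∈ s, f i := by
  refine Finset.sum_nbij (fun a => s.orderEmbOfFin h a) (fun a _ => Finset.orderEmbOfFin_mem s h a)
    ((s.orderEmbOfFin h).injective.injOn) ?_ (fun a _ => rfl)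
  intro x hx
  have hx' : x ∈ (s : Set (Fin m)) := hx
  rw [← Finset.range_orderEmbOfFin s h] at hx'
  obtain ⟨a, ha⟩ := hx'
  exact ⟨a, by simp, ha⟩

lemma sub_one_sum {n : ℕ} (ν : Fin n → ℕ) (a : Fin n) (h : ν a ≠ 0) :
    ∑ b, (ν b - if b = a then 1 else 0) = (∑ b, ν b) - 1 := by
  rw [← Finset.add_sum_erase univ (fun b => ν b - if b = a then 1 else 0) (mem_univ a),
      ← Finset.add_sum_erase univ (fun b => ν b) (mem_univ a)]
  have h1 : ∀ b ∈ univ.erase a, (ν b - if b = a then 1 else 0) = ν b := by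
    intro b hb
    rw [if_neg (Finset.mem_erase.1 hb).1]
    omega
  rw [Finset.sum_congr rfl h1, if_pos rfl]
  have h2 : (univ.erase a).sum ν = ∑ x ∈ univ.erase a, ν x := rfl
  rw [h2]
  omega

lemma key {m r : ℕ} (A : Fin m → Fin m → Bool)
    (V : Fin r → Finset (Fin m)) (comp : Fin m → Fin r)
    (hmem : ∀ i, i ∈ V (comp i)) (huniq : ∀ i t, i ∈ V t → t = comp i)
    (hedge : ∀ i j, A i j = true → comp j = comp i) :
    ∀ (k : ℕ) (μ : Fin m → ℕ), ∑ i, μ i = k →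
      alphaG' m k A μ = ∏ t, alphaG' (V t).card
        (∑ a, μ ((V t).orderEmbOfFin rfl a))
        (fun a b => A ((V t).orderEmbOfFin rfl a) ((V t).orderEmbOfFin rfl b))
        (fun a => μ ((V t).orderEmbOfFin rfl a)) := by
  have hVfilter : ∀ t, univ.filter (fun i => comp i = t) = V t := by
    intro t
    ext i
    simp only [mem_filter, mem_univ, true_and]
    constructor
    · rintro rfl; exact hmem i
    · intro h; exact (huniq i t h).symm
  intro k
  induction k with
  | zero =>
    intro μ hμ
    have h0 : ∀ i, μ i = 0 := fun i =>
      (Finset.sum_eq_zero_iff.1 hμ) i (mem_univ i)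
    have hμ0 : μ = fun _ => 0 := funext h0
    subst hμ0
    rw [alphaG'_zero]
    symm
    apply Finset.prod_eq_one
    intro t _
    simp only [Finset.sum_const_zero]
    exact alphaG'_zero _
  | succ k ih =>
    intro μ hμ
    have hc1 : ((k:ℚ)+1) ≠ 0 := by positivity
    apply mul_left_cancel₀ hc1
    rw [alpha_rec A μ]
    -- notation
    have hexp : ∀ (t : Fin r) (a : Fin (V t).card),
        (∑ j, if (V t).orderEmbOfFin rfl a < j ∧ A j ((V t).orderEmbOfFin rfl a) = true
          then μ j else 0)
        = ∑ b, if a < b ∧ A ((V t).orderEmbOfFin rfl b) ((V t).orderEmbOfFin rfl a) = true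
            then μ ((V t).orderEmbOfFin rfl b) else 0 := by
      intro t a
      have hit : comp ((V t).orderEmbOfFin rfl a) = t :=
        (huniq _ t (Finset.orderEmbOfFin_mem (V t) rfl a)).symm
      rw [← Finset.sum_fiberwise (univ : Finset (Fin m)) comp
        (fun j => if (V t).orderEmbOfFin rfl a < j ∧ A j ((V t).orderEmbOfFin rfl a) = true
          then μ j else 0)]
      rw [Finset.sum_eq_single_of_mem t (mem_univ t) ?_]
      · rw [hVfilter t, ← sum_orderEmb (V t) rfl
          (fun j => if (V t).orderEmbOfFin rfl a < j ∧ A j ((V t).orderEmbOfFin rfl a) = true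
            then μ j else 0)]
        refine Finset.sum_congr rfl fun b _ => ?_
        refine if_congr (and_congr ?_ Iff.rfl) rfl rfl
        exact OrderEmbedding.lt_iff_lt _
      · intro t' _ hne
        apply Finset.sum_eq_zero
        intro j hj
        have hcompj : comp j = t' := (Finset.mem_filter.1 hj).2
        rw [if_neg]
        rintro ⟨hlt, hA⟩
        have h2 := hedge j ((V t).orderEmbOfFin rfl a) hA
        exact hne (by rw [← hcompj, ← h2, hit])
    have hterm : ∀ (t : Fin r) (a : Fin (V t).card),
        (μ ((V t).orderEmbOfFin rfl a) : ℚ)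
          * (-1 : ℚ) ^ (∑ j, if (V t).orderEmbOfFin rfl a < j
              ∧ A j ((V t).orderEmbOfFin rfl a) = true then μ j else 0)
          * alphaG' m k A (fun j => μ j - if j = (V t).orderEmbOfFin rfl a then 1 else 0)
        = ((μ ((V t).orderEmbOfFin rfl a) : ℚ)
            * (-1 : ℚ) ^ (∑ b, if a < b
                ∧ A ((V t).orderEmbOfFin rfl b) ((V t).orderEmbOfFin rfl a) = true
                then μ ((V t).orderEmbOfFin rfl b) else 0)
            * alphaG' (V t).card ((∑ b, μ ((V t).orderEmbOfFin rfl b)) - 1)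
              (fun a b => A ((V t).orderEmbOfFin rfl a) ((V t).orderEmbOfFin rfl b))
              (fun b => μ ((V t).orderEmbOfFin rfl b) - if b = a then 1 else 0))
          * ∏ s ∈ univ.erase t, alphaG' (V s).card
              (∑ b, μ ((V s).orderEmbOfFin rfl b))
              (fun a b => A ((V s).orderEmbOfFin rfl a) ((V s).orderEmbOfFin rfl b))
              (fun b => μ ((V s).orderEmbOfFin rfl b)) := by
      intro t a
      by_cases hzero : μ ((V t).orderEmbOfFin rfl a) = 0
      · rw [hzero]
        push_cast
        ring
      · have hsum' : ∑ j, (μ j - if j = (V t).orderEmbOfFin rfl a then 1 else 0) = k := by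
          rw [sub_one_sum μ _ hzero, hμ]
          omega
        rw [ih (fun j => μ j - if j = (V t).orderEmbOfFin rfl a then 1 else 0) hsum']
        rw [← Finset.mul_prod_erase univ _ (mem_univ t)]
        have hit : comp ((V t).orderEmbOfFin rfl a) = t :=
          (huniq _ t (Finset.orderEmbOfFin_mem (V t) rfl a)).symm
        have herase : ∀ s ∈ univ.erase t,
            (fun b => μ ((V s).orderEmbOfFin rfl b)
              - if (V s).orderEmbOfFin rfl b = (V t).orderEmbOfFin rfl a then 1 else 0)
            = (fun b => μ ((V s).orderEmbOfFin rfl b)) := by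
          intro s hs
          have hst : s ≠ t := (Finset.mem_erase.1 hs).1
          funext b
          have hne2 : (V s).orderEmbOfFin rfl b ≠ (V t).orderEmbOfFin rfl a := by
            intro hEq
            have h1 : comp ((V s).orderEmbOfFin rfl b) = s :=
              (huniq _ s (Finset.orderEmbOfFin_mem (V s) rfl b)).symm
            rw [hEq, hit] at h1
            exact hst h1.symm
          rw [if_neg hne2]
          omega
        have hfunt : (fun b => μ ((V t).orderEmbOfFin rfl b)
              - if (V t).orderEmbOfFin rfl b = (V t).orderEmbOfFin rfl a then 1 else 0)
            = (fun b => μ ((V t).orderEmbOfFin rfl b) - if b = a then 1 else 0) := by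
          funext b
          by_cases hba : b = a
          · subst hba; simp
          · have hne2 : (V t).orderEmbOfFin rfl b ≠ (V t).orderEmbOfFin rfl a :=
              fun h => hba (((V t).orderEmbOfFin rfl).injective h)
            rw [if_neg hne2, if_neg hba]
        rw [hexp t a]
        rw [Finset.prod_congr rfl (fun s hs => by rw [herase s hs])]
        rw [hfunt]
        have hlen : (∑ b, (μ ((V t).orderEmbOfFin rfl b) - if b = a then 1 else 0))
            = (∑ b, μ ((V t).orderEmbOfFin rfl b)) - 1 :=
          sub_one_sum (fun b => μ ((V t).orderEmbOfFin rfl b)) a hzero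
        rw [hlen]
        ring
    -- now regroup the sum over i by components
    rw [← Finset.sum_fiberwise (univ : Finset (Fin m)) comp
      (fun i => (μ i : ℚ) * (-1 : ℚ) ^ (∑ j, if i < j ∧ A j i = true then μ j else 0)
        * alphaG' m k A (fun j => μ j - if j = i then 1 else 0))]
    have hinner : ∀ t : Fin r,
        (∑ i ∈ univ.filter (fun i => comp i = t),
          (μ i : ℚ) * (-1 : ℚ) ^ (∑ j, if i < j ∧ A j i = true then μ j else 0)
            * alphaG' m k A (fun j => μ j - if j = i then 1 else 0))
        = ((∑ b, μ ((V t).orderEmbOfFin rfl b) : ℕ) : ℚ)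
            * ∏ s, alphaG' (V s).card (∑ b, μ ((V s).orderEmbOfFin rfl b))
                (fun a b => A ((V s).orderEmbOfFin rfl a) ((V s).orderEmbOfFin rfl b))
                (fun b => μ ((V s).orderEmbOfFin rfl b)) := by
      intro t
      rw [hVfilter t, ← sum_orderEmb (V t) rfl
        (fun i => (μ i : ℚ) * (-1 : ℚ) ^ (∑ j, if i < j ∧ A j i = true then μ j else 0)
          * alphaG' m k A (fun j => μ j - if j = i then 1 else 0))]
      rw [Finset.sum_congr rfl (fun a _ => hterm t a), ← Finset.sum_mul]
      have hcomp_sum : (∑ a : Fin (V t).card,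
          (μ ((V t).orderEmbOfFin rfl a) : ℚ)
            * (-1 : ℚ) ^ (∑ b, if a < b
                ∧ A ((V t).orderEmbOfFin rfl b) ((V t).orderEmbOfFin rfl a) = true
                then μ ((V t).orderEmbOfFin rfl b) else 0)
            * alphaG' (V t).card ((∑ b, μ ((V t).orderEmbOfFin rfl b)) - 1)
              (fun a b => A ((V t).orderEmbOfFin rfl a) ((V t).orderEmbOfFin rfl b))
              (fun b => μ ((V t).orderEmbOfFin rfl b) - if b = a then 1 else 0))
          = ((∑ b, μ ((V t).orderEmbOfFin rfl b) : ℕ) : ℚ)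
            * alphaG' (V t).card (∑ b, μ ((V t).orderEmbOfFin rfl b))
              (fun a b => A ((V t).orderEmbOfFin rfl a) ((V t).orderEmbOfFin rfl b))
              (fun b => μ ((V t).orderEmbOfFin rfl b)) := by
        rcases Nat.eq_zero_or_pos (∑ b, μ ((V t).orderEmbOfFin rfl b)) with h0 | hpos
        · have hall : ∀ a, μ ((V t).orderEmbOfFin rfl a) = 0 := fun a =>
            (Finset.sum_eq_zero_iff.1 h0) a (mem_univ a)
          rw [h0]
          push_cast
          rw [Finset.sum_eq_zero fun a _ => by rw [hall a]; push_cast; ring]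
          ring
        · obtain ⟨kt, hkt⟩ := Nat.exists_eq_succ_of_ne_zero (Nat.pos_iff_ne_zero.1 hpos)
          rw [hkt]
          rw [show kt + 1 - 1 = kt by omega]
          rw [← alpha_rec (fun a b => A ((V t).orderEmbOfFin rfl a) ((V t).orderEmbOfFin rfl b))
            (fun b => μ ((V t).orderEmbOfFin rfl b))]
          push_cast
          ring
      rw [hcomp_sum]
      rw [← Finset.mul_prod_erase univ _ (mem_univ t)]
      ring
    rw [Finset.sum_congr rfl (fun t _ => hinner t), ← Finset.sum_mul]
    have hsumκ : ∑ t, (∑ b, μ ((V t).orderEmbOfFin rfl b)) = k + 1 := by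
      calc ∑ t, (∑ b, μ ((V t).orderEmbOfFin rfl b))
          = ∑ t, ∑ i ∈ V t, μ i :=
            Finset.sum_congr rfl fun t _ => sum_orderEmb (V t) rfl μ
        _ = ∑ t, ∑ i ∈ univ.filter (fun i => comp i = t), μ i := by
            refine Finset.sum_congr rfl fun t _ => ?_
            rw [hVfilter t]
        _ = ∑ i, μ i := Finset.sum_fiberwise univ comp μ
        _ = k + 1 := hμ
    rw [← Nat.cast_sum, hsumκ]
    push_cast
    ring

end Stmt8Aux

theorem stmt8 (m : ℕ) (hm : 1 ≤ m) (A : Fin m → Fin m → Bool)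
    (hsymm : ∀ i j, A i j = A j i) (hdiag : ∀ i, A i i = false)
    (r : ℕ) (V : Fin r → Finset (Fin m))
    (hne : ∀ t, (V t).Nonempty)
    (hpart : ∀ i : Fin m, ∃! t, i ∈ V t)
    (hcomp : ∀ i j : Fin m,
      (SimpleGraph.fromRel (fun a b => A a b = true)).Reachable i j ↔
        ∃ t, i ∈ V t ∧ j ∈ V t)
    (μ : Fin m → ℕ) :
    alphaG m A μ = ∏ t, alphaG (V t).card
      (fun a b => A ((V t).orderEmbOfFin rfl a) ((V t).orderEmbOfFin rfl b))
      (fun a => μ ((V t).orderEmbOfFin rfl a)) := by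
  classical
  choose comp hc using hpart
  have hmem : ∀ i, i ∈ V (comp i) := fun i => (hc i).1
  have huniq : ∀ i t, i ∈ V t → t = comp i := fun i t ht => (hc i).2 t ht
  have hedge : ∀ i j, A i j = true → comp j = comp i := by
    intro i j hA
    have hne' : i ≠ j := by
      rintro rfl
      rw [hdiag i] at hA
      exact Bool.false_ne_true hA
    have hadj : (SimpleGraph.fromRel fun a b => A a b = true).Adj i j := by
      rw [SimpleGraph.fromRel_adj]
      exact ⟨hne', Or.inl hA⟩
    obtain ⟨t, hi, hj⟩ := (hcomp i j).1 hadj.reachable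
    exact (huniq j t hj).symm.trans (huniq i t hi)
  rw [Stmt8Aux.alphaG_eq]
  rw [Stmt8Aux.key A V comp hmem huniq hedge (∑ i, μ i) μ rfl]
  rfl
end

section
/- Fix m ≥ 1 and a symmetric m×m matrix A with entries in {0,1} and zero diagonal, defining a graph G on {1,…,m} with edges {i,j} whenever A_{ij} = 1. Suppose the connected components of G have vertex sets V_1, …, V_r. Then for every k ≥ 0 and every y ∈ {0,1}^m, β_G^{(k)}(y) = ∑_{κ ∈ ℤ_{≥0}^r, κ_1+…+κ_r = k} (k!/(κ_1! ⋯ κ_r!)) · ∏_{t=1}^{r} β_{G[V_t]}^{(κ_t)}(y|_{V_t}), where G[V_t] is the induced subgraph on V_t and y|_{V_t} is the restriction of y to the indices in V_t. -/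
namespace Stmt9Aux

theorem SigmaG_eq_sum {M : ℕ} (A : Fin M → Fin M → Bool) (μ : Fin M → ℕ) (n : ℕ)
    (h : ∑ i, μ i = n) :
    SigmaG M A μ = ∑ τ ∈ Finset.univ.filter (fun τ : Fin n → Fin M =>
      ∀ i, (Finset.univ.filter (fun s => τ s = i)).card = μ i), sgnG A τ := by
  subst h; rfl

theorem cnt_sum {n M : ℕ} (τ : Fin n → Fin M) :
    ∑ i, (Finset.univ.filter (fun s => τ s = i)).card = n := by
  rw [← Finset.card_eq_sum_card_fiberwise (fun s (_ : s ∈ Finset.univ) => Finset.mem_univ (τ s))]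
  simp

theorem betaFlat (M : ℕ) (A : Fin M → Fin M → Bool) (n : ℕ) (y : Fin M → Bool) :
    betaG M A n y = ∑ τ ∈ Finset.univ.filter (fun τ : Fin n → Fin M =>
      ∀ i, (Finset.univ.filter (fun s => τ s = i)).card % 2 = if y i then 1 else 0),
      sgnG A τ := by
  unfold betaG
  rw [Finset.sum_congr rfl (fun μ hμ => SigmaG_eq_sum A μ n
    (Finset.Nat.mem_antidiagonalTuple.mp (Finset.mem_filter.mp hμ).1))]
  have h1 : ∀ μ : Fin M → ℕ,
      (Finset.univ.filter (fun τ : Fin n → Fin M =>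
        ∀ i, (Finset.univ.filter (fun s => τ s = i)).card = μ i))
      = (Finset.univ.filter (fun τ : Fin n → Fin M =>
        (fun i => (Finset.univ.filter (fun s => τ s = i)).card) = μ)) := by
    intro μ
    apply Finset.filter_congr
    intro τ _
    simp [funext_iff]
  rw [Finset.sum_congr rfl (fun μ _ => by rw [h1 μ])]
  rw [Finset.sum_fiberwise_eq_sum_filter]
  apply Finset.sum_congr
  · apply Finset.filter_congr
    intro τ _
    simp only [Finset.mem_filter, Finset.Nat.mem_antidiagonalTuple, cnt_sum τ, true_and]
  · intro τ _; rfl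


section Decomp

variable {k r : ℕ} (c : Fin k → Fin r)

def nfib (t : Fin r) : ℕ := (Finset.univ.filter fun s => c s = t).card

def fIso (t : Fin r) :
    Fin (nfib c t) ≃o {x : Fin k // x ∈ Finset.univ.filter fun s => c s = t} :=
  Finset.orderIsoOfFin _ rfl

def embk (t : Fin r) (a : Fin (nfib c t)) : Fin k := (fIso c t a).1

theorem c_embk (t : Fin r) (a : Fin (nfib c t)) : c (embk c t a) = t := by
  have h := (fIso c t a).2
  rw [Finset.mem_filter] at h
  exact h.2

theorem embk_lt_iff (t : Fin r) {a b : Fin (nfib c t)} :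
    embk c t a < embk c t b ↔ a < b :=
  Iff.trans (by exact Subtype.coe_lt_coe) (fIso c t).lt_iff_lt

theorem embk_injective (t : Fin r) : Function.Injective (embk c t) :=
  Subtype.coe_injective.comp (fIso c t).injective

theorem embk_surj (t : Fin r) (s : Fin k) (h : c s = t) : ∃ a, embk c t a = s := by
  have hs : s ∈ Finset.univ.filter fun s => c s = t := by simp [h]
  exact ⟨(fIso c t).symm ⟨s, hs⟩,
    congrArg Subtype.val ((fIso c t).apply_symm_apply ⟨s, hs⟩)⟩

def idxk (s : Fin k) : Fin (nfib c (c s)) := (fIso c (c s)).symm ⟨s, by simp⟩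

theorem embk_idxk (s : Fin k) : embk c (c s) (idxk c s) = s :=
  congrArg Subtype.val ((fIso c (c s)).apply_symm_apply ⟨s, by simp⟩)

theorem sum_nfib : ∑ t, nfib c t = k := by
  unfold nfib
  rw [← Finset.card_eq_sum_card_fiberwise (fun s (_ : s ∈ Finset.univ) => Finset.mem_univ (c s))]
  simp

variable {Y : Type} [Fintype Y] [DecidableEq Y] (d : Y → Fin r) (N : Fin r → ℕ)
  (e : ∀ t, Fin (N t) ≃ {i : Y // d i = t})

def splitF (τ : Fin k → Y) (hτ : ∀ s, d (τ s) = c s) (t : Fin r) (a : Fin (nfib c t)) :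
    Fin (N t) :=
  (e t).symm ⟨τ (embk c t a), by rw [hτ]; exact c_embk c t a⟩

theorem e_splitF (τ : Fin k → Y) (hτ : ∀ s, d (τ s) = c s) (t : Fin r) (a : Fin (nfib c t)) :
    ((e t) (splitF c d N e τ hτ t a) : Y) = τ (embk c t a) := by
  rw [splitF, Equiv.apply_symm_apply]

theorem splitF_eq_iff (τ : Fin k → Y) (hτ : ∀ s, d (τ s) = c s) (t : Fin r)
    (a : Fin (nfib c t)) (b : Fin (N t)) :
    splitF c d N e τ hτ t a = b ↔ τ (embk c t a) = (e t b : Y) := by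
  rw [splitF, Equiv.symm_apply_eq, Subtype.ext_iff]

def glueF (σ : ∀ t, Fin (nfib c t) → Fin (N t)) (s : Fin k) : Y :=
  (e (c s) (σ (c s) (idxk c s)) : Y)

theorem d_glueF (σ : ∀ t, Fin (nfib c t) → Fin (N t)) (s : Fin k) :
    d (glueF c d N e σ s) = c s := (e (c s) (σ (c s) (idxk c s))).2

theorem glueF_splitF (τ : Fin k → Y) (hτ : ∀ s, d (τ s) = c s) :
    glueF c d N e (splitF c d N e τ hτ) = τ :=
  funext fun s => by rw [glueF, e_splitF, embk_idxk]

theorem splitF_glueF (σ : ∀ t, Fin (nfib c t) → Fin (N t)) (t : Fin r) (a : Fin (nfib c t)) :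
    splitF c d N e (glueF c d N e σ) (d_glueF c d N e σ) t a = σ t a := by
  obtain ⟨s, hs⟩ : ∃ s, embk c t a = s := ⟨_, rfl⟩
  have hct : c s = t := hs ▸ c_embk c t a
  subst hct
  have ha : a = idxk c s := embk_injective c (c s) (by rw [hs, embk_idxk])
  subst ha
  rw [splitF, Equiv.symm_apply_eq]
  apply Subtype.ext
  show glueF c d N e σ (embk c (c s) (idxk c s)) = ((e (c s)) (σ (c s) (idxk c s)) : Y)
  rw [embk_idxk]
  rfl

theorem cnt_splitF (τ : Fin k → Y) (hτ : ∀ s, d (τ s) = c s) (t : Fin r) (b : Fin (N t)) :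
    (Finset.univ.filter fun a => splitF c d N e τ hτ t a = b).card
      = (Finset.univ.filter fun s => τ s = (e t b : Y)).card := by
  apply Finset.card_bij (fun a _ => embk c t a)
  · intro a ha
    simp only [Finset.mem_filter, Finset.mem_univ, true_and] at ha ⊢
    exact (splitF_eq_iff c d N e τ hτ t a b).mp ha
  · intro a _ a' _ h
    exact embk_injective c t h
  · intro s hs
    simp only [Finset.mem_filter, Finset.mem_univ, true_and] at hs
    have hcs : c s = t := by rw [← hτ s, hs]; exact (e t b).2
    obtain ⟨a, rfl⟩ := embk_surj c t s hcs
    refine ⟨a, ?_, rfl⟩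
    simp only [Finset.mem_filter, Finset.mem_univ, true_and]
    exact (splitF_eq_iff c d N e τ hτ t a b).mpr hs

theorem bijective_iff_splitF (τ : Fin k → Y) (hτ : ∀ s, d (τ s) = c s) :
    Function.Bijective τ ↔ ∀ t, Function.Bijective (splitF c d N e τ hτ t) := by
  constructor
  · intro hbij t
    constructor
    · intro a a' h
      have h2 := congrArg (fun x => ((e t) x : Y)) h
      simp only [e_splitF] at h2
      exact embk_injective c t (hbij.1 h2)
    · intro b
      obtain ⟨s, hs⟩ := hbij.2 (e t b : Y)
      have hcs : c s = t := by rw [← hτ s, hs]; exact (e t b).2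
      obtain ⟨a, rfl⟩ := embk_surj c t s hcs
      exact ⟨a, (splitF_eq_iff c d N e τ hτ t a b).mpr hs⟩
  · intro hsp
    constructor
    · intro s s' h
      have hc : c s = c s' := by rw [← hτ s, ← hτ s', h]
      obtain ⟨a, ha⟩ := embk_surj c (c s) s rfl
      obtain ⟨a', ha'⟩ := embk_surj c (c s) s' hc.symm
      have heq : splitF c d N e τ hτ (c s) a = splitF c d N e τ hτ (c s) a' := by
        apply (e (c s)).injective
        apply Subtype.ext
        rw [e_splitF, e_splitF, ha, ha', h]
      rw [← ha, ← ha', (hsp (c s)).1 heq]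
    · intro i
      obtain ⟨a, ha⟩ := (hsp (d i)).2 ((e (d i)).symm ⟨i, rfl⟩)
      refine ⟨embk c (d i) a, ?_⟩
      have h2 := congrArg (fun x => ((e (d i)) x : Y)) ha
      simp only [e_splitF, Equiv.apply_symm_apply] at h2
      exact h2

theorem sum_decomp {M : Type} [CommSemiring M]
    (Q : (Fin k → Y) → Prop) [DecidablePred Q]
    (R : ∀ t, ((Fin (nfib c t) → Fin (N t)) → Prop)) [∀ t, DecidablePred (R t)]
    (F : (Fin k → Y) → M) (G : ∀ t, (Fin (nfib c t) → Fin (N t)) → M)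
    (hQR : ∀ τ (hτ : ∀ s, d (τ s) = c s), (Q τ ↔ ∀ t, R t (splitF c d N e τ hτ t)))
    (hFG : ∀ τ (hτ : ∀ s, d (τ s) = c s), F τ = ∏ t, G t (splitF c d N e τ hτ t)) :
    ∑ τ ∈ Finset.univ.filter (fun τ : Fin k → Y => (∀ s, d (τ s) = c s) ∧ Q τ), F τ
      = ∏ t, ∑ σ ∈ Finset.univ.filter (R t), G t σ := by
  rw [Finset.prod_univ_sum]
  refine Finset.sum_bij
    (fun τ hτ => splitF c d N e τ (fun s => (Finset.mem_filter.mp hτ).2.1 s))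
    ?_ ?_ ?_ ?_
  · intro τ hτ
    rw [Fintype.mem_piFinset]
    intro t
    rw [Finset.mem_filter]
    exact ⟨Finset.mem_univ _,
      (hQR τ _).mp (Finset.mem_filter.mp hτ).2.2 t⟩
  · intro τ₁ h₁ τ₂ h₂ h
    calc τ₁ = glueF c d N e (splitF c d N e τ₁ (fun s => (Finset.mem_filter.mp h₁).2.1 s)) :=
          (glueF_splitF c d N e τ₁ _).symm
      _ = glueF c d N e (splitF c d N e τ₂ (fun s => (Finset.mem_filter.mp h₂).2.1 s)) :=
          congrArg _ h
      _ = τ₂ := glueF_splitF c d N e τ₂ _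
  · intro σ hσ
    refine ⟨glueF c d N e σ, ?_, ?_⟩
    · rw [Finset.mem_filter]
      refine ⟨Finset.mem_univ _, fun s => d_glueF c d N e σ s, ?_⟩
      rw [hQR _ (fun s => d_glueF c d N e σ s)]
      intro t
      have : splitF c d N e (glueF c d N e σ) (fun s => d_glueF c d N e σ s) t = σ t :=
        funext fun a => splitF_glueF c d N e σ t a
      rw [this]
      exact Finset.mem_filter.mp ((Fintype.mem_piFinset.mp hσ) t) |>.2
    · funext t
      exact funext fun a => splitF_glueF c d N e σ t a
  · intro τ hτ
    exact hFG τ _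

theorem card_decomp
    (Q : (Fin k → Y) → Prop) [DecidablePred Q]
    (R : ∀ t, ((Fin (nfib c t) → Fin (N t)) → Prop)) [∀ t, DecidablePred (R t)]
    (hQR : ∀ τ (hτ : ∀ s, d (τ s) = c s), (Q τ ↔ ∀ t, R t (splitF c d N e τ hτ t))) :
    (Finset.univ.filter (fun τ : Fin k → Y => (∀ s, d (τ s) = c s) ∧ Q τ)).card
      = ∏ t, (Finset.univ.filter (R t)).card := by
  have h := sum_decomp c d N e Q R (fun _ => (1 : ℕ)) (fun _ _ => 1) hQR
    (fun τ hτ => by simp)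
  rw [Finset.card_eq_sum_ones, h]
  exact Finset.prod_congr rfl fun t _ => (Finset.card_eq_sum_ones _).symm

end Decomp



def sigmaFiber {r : ℕ} (κ : Fin r → ℕ) (t : Fin r) :
    Fin (κ t) ≃ {p : Σ t' : Fin r, Fin (κ t') // p.1 = t} where
  toFun a := ⟨⟨t, a⟩, rfl⟩
  invFun p := p.2 ▸ p.1.2
  left_inv a := rfl
  right_inv := by rintro ⟨⟨t', a⟩, rfl⟩; rfl

theorem card_bijective_filter {α β : Type} [Fintype α] [Fintype β] [DecidableEq α]
    [DecidableEq β] (h : Fintype.card α = Fintype.card β) :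
    (Finset.univ.filter fun f : α → β => Function.Bijective f).card = (Fintype.card α).factorial := by
  rw [← Fintype.card_subtype]
  have e1 : {f : α → β // Function.Bijective f} ≃ (α ≃ β) :=
    ⟨fun p => Equiv.ofBijective p.1 p.2, fun q => ⟨q, q.bijective⟩,
      fun p => Subtype.ext rfl, fun q => Equiv.ext fun x => rfl⟩
  rw [Fintype.card_congr e1, Fintype.card_equiv (Fintype.equivOfCardEq h)]

theorem card_count {k r : ℕ} (κ : Fin r → ℕ) (h : ∑ t, κ t = k) :
    ((Finset.univ.filter fun c : Fin k → Fin r => ∀ t, nfib c t = κ t).card)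
      * ∏ t, (κ t).factorial = k.factorial := by
  classical
  have hcardY : Fintype.card ((t : Fin r) × Fin (κ t)) = k := by
    simp [h]
  have hfib : ∀ t : Fin r,
      (Finset.univ.filter fun p : (t' : Fin r) × Fin (κ t') => p.1 = t).card = κ t := by
    intro t
    rw [← Fintype.card_subtype, Fintype.card_congr (sigmaFiber κ t).symm, Fintype.card_fin]
  have hcnt : ∀ f : Fin k → (t' : Fin r) × Fin (κ t'), Function.Bijective f → ∀ t,
      (Finset.univ.filter fun s => (f s).1 = t).card = κ t := by
    intro f hf t
    rw [← hfib t]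
    apply Finset.card_bij (fun s _ => f s)
    · intro s hs
      simp only [Finset.mem_filter, Finset.mem_univ, true_and] at hs ⊢
      exact hs
    · intro s _ s' _ hss
      exact hf.1 hss
    · intro p hp
      obtain ⟨s, rfl⟩ := hf.2 p
      exact ⟨s, by simpa using (Finset.mem_filter.mp hp).2, rfl⟩
  have hmain : (Finset.univ.filter
        fun f : Fin k → (t' : Fin r) × Fin (κ t') => Function.Bijective f).card
      = ∑ c ∈ (Finset.univ.filter fun c : Fin k → Fin r => ∀ t, nfib c t = κ t),
          ((Finset.univ.filter
            fun f : Fin k → (t' : Fin r) × Fin (κ t') => Function.Bijective f).filter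
            fun f => (fun s => (f s).1) = c).card := by
    apply Finset.card_eq_sum_card_fiberwise
    intro f hf
    simp only [Finset.mem_coe, Finset.mem_filter, Finset.mem_univ, true_and] at hf ⊢
    exact fun t => hcnt f hf t
  have hfiber : ∀ c ∈ (Finset.univ.filter fun c : Fin k → Fin r => ∀ t, nfib c t = κ t),
      ((Finset.univ.filter
        fun f : Fin k → (t' : Fin r) × Fin (κ t') => Function.Bijective f).filter
        fun f => (fun s => (f s).1) = c).card = ∏ t, (κ t).factorial := by
    intro c hc
    have hc' : ∀ t, nfib c t = κ t := by
      simpa using hc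
    rw [Finset.filter_filter]
    have heq : (Finset.univ.filter fun f : Fin k → (t' : Fin r) × Fin (κ t') =>
        Function.Bijective f ∧ (fun s => (f s).1) = c)
        = (Finset.univ.filter fun f : Fin k → (t' : Fin r) × Fin (κ t') =>
            (∀ s, (f s).1 = c s) ∧ Function.Bijective f) := by
      apply Finset.filter_congr
      intro f _
      rw [funext_iff, and_comm]
    rw [heq, card_decomp c Sigma.fst κ (sigmaFiber κ) Function.Bijective
      (fun t ρ => Function.Bijective ρ)
      (fun τ hτ => bijective_iff_splitF c Sigma.fst κ (sigmaFiber κ) τ hτ)]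
    apply Finset.prod_congr rfl
    intro t _
    rw [card_bijective_filter (by simp [hc' t]), Fintype.card_fin, hc' t]
  have h2 : (Finset.univ.filter
        fun f : Fin k → (t' : Fin r) × Fin (κ t') => Function.Bijective f).card
      = (Finset.univ.filter fun c : Fin k → Fin r => ∀ t, nfib c t = κ t).card
        * ∏ t, (κ t).factorial := by
    rw [hmain, Finset.sum_congr rfl hfiber, Finset.sum_const, smul_eq_mul]
  rw [← h2, card_bijective_filter (by simp [hcardY]), Fintype.card_fin]

def mkEquiv {m r : ℕ} (W : Finset (Fin m)) (comp : Fin m → Fin r) (t : Fin r)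
    (h : ∀ i, i ∈ W ↔ comp i = t) : Fin W.card ≃ {i : Fin m // comp i = t} :=
  (W.orderIsoOfFin rfl).toEquiv.trans (Equiv.subtypeEquivRight h)

theorem mkEquiv_val {m r : ℕ} (W : Finset (Fin m)) (comp : Fin m → Fin r) (t : Fin r)
    (h : ∀ i, i ∈ W ↔ comp i = t) (b : Fin W.card) :
    ((mkEquiv W comp t h b : {i : Fin m // comp i = t}) : Fin m) = W.orderEmbOfFin rfl b := by
  simp [mkEquiv, Equiv.subtypeEquivRight, Finset.coe_orderIsoOfFin_apply]
  rfl

end Stmt9Aux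

open Stmt9Aux in
theorem stmt9 (m : ℕ) (hm : 1 ≤ m) (A : Fin m → Fin m → Bool)
    (hsymm : ∀ i j, A i j = A j i) (hdiag : ∀ i, A i i = false)
    (r : ℕ) (V : Fin r → Finset (Fin m))
    (hne : ∀ t, (V t).Nonempty)
    (hpart : ∀ i : Fin m, ∃! t, i ∈ V t)
    (hcomp : ∀ i j : Fin m,
      (SimpleGraph.fromRel (fun a b => A a b = true)).Reachable i j ↔
        ∃ t, i ∈ V t ∧ j ∈ V t)
    (k : ℕ) (y : Fin m → Bool) :
    (betaG m A k y : ℚ) = ∑ κ ∈ Finset.Nat.antidiagonalTuple r k,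
      ((k.factorial : ℚ) / ∏ t, ((κ t).factorial : ℚ)) *
        ∏ t, (betaG (V t).card
          (fun a b => A ((V t).orderEmbOfFin rfl a) ((V t).orderEmbOfFin rfl b))
          (κ t) (fun a => y ((V t).orderEmbOfFin rfl a)) : ℚ) := by
  classical
  -- the component function
  have hmem : ∀ i : Fin m, i ∈ V ((hpart i).choose) := fun i => (hpart i).choose_spec.1
  set comp : Fin m → Fin r := fun i => (hpart i).choose with hcompdef
  have huniq : ∀ (i : Fin m) (t : Fin r), i ∈ V t → comp i = t :=
    fun i t h => ((hpart i).choose_spec.2 t h).symm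
  have memV_iff : ∀ (i : Fin m) (t : Fin r), i ∈ V t ↔ comp i = t :=
    fun i t => ⟨huniq i t, fun h => h ▸ hmem i⟩
  have hedge : ∀ i j : Fin m, A i j = true → comp i = comp j := by
    intro i j hA
    have hij : i ≠ j := by
      intro hijeq
      rw [hijeq, hdiag j] at hA
      simp at hA
    have hadj : (SimpleGraph.fromRel fun a b => A a b = true).Adj i j := by
      rw [SimpleGraph.fromRel_adj]
      exact ⟨hij, Or.inl hA⟩
    obtain ⟨t, hit, hjt⟩ := (hcomp i j).mp hadj.reachable
    rw [huniq i t hit, huniq j t hjt]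
  set eV : ∀ t : Fin r, Fin ((V t).card) ≃ {i : Fin m // comp i = t} :=
    fun t => mkEquiv (V t) comp t (fun i => memV_iff i t) with heVdef
  have heV : ∀ (t : Fin r) (b : Fin ((V t).card)),
      ((eV t b : {i : Fin m // comp i = t}) : Fin m) = (V t).orderEmbOfFin rfl b :=
    fun t b => mkEquiv_val (V t) comp t (fun i => memV_iff i t) b
  -- key compatibility: values of τ on a fiber
  have hτe : ∀ (c : Fin k → Fin r) (τ : Fin k → Fin m) (hτ : ∀ s, comp (τ s) = c s)
      (t : Fin r) (a : Fin (nfib c t)),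
      τ (embk c t a) = (V t).orderEmbOfFin rfl
        (splitF c comp (fun t => (V t).card) eV τ hτ t a) := by
    intro c τ hτ t a
    rw [← heV, e_splitF]
  -- sign factorization
  have hsgn : ∀ (c : Fin k → Fin r) (τ : Fin k → Fin m) (hτ : ∀ s, comp (τ s) = c s),
      sgnG A τ = ∏ t, sgnG
        (fun a b => A ((V t).orderEmbOfFin rfl a) ((V t).orderEmbOfFin rfl b))
        (splitF c comp (fun t => (V t).card) eV τ hτ t) := by
    intro c τ hτ
    have hcard : (Finset.univ.filter (fun p : Fin k × Fin k =>
        p.1 < p.2 ∧ τ p.2 < τ p.1 ∧ A (τ p.1) (τ p.2) = true)).card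
        = ∑ t, (Finset.univ.filter (fun q : Fin (nfib c t) × Fin (nfib c t) =>
            q.1 < q.2 ∧ splitF c comp (fun t => (V t).card) eV τ hτ t q.2 <
              splitF c comp (fun t => (V t).card) eV τ hτ t q.1 ∧
            A ((V t).orderEmbOfFin rfl (splitF c comp (fun t => (V t).card) eV τ hτ t q.1))
              ((V t).orderEmbOfFin rfl (splitF c comp (fun t => (V t).card) eV τ hτ t q.2))
              = true)).card := by
      rw [Finset.card_eq_sum_card_fiberwise
        (f := fun p : Fin k × Fin k => c p.1) (t := Finset.univ)
        (fun p _ => Finset.mem_univ _)]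
      apply Finset.sum_congr rfl
      intro t _
      symm
      apply Finset.card_bij (fun q _ => (embk c t q.1, embk c t q.2))
      · intro q hq
        simp only [Finset.mem_filter, Finset.mem_univ, true_and] at hq ⊢
        obtain ⟨h1, h2, h3⟩ := hq
        refine ⟨⟨(embk_lt_iff c t).mpr h1, ?_, ?_⟩, c_embk c t q.1⟩
        · rw [hτe c τ hτ t q.1, hτe c τ hτ t q.2]
          exact ((V t).orderEmbOfFin rfl).lt_iff_lt.mpr h2
        · rw [hτe c τ hτ t q.1, hτe c τ hτ t q.2]
          exact h3
      · intro q _ q' _ hqq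
        rw [Prod.ext_iff] at hqq ⊢
        exact ⟨embk_injective c t hqq.1, embk_injective c t hqq.2⟩
      · intro p hp
        simp only [Finset.mem_filter, Finset.mem_univ, true_and] at hp
        obtain ⟨⟨h1, h2, h3⟩, hc1⟩ := hp
        have hc2 : c p.2 = t := by
          rw [← hτ p.2, ← hedge (τ p.1) (τ p.2) h3, hτ p.1, hc1]
        obtain ⟨a1, ha1⟩ := embk_surj c t p.1 hc1
        obtain ⟨a2, ha2⟩ := embk_surj c t p.2 hc2
        refine ⟨(a1, a2), ?_, by rw [Prod.ext_iff]; exact ⟨ha1, ha2⟩⟩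
        simp only [Finset.mem_filter, Finset.mem_univ, true_and]
        refine ⟨?_, ?_, ?_⟩
        · rw [← embk_lt_iff c t (a := a1) (b := a2), ha1, ha2]; exact h1
        · rw [← ((V t).orderEmbOfFin rfl).lt_iff_lt, ← hτe c τ hτ t a1, ← hτe c τ hτ t a2,
            ha1, ha2]
          exact h2
        · rw [← hτe c τ hτ t a1, ← hτe c τ hτ t a2, ha1, ha2]
          exact h3
    unfold sgnG
    rw [hcard, ← Finset.prod_pow_eq_pow_sum]
  -- parity factorization
  have hpar : ∀ (c : Fin k → Fin r) (τ : Fin k → Fin m) (hτ : ∀ s, comp (τ s) = c s),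
      ((∀ i, (Finset.univ.filter fun s => τ s = i).card % 2 = if y i then 1 else 0) ↔
        ∀ t, (∀ b : Fin ((V t).card),
          (Finset.univ.filter fun a =>
            splitF c comp (fun t => (V t).card) eV τ hτ t a = b).card % 2
            = if y ((V t).orderEmbOfFin rfl b) then 1 else 0)) := by
    intro c τ hτ
    constructor
    · intro hQ t b
      rw [cnt_splitF, heV t b]
      exact hQ _
    · intro hR i
      have hval : ((eV (comp i)) ((eV (comp i)).symm ⟨i, rfl⟩) : Fin m) = i := by
        rw [Equiv.apply_symm_apply]
      have hbi := hR (comp i) ((eV (comp i)).symm ⟨i, rfl⟩)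
      rw [cnt_splitF, hval, ← heV, hval] at hbi
      exact hbi
  -- main computation over ℤ
  have hZ : betaG m A k y = ∑ κ ∈ Finset.Nat.antidiagonalTuple r k,
      ((Finset.univ.filter fun c : Fin k → Fin r => ∀ t, nfib c t = κ t).card : ℤ) *
        ∏ t, betaG (V t).card
          (fun a b => A ((V t).orderEmbOfFin rfl a) ((V t).orderEmbOfFin rfl b))
          (κ t) (fun a => y ((V t).orderEmbOfFin rfl a)) := by
    rw [betaFlat]
    rw [← Finset.sum_fiberwise _ (fun τ : Fin k → Fin m => fun s => comp (τ s)) (sgnG A)]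
    have step1 : ∀ c : Fin k → Fin r,
        ∑ τ ∈ (Finset.univ.filter (fun τ : Fin k → Fin m =>
          ∀ i, (Finset.univ.filter (fun s => τ s = i)).card % 2
            = if y i then 1 else 0)).filter (fun τ => (fun s => comp (τ s)) = c),
          sgnG A τ
        = ∏ t, betaG (V t).card
            (fun a b => A ((V t).orderEmbOfFin rfl a) ((V t).orderEmbOfFin rfl b))
            (nfib c t) (fun a => y ((V t).orderEmbOfFin rfl a)) := by
      intro c
      rw [Finset.filter_filter]
      have hfc : (Finset.univ.filter (fun τ : Fin k → Fin m =>
          (∀ i, (Finset.univ.filter (fun s => τ s = i)).card % 2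
            = if y i then 1 else 0) ∧ (fun s => comp (τ s)) = c))
          = (Finset.univ.filter (fun τ : Fin k → Fin m =>
            (∀ s, comp (τ s) = c s) ∧
              ∀ i, (Finset.univ.filter (fun s => τ s = i)).card % 2
                = if y i then 1 else 0)) := by
        apply Finset.filter_congr
        intro τ _
        rw [funext_iff, and_comm]
      rw [hfc]
      rw [sum_decomp c comp (fun t => (V t).card) eV
        (fun τ : Fin k → Fin m => ∀ i,
          (Finset.univ.filter (fun s => τ s = i)).card % 2 = if y i then 1 else 0)
        (fun t (σ : Fin (nfib c t) → Fin ((V t).card)) => ∀ b,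
          (Finset.univ.filter (fun a => σ a = b)).card % 2
            = if y ((V t).orderEmbOfFin rfl b) then 1 else 0) (sgnG A)
        (fun t σ => sgnG
          (fun a b => A ((V t).orderEmbOfFin rfl a) ((V t).orderEmbOfFin rfl b)) σ)
        (hpar c) (hsgn c)]
      exact Finset.prod_congr rfl fun t _ => (betaFlat _ _ _ _).symm
    rw [Finset.sum_congr rfl (fun c _ => step1 c)]
    rw [← Finset.sum_fiberwise_of_maps_to (g := fun c : Fin k → Fin r => fun t => nfib c t)
      (t := Finset.Nat.antidiagonalTuple r k)
      (fun c _ => by rw [Finset.Nat.mem_antidiagonalTuple]; exact sum_nfib c)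
      (fun c => ∏ t, betaG (V t).card
        (fun a b => A ((V t).orderEmbOfFin rfl a) ((V t).orderEmbOfFin rfl b))
        (nfib c t) (fun a => y ((V t).orderEmbOfFin rfl a)))]
    apply Finset.sum_congr rfl
    intro κ hκ
    have hfe : (Finset.univ.filter (fun c : Fin k → Fin r => (fun t => nfib c t) = κ))
        = Finset.univ.filter (fun c : Fin k → Fin r => ∀ t, nfib c t = κ t) :=
      Finset.filter_congr (fun c _ => funext_iff)
    rw [hfe]
    have hinner : ∀ c ∈ Finset.univ.filter (fun c : Fin k → Fin r => ∀ t, nfib c t = κ t),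
        (∏ t, betaG (V t).card
          (fun a b => A ((V t).orderEmbOfFin rfl a) ((V t).orderEmbOfFin rfl b))
          (nfib c t) (fun a => y ((V t).orderEmbOfFin rfl a)))
        = ∏ t, betaG (V t).card
          (fun a b => A ((V t).orderEmbOfFin rfl a) ((V t).orderEmbOfFin rfl b))
          (κ t) (fun a => y ((V t).orderEmbOfFin rfl a)) :=
      fun c hc => Finset.prod_congr rfl fun t _ => by
        rw [(Finset.mem_filter.mp hc).2 t]
    rw [Finset.sum_congr rfl hinner, Finset.sum_const, nsmul_eq_mul]
  rw [hZ]
  push_cast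
  apply Finset.sum_congr rfl
  intro κ hκ
  have hkk := card_count κ (Finset.Nat.mem_antidiagonalTuple.mp hκ)
  have hprodne : (∏ t, ((κ t).factorial : ℚ)) ≠ 0 := by
    rw [← Nat.cast_prod]
    exact Nat.cast_ne_zero.mpr (Finset.prod_ne_zero_iff.mpr
      fun t _ => Nat.factorial_ne_zero (κ t))
  have hcast : ((Finset.univ.filter fun c : Fin k → Fin r => ∀ t, nfib c t = κ t).card : ℚ)
      = (k.factorial : ℚ) / ∏ t, ((κ t).factorial : ℚ) := by
    rw [eq_div_iff hprodne, ← Nat.cast_prod, ← Nat.cast_mul]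
    exact_mod_cast hkk
  rw [hcast]
end

section
/- Let H be an r×n matrix over F₂ = ZMod 2, let n ≥ 1, and let δ > 0 and γ' > 0 be real numbers. Suppose that for every nonempty S ⊆ {1,…,n} with |S| ≤ δ·n, the number of rows j ∈ {1,…,r} for which exactly one i ∈ S satisfies H_{ji} = 1 is at least γ'·|S|. Then every nonzero x ∈ F₂^n with H·x = 0 has Hamming weight strictly greater than δ·n. -/
theorem stmt12 (r n : ℕ) (hn : 1 ≤ n) (H : Matrix (Fin r) (Fin n) (ZMod 2))
    (δ γ' : ℝ) (hδ : 0 < δ) (hγ : 0 < γ')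
    (hexp : ∀ S : Finset (Fin n), S.Nonempty → (S.card : ℝ) ≤ δ * n →
      γ' * S.card ≤ ((Finset.univ.filter (fun j : Fin r =>
        (S.filter (fun i => H j i = 1)).card = 1)).card : ℝ))
    (x : Fin n → ZMod 2) (hx : x ≠ 0) (hHx : H.mulVec x = 0) :
    δ * n < ((Finset.univ.filter (fun i => x i ≠ 0)).card : ℝ) := by
  set S : Finset (Fin n) := Finset.univ.filter (fun i => x i ≠ 0) with hS
  by_contra hle
  push_neg at hle
  have hSne : S.Nonempty := by
    obtain ⟨i, hi⟩ : ∃ i, x i ≠ 0 := by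
      by_contra h; push_neg at h; exact hx (funext h)
    exact ⟨i, by simp [hS, hi]⟩
  have hcard := hexp S hSne hle
  have hScard : (0 : ℝ) < γ' * S.card := by
    have : 0 < S.card := Finset.card_pos.mpr hSne
    positivity
  have hT : (Finset.univ.filter (fun j : Fin r =>
      (S.filter (fun i => H j i = 1)).card = 1)).Nonempty := by
    rw [← Finset.card_pos]
    by_contra h
    push_neg at h
    have h0 : (Finset.univ.filter (fun j : Fin r =>
      (S.filter (fun i => H j i = 1)).card = 1)).card = 0 := by omega
    rw [h0] at hcard
    exact absurd (lt_of_lt_of_le hScard hcard) (by norm_num)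
  obtain ⟨j, hj⟩ := hT
  simp only [Finset.mem_filter, Finset.mem_univ, true_and] at hj
  -- j is a unique-neighbor row; compute (H.mulVec x) j
  have hxval : ∀ i, x i = if i ∈ S then 1 else 0 := by
    intro i
    by_cases h : i ∈ S
    · simp only [hS, Finset.mem_filter, Finset.mem_univ, true_and] at h
      rw [if_pos (by simp [hS, h])]
      revert h; generalize x i = a; revert a; decide
    · simp only [hS, Finset.mem_filter, Finset.mem_univ, true_and, not_not] at h
      rw [if_neg (by simp [hS, h]), h]
  have hrow : H.mulVec x j = ∑ i ∈ S, H j i := by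
    rw [Matrix.mulVec, dotProduct]
    rw [← Finset.sum_subset (Finset.subset_univ S)]
    · exact Finset.sum_congr rfl fun i hi => by rw [hxval i, if_pos hi, mul_one]
    · intro i _ hi
      rw [hxval i, if_neg hi, mul_zero]
  have hsum : ∑ i ∈ S, H j i = 1 := by
    have : ∑ i ∈ S, H j i = ((S.filter (fun i => H j i = 1)).card : ZMod 2) := by
      rw [← Finset.sum_filter_add_sum_filter_not S (fun i => H j i = 1)]
      have h1 : ∑ i ∈ S.filter (fun i => H j i = 1), H j i
          = ((S.filter (fun i => H j i = 1)).card : ZMod 2) := by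
        rw [Finset.sum_congr rfl (fun i hi => (Finset.mem_filter.mp hi).2)]
        simp
      have h2 : ∑ i ∈ S.filter (fun i => ¬ H j i = 1), H j i = 0 := by
        apply Finset.sum_eq_zero
        intro i hi
        have h2 := (Finset.mem_filter.mp hi).2
        revert h2
        generalize H j i = a
        revert a
        decide
      rw [h1, h2, add_zero]
    rw [this, hj]
    norm_num
  have : H.mulVec x j = 0 := by rw [hHx]; rfl
  rw [hrow, hsum] at this
  exact one_ne_zero this
end

section
/- Let G be a bipartite graph with finite left vertex set L and right vertex set R, in which every left vertex has degree at most a. For S ⊆ L let Γ(S) ⊆ R be the set of right vertices adjacent to at least one vertex of S, and Γ₁(S) ⊆ R the set of right vertices adjacent to exactly one vertex of S. Then for every real γ and every S ⊆ L, if |Γ(S)| ≥ γ·|S| then |Γ₁(S)| ≥ (2γ − a)·|S|. In particular, if G is a (δ, γ) vertex expander then G is a (δ, 2γ − a) unique-neighbor expander. -/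
theorem stmt13 {L R : Type*} [Fintype L] [Fintype R] (E : L → R → Prop)
    [∀ v rr, Decidable (E v rr)] (a : ℝ)
    (hdeg : ∀ v : L, ((Finset.univ.filter (fun rr : R => E v rr)).card : ℝ) ≤ a) :
    (∀ (γ : ℝ) (S : Finset L),
      γ * S.card ≤
          ((Finset.univ.filter (fun rr : R => ∃ s ∈ S, E s rr)).card : ℝ) →
      (2 * γ - a) * S.card ≤
          ((Finset.univ.filter
            (fun rr : R => (S.filter (fun s => E s rr)).card = 1)).card : ℝ)) ∧
    ∀ (δ γ : ℝ),
      (∀ S : Finset L, (S.card : ℝ) ≤ δ * Fintype.card L →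
        γ * S.card ≤
          ((Finset.univ.filter (fun rr : R => ∃ s ∈ S, E s rr)).card : ℝ)) →
      ∀ S : Finset L, (S.card : ℝ) ≤ δ * Fintype.card L →
        (2 * γ - a) * S.card ≤
          ((Finset.univ.filter
            (fun rr : R => (S.filter (fun s => E s rr)).card = 1)).card : ℝ) := by
  have key : ∀ (γ : ℝ) (S : Finset L),
      γ * S.card ≤
          ((Finset.univ.filter (fun rr : R => ∃ s ∈ S, E s rr)).card : ℝ) →
      (2 * γ - a) * S.card ≤
          ((Finset.univ.filter
            (fun rr : R => (S.filter (fun s => E s rr)).card = 1)).card : ℝ) := by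
    intro γ S hγ
    set N : Finset R := Finset.univ.filter (fun rr : R => ∃ s ∈ S, E s rr) with hN
    set U : Finset R := Finset.univ.filter
        (fun rr : R => (S.filter (fun s => E s rr)).card = 1) with hU
    -- edge count
    set e : ℕ := ∑ rr : R, (S.filter (fun s => E s rr)).card with he
    have hswap : e = ∑ s ∈ S, (Finset.univ.filter (fun rr : R => E s rr)).card := by
      simp only [he, Finset.card_filter]
      rw [Finset.sum_comm]
    have hea : (e : ℝ) ≤ a * S.card := by
      rw [hswap]
      push_cast
      calc (∑ s ∈ S, ((Finset.univ.filter (fun rr : R => E s rr)).card : ℝ))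
          ≤ ∑ _s ∈ S, a := Finset.sum_le_sum fun s _ => hdeg s
        _ = a * S.card := by rw [Finset.sum_const, nsmul_eq_mul, mul_comm]
    have hkey : 2 * N.card ≤ U.card + e := by
      have h1 : ∀ rr ∈ N, 2 ≤ (if (S.filter (fun s => E s rr)).card = 1 then 1 else 0)
          + (S.filter (fun s => E s rr)).card := by
        intro rr hrr
        simp only [hN, Finset.mem_filter] at hrr
        obtain ⟨-, s, hs, hEs⟩ := hrr
        have hpos : 0 < (S.filter (fun s => E s rr)).card :=
          Finset.card_pos.2 ⟨s, Finset.mem_filter.2 ⟨hs, hEs⟩⟩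
        rcases eq_or_lt_of_le (Nat.succ_le_of_lt hpos : 1 ≤ _) with h | h
        · simp [← h]
        · split <;> omega
      calc 2 * N.card = ∑ _rr ∈ N, 2 := by rw [Finset.sum_const, smul_eq_mul, mul_comm]
        _ ≤ ∑ rr ∈ N, ((if (S.filter (fun s => E s rr)).card = 1 then 1 else 0)
              + (S.filter (fun s => E s rr)).card) := Finset.sum_le_sum h1
        _ = (∑ rr ∈ N, if (S.filter (fun s => E s rr)).card = 1 then 1 else 0)
              + ∑ rr ∈ N, (S.filter (fun s => E s rr)).card := Finset.sum_add_distrib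
        _ ≤ U.card + e := by
            gcongr
            · rw [hU, Finset.card_filter]
              exact Finset.sum_le_sum_of_subset (Finset.subset_univ N)
            · exact Finset.sum_le_sum_of_subset (Finset.subset_univ N)
    have hkeyR : 2 * (N.card : ℝ) ≤ (U.card : ℝ) + e := by exact_mod_cast hkey
    nlinarith [hγ, hea, hkeyR]
  exact ⟨key, fun δ γ hexp S hS => key γ S (hexp S hS)⟩
end

section
/- Let n, m ≥ 1 and work over F₂ = ZMod 2. Define the symplectic form on F₂^{2n} by ω(u, v) := ∑_{i=1}^{n} (u_i·v_{n+i} + u_{n+i}·v_i). Let b_1, …, b_m ∈ F₂^{2n} and let T : F₂^{2n} → F₂^{2n} be a linear map that is injective on the span of {b_1, …, b_m} and satisfies ω(T b_i, T b_j) = ω(b_i, b_j) for all i, j ∈ {1,…,m}. Then there exists a linear map T' : F₂^{2n} → F₂^{2n} with ω(T' x, T' y) = ω(x, y) for all x, y ∈ F₂^{2n} (i.e. T' is symplectic, hence invertible) such that T' b_i = T b_i for all i ∈ {1,…,m}. -/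
/-- The standard symplectic form on `F₂^{2n} = F₂^n × F₂^n`:
`ω(u, v) = ∑ i, (u_i v_{n+i} + u_{n+i} v_i)`. -/
def symp (n : ℕ) (u v : (Fin n → ZMod 2) × (Fin n → ZMod 2)) : ZMod 2 :=
  ∑ i, (u.1 i * v.2 i + u.2 i * v.1 i)

namespace SympWitt

open Module LinearMap.BilinForm

abbrev Vn (n : ℕ) := (Fin n → ZMod 2) × (Fin n → ZMod 2)

/-- `symp` as a bilinear form. -/
def sB (n : ℕ) : LinearMap.BilinForm (ZMod 2) (Vn n) :=
  LinearMap.mk₂ (ZMod 2) (symp n)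
    (fun u u' v => by
      simp only [symp, Prod.fst_add, Prod.snd_add, Pi.add_apply, ← Finset.sum_add_distrib]
      exact Finset.sum_congr rfl fun i _ => by ring)
    (fun c u v => by
      simp only [symp, Prod.smul_fst, Prod.smul_snd, Pi.smul_apply, smul_eq_mul,
        Finset.mul_sum]
      exact Finset.sum_congr rfl fun i _ => by ring)
    (fun u v v' => by
      simp only [symp, Prod.fst_add, Prod.snd_add, Pi.add_apply, ← Finset.sum_add_distrib]
      exact Finset.sum_congr rfl fun i _ => by ring)
    (fun c u v => by
      simp only [symp, Prod.smul_fst, Prod.smul_snd, Pi.smul_apply, smul_eq_mul,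
        Finset.mul_sum]
      exact Finset.sum_congr rfl fun i _ => by ring)

variable {n : ℕ}

@[simp] lemma sB_apply (u v : Vn n) : sB n u v = symp n u v := rfl

lemma symp_comm (u v : Vn n) : symp n u v = symp n v u :=
  Finset.sum_congr rfl fun i _ => by ring

lemma symp_self (u : Vn n) : symp n u u = 0 := by
  unfold symp
  rw [Finset.sum_eq_zero]
  intro i _
  rw [mul_comm (u.2 i)]
  exact CharTwo.add_self_eq_zero _

lemma sB_alt : (sB n).IsAlt := fun u => symp_self u

lemma sB_refl : (sB n).IsRefl := sB_alt.isRefl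

lemma sum_single (f : Fin n → ZMod 2) (i : Fin n) :
    ∑ j, f j * (Pi.single i 1 : Fin n → ZMod 2) j = f i := by
  rw [Fintype.sum_eq_single i fun j hj => by simp [Pi.single_eq_of_ne hj]]
  simp

lemma sB_nondeg : (sB n).Nondegenerate := by
  refine (LinearMap.IsRefl.nondegenerate_iff_separatingLeft sB_refl).mpr ?_
  intro u hu
  have h1 : ∀ i, u.1 i = 0 := fun i => by
    simpa [sB, symp, sum_single] using hu (0, Pi.single i 1)
  have h2 : ∀ i, u.2 i = 0 := fun i => by
    simpa [sB, symp, sum_single] using hu (Pi.single i 1, 0)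
  ext i
  · exact h1 i
  · exact h2 i

lemma symp_add_left (u u' v : Vn n) : symp n (u + u') v = symp n u v + symp n u' v :=
  congrArg (fun φ => φ v) ((sB n).map_add u u')

lemma symp_add_right (u v v' : Vn n) : symp n u (v + v') = symp n u v + symp n u v' :=
  (sB n u).map_add v v'

lemma symp_smul_left (c : ZMod 2) (u v : Vn n) : symp n (c • u) v = c * symp n u v :=
  congrArg (fun φ => φ v) ((sB n).map_smul c u)

lemma symp_smul_right (c : ZMod 2) (u v : Vn n) : symp n u (c • v) = c * symp n u v :=
  (sB n u).map_smul c v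

@[simp] lemma symp_zero_left (v : Vn n) : symp n 0 v = 0 :=
  (sB n).map_zero₂ v

@[simp] lemma symp_zero_right (v : Vn n) : symp n v 0 = 0 :=
  (sB n v).map_zero

lemma sB_expand (a x b y : Vn n) (c d : ZMod 2) :
    symp n (a + c • x) (b + d • y) =
      symp n a b + d * symp n a y + c * symp n x b + c * d * symp n x y := by
  simp only [symp_add_left, symp_add_right, symp_smul_left, symp_smul_right]
  ring

/-- For a subspace `p ≤ W` and a map injective on `W`, `map f` preserves finrank of `p`. -/
lemma finrank_map_of_le {W p : Submodule (ZMod 2) (Vn n)} (f : Vn n →ₗ[ZMod 2] Vn n)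
    (hle : p ≤ W) (hinj : Function.Injective (f.comp W.subtype)) :
    finrank (ZMod 2) (p.map f) = finrank (ZMod 2) p := by
  have h1 : p.map f = (p.comap W.subtype).map (f.comp W.subtype) := by
    rw [Submodule.map_comp, Submodule.map_comap_subtype, inf_of_le_right hle]
  have h3 : (p.comap W.subtype).map W.subtype = p := by
    rw [Submodule.map_comap_subtype, inf_of_le_right hle]
  calc finrank (ZMod 2) (p.map f)
      = finrank (ZMod 2) ((p.comap W.subtype).map (f.comp W.subtype)) := by rw [h1]
    _ = finrank (ZMod 2) (p.comap W.subtype) :=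
        (LinearEquiv.finrank_eq (Submodule.equivMapOfInjective _ hinj _)).symm
    _ = finrank (ZMod 2) ((p.comap W.subtype).map W.subtype) :=
        LinearEquiv.finrank_eq (Submodule.equivMapOfInjective _ W.injective_subtype _)
    _ = finrank (ZMod 2) p := by rw [h3]

/-- One-step Witt extension. -/
lemma step (W : Submodule (ZMod 2) (Vn n)) (f : Vn n →ₗ[ZMod 2] Vn n)
    (hinj : ∀ x ∈ W, f x = 0 → x = 0)
    (hpres : ∀ x ∈ W, ∀ y ∈ W, symp n (f x) (f y) = symp n x y)
    (v : Vn n) (hv : v ∉ W) :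
    ∃ v', v' ∉ W.map f ∧ ∀ w ∈ W, symp n (f w) v' = symp n w v := by
  classical
  set fW : W →ₗ[ZMod 2] Vn n := f.comp W.subtype with hfWdef
  have hfW : Function.Injective fW := by
    intro a b hab
    have h0 : f ((a : Vn n) - b) = 0 := by
      rw [map_sub, sub_eq_zero]; exact hab
    have h1 : ((a : Vn n) - b) = 0 := hinj _ (W.sub_mem a.2 b.2) h0
    exact Subtype.ext (sub_eq_zero.mp h1)
  set e := LinearEquiv.ofInjective fW hfW with he
  set ψ : W →ₗ[ZMod 2] ZMod 2 := ((sB n).flip v).comp W.subtype with hψ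
  obtain ⟨Φ, hΦ⟩ := LinearMap.exists_extend (ψ.comp e.symm.toLinearMap)
  set u := ((sB n).toDual sB_nondeg).symm Φ with hu_def
  have huy : ∀ y, sB n u y = Φ y := fun y => apply_toDual_symm_apply (f := Φ) (v := y)
  have hu : ∀ w ∈ W, symp n (f w) u = symp n w v := by
    intro w hw
    have hmem : f w ∈ LinearMap.range fW := ⟨⟨w, hw⟩, rfl⟩
    have h3 : e ⟨w, hw⟩ = ⟨f w, hmem⟩ := Subtype.ext (by
      simp [he, LinearEquiv.ofInjective_apply, hfWdef])
    have h4 : e.symm ⟨f w, hmem⟩ = ⟨w, hw⟩ := by rw [← h3, LinearEquiv.symm_apply_apply]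
    have h2 : Φ (f w) = ψ ⟨w, hw⟩ := by
      have h5 := LinearMap.congr_fun hΦ (⟨f w, hmem⟩ : LinearMap.range fW)
      simpa [h4] using h5
    have h5 : ψ ⟨w, hw⟩ = symp n w v := by simp [hψ]
    calc symp n (f w) u = symp n u (f w) := symp_comm _ _
      _ = Φ (f w) := huy (f w)
      _ = symp n w v := by rw [h2, h5]
  by_cases hum : u ∈ W.map f
  · obtain ⟨w₀, hw₀, huw⟩ := hum
    have hz₀mem : v - w₀ ∈ (sB n).orthogonal W := by
      intro x hx
      show sB n x (v - w₀) = 0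
      rw [map_sub]
      have ha : symp n (f x) u = symp n x v := hu x hx
      have hb : symp n (f x) (f w₀) = symp n x w₀ := hpres x hx w₀ hw₀
      rw [huw] at hb
      simp only [sB_apply]
      rw [← ha, hb]
      ring
    have hz₀ : v - w₀ ∉ W := fun h => hv (by
      have := W.add_mem h hw₀; simpa using this)
    have hno : ¬ ((sB n).orthogonal W ≤ W) := fun h => hz₀ (h hz₀mem)
    have hex : ∃ z ∈ (sB n).orthogonal (W.map f), z ∉ W.map f := by
      by_contra hcon
      push_neg at hcon
      have hle : (sB n).orthogonal (W.map f) ≤ W.map f := hcon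
      have hfr1 : finrank (ZMod 2) ((sB n).orthogonal W)
          = finrank (ZMod 2) (Vn n) - finrank (ZMod 2) W :=
        finrank_orthogonal sB_nondeg W
      have hfr2 : finrank (ZMod 2) ((sB n).orthogonal (W.map f))
          = finrank (ZMod 2) (Vn n) - finrank (ZMod 2) (W.map f) :=
        finrank_orthogonal sB_nondeg (W.map f)
      have hfrW : finrank (ZMod 2) (W.map f) = finrank (ZMod 2) W :=
        finrank_map_of_le f le_rfl hfW
      have hradmap : ((W ⊓ (sB n).orthogonal W).map f)
          = (W.map f) ⊓ (sB n).orthogonal (W.map f) := by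
        apply le_antisymm
        · rintro _ ⟨w, ⟨hwW, hwO⟩, rfl⟩
          refine ⟨Submodule.mem_map_of_mem hwW, ?_⟩
          rintro _ ⟨w', hw', rfl⟩
          show sB n (f w') (f w) = 0
          rw [sB_apply, hpres w' hw' w hwW]
          exact hwO w' hw'
        · rintro y ⟨hy1, hy2⟩
          obtain ⟨w, hwW, rfl⟩ := hy1
          refine ⟨w, ⟨hwW, ?_⟩, rfl⟩
          intro x hx
          show sB n x w = 0
          rw [sB_apply, ← hpres x hx w hwW]
          exact hy2 (f x) (Submodule.mem_map_of_mem hx)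
      have hfrrad : finrank (ZMod 2) ((W ⊓ (sB n).orthogonal W).map f)
          = finrank (ZMod 2) (W ⊓ (sB n).orthogonal W : Submodule (ZMod 2) (Vn n)) :=
        finrank_map_of_le f inf_le_left hfW
      have hlt : finrank (ZMod 2) (W ⊓ (sB n).orthogonal W : Submodule (ZMod 2) (Vn n))
          < finrank (ZMod 2) ((sB n).orthogonal W) := by
        rcases lt_or_ge (finrank (ZMod 2) (W ⊓ (sB n).orthogonal W : Submodule (ZMod 2) (Vn n)))
          (finrank (ZMod 2) ((sB n).orthogonal W)) with h | h
        · exact h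
        · exfalso
          have heq := Submodule.eq_of_le_of_finrank_le inf_le_right h
          exact hno (heq ▸ inf_le_left)
      have heq2 : (W.map f) ⊓ (sB n).orthogonal (W.map f) = (sB n).orthogonal (W.map f) :=
        inf_eq_right.mpr hle
      rw [hradmap, heq2] at hfrrad
      omega
    obtain ⟨z, hzO, hzW⟩ := hex
    refine ⟨u + z, ?_, ?_⟩
    · intro hmem2
      apply hzW
      have : (u + z) - u ∈ W.map f := Submodule.sub_mem _ hmem2 ⟨w₀, hw₀, huw⟩
      simpa using this
    · intro w hw
      have hz0 : symp n (f w) z = 0 :=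
        hzO (f w) (Submodule.mem_map_of_mem hw)
      rw [symp_add_right, hz0, add_zero]
      exact hu w hw
  · exact ⟨u, hum, hu⟩

lemma extend_aux (k : ℕ) : ∀ (W : Submodule (ZMod 2) (Vn n)) (f : Vn n →ₗ[ZMod 2] Vn n),
    finrank (ZMod 2) (Vn n) - finrank (ZMod 2) W ≤ k →
    (∀ x ∈ W, f x = 0 → x = 0) →
    (∀ x ∈ W, ∀ y ∈ W, symp n (f x) (f y) = symp n x y) →
    ∃ g : Vn n →ₗ[ZMod 2] Vn n,
      (∀ x y, symp n (g x) (g y) = symp n x y) ∧ ∀ x ∈ W, g x = f x := by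
  induction k with
  | zero =>
    intro W f hk hinj hpres
    have hT : W = ⊤ := by
      apply Submodule.eq_top_of_finrank_eq
      have h1 := Submodule.finrank_le W
      omega
    subst hT
    exact ⟨f, fun x y => hpres x Submodule.mem_top y Submodule.mem_top, fun x _ => rfl⟩
  | succ k ih =>
    intro W f hk hinj hpres
    by_cases hWt : W = ⊤
    · subst hWt
      exact ⟨f, fun x y => hpres x Submodule.mem_top y Submodule.mem_top, fun x _ => rfl⟩
    · obtain ⟨v, hv⟩ : ∃ v, v ∉ W := by
        by_contra h
        push_neg at h
        exact hWt (Submodule.eq_top_iff'.mpr h)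
      obtain ⟨v', hv'mem, hv'⟩ := step W f hinj hpres v hv
      set pf : (Vn n) →ₗ.[ZMod 2] (Vn n) := ⟨W, f.domRestrict W⟩ with hpf
      have hvd : v ∉ pf.domain := hv
      obtain ⟨g₀, hg₀⟩ := LinearMap.exists_extend (pf.supSpanSingleton v v' hvd).toFun
      have key : ∀ w ∈ W, ∀ c : ZMod 2, g₀ (w + c • v) = f w + c • v' := by
        intro w hw c
        have hmem : w + c • v ∈ (pf.supSpanSingleton v v' hvd).domain := by
          rw [LinearPMap.domain_supSpanSingleton]
          exact Submodule.mem_sup.2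
            ⟨w, hw, c • v, Submodule.mem_span_singleton.2 ⟨c, rfl⟩, rfl⟩
        have h1 : g₀ (w + c • v) = (pf.supSpanSingleton v v' hvd).toFun ⟨w + c • v, hmem⟩ :=
          (LinearMap.congr_fun hg₀ ⟨_, hmem⟩)
        have h2 := pf.supSpanSingleton_apply_mk v v' hvd w hw c
        rw [h1]
        exact h2.trans (by rfl)
      set W' := W ⊔ Submodule.span (ZMod 2) {v} with hW'
      have hmem' : ∀ x ∈ W', ∃ w, w ∈ W ∧ ∃ c : ZMod 2, x = w + c • v := by
        intro x hx
        obtain ⟨w, hw, z, hz, rfl⟩ := Submodule.mem_sup.1 hx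
        obtain ⟨c, rfl⟩ := Submodule.mem_span_singleton.1 hz
        exact ⟨w, hw, c, rfl⟩
      have hvne : v ≠ 0 := fun h => hv (h ▸ W.zero_mem)
      have hfr : finrank (ZMod 2) W' = finrank (ZMod 2) W + 1 := by
        have hdis : W ⊓ Submodule.span (ZMod 2) {v} = ⊥ := by
          rw [eq_bot_iff]
          rintro x ⟨hx1, hx2⟩
          obtain ⟨c, rfl⟩ := Submodule.mem_span_singleton.1 hx2
          rcases (by decide : ∀ c : ZMod 2, c = 0 ∨ c = 1) c with h | h
          · simp [h]
          · exfalso; apply hv; simpa [h] using hx1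
        have h6 := Submodule.finrank_sup_add_finrank_inf_eq W (Submodule.span (ZMod 2) {v})
        rw [hdis, finrank_bot, finrank_span_singleton hvne] at h6
        rw [← hW'] at h6
        omega
      have hk' : finrank (ZMod 2) (Vn n) - finrank (ZMod 2) W' ≤ k := by omega
      have hinj' : ∀ x ∈ W', g₀ x = 0 → x = 0 := by
        intro x hx hx0
        obtain ⟨w, hw, c, rfl⟩ := hmem' x hx
        rw [key w hw c] at hx0
        rcases (by decide : ∀ c : ZMod 2, c = 0 ∨ c = 1) c with h | h
        · subst h
          simp only [zero_smul, add_zero] at hx0 ⊢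
          exact hinj w hw hx0
        · subst h
          exfalso
          apply hv'mem
          rw [one_smul] at hx0
          have hvv : v' = f (-w) := by
            rw [map_neg]
            exact eq_neg_of_add_eq_zero_right hx0
          exact hvv ▸ Submodule.mem_map_of_mem (W.neg_mem hw)
      have hpres' : ∀ x ∈ W', ∀ y ∈ W', symp n (g₀ x) (g₀ y) = symp n x y := by
        intro x hx y hy
        obtain ⟨w₁, hw₁, c₁, rfl⟩ := hmem' x hx
        obtain ⟨w₂, hw₂, c₂, rfl⟩ := hmem' y hy
        rw [key w₁ hw₁ c₁, key w₂ hw₂ c₂, sB_expand, sB_expand]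
        have e1 : symp n v' (f w₂) = symp n v w₂ := by
          rw [symp_comm, hv' w₂ hw₂, symp_comm]
        rw [hpres w₁ hw₁ w₂ hw₂, hv' w₁ hw₁, symp_self, symp_self, e1]
      obtain ⟨g, hg1, hg2⟩ := ih W' g₀ hk' hinj' hpres'
      refine ⟨g, hg1, fun x hx => ?_⟩
      rw [hg2 x (Submodule.mem_sup_left hx)]
      have := key x hx 0
      simpa using this

end SympWitt

theorem stmt14 (n m : ℕ) (hn : 1 ≤ n) (hm : 1 ≤ m)
    (b : Fin m → (Fin n → ZMod 2) × (Fin n → ZMod 2))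
    (T : ((Fin n → ZMod 2) × (Fin n → ZMod 2)) →ₗ[ZMod 2]
          ((Fin n → ZMod 2) × (Fin n → ZMod 2)))
    (hinj : Set.InjOn T (Submodule.span (ZMod 2) (Set.range b) : Set _))
    (hpres : ∀ i j, symp n (T (b i)) (T (b j)) = symp n (b i) (b j)) :
    ∃ T' : ((Fin n → ZMod 2) × (Fin n → ZMod 2)) →ₗ[ZMod 2]
            ((Fin n → ZMod 2) × (Fin n → ZMod 2)),
      (∀ x y, symp n (T' x) (T' y) = symp n x y) ∧ ∀ i, T' (b i) = T (b i) := by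
  classical
  set W := Submodule.span (ZMod 2) (Set.range b) with hWdef
  have hinj' : ∀ x ∈ W, T x = 0 → x = 0 := by
    intro x hx hx0
    exact hinj hx W.zero_mem (by rw [hx0, map_zero])
  have hpres' : ∀ x ∈ W, ∀ y ∈ W, symp n (T x) (T y) = symp n x y := by
    intro x hx y hy
    refine Submodule.span_induction₂
      (p := fun x y _ _ => symp n (T x) (T y) = symp n x y) ?_ ?_ ?_ ?_ ?_ ?_ ?_ hx hy
    · rintro x y ⟨i, rfl⟩ ⟨j, rfl⟩
      exact hpres i j
    · intro y _; simp
    · intro x _; simp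
    · intro x y z _ _ _ h1 h2
      rw [map_add, SympWitt.symp_add_left, SympWitt.symp_add_left, h1, h2]
    · intro x y z _ _ _ h1 h2
      rw [map_add, SympWitt.symp_add_right, SympWitt.symp_add_right, h1, h2]
    · intro r x y _ _ h1
      rw [map_smul, SympWitt.symp_smul_left, SympWitt.symp_smul_left, h1]
    · intro r x y _ _ h1
      rw [map_smul, SympWitt.symp_smul_right, SympWitt.symp_smul_right, h1]
  obtain ⟨g, hg1, hg2⟩ := SympWitt.extend_aux (Module.finrank (ZMod 2) (SympWitt.Vn n)) W T
    (Nat.sub_le _ _) hinj' hpres'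
  exact ⟨g, hg1, fun i =>
    hg2 (b i) (Submodule.subset_span (Set.mem_range_self i))⟩
end

section
/- Let R be a commutative ring, n ≥ 1, and z_1, …, z_n ∈ R with z_i² = 1 for all i. For 0 ≤ a ≤ n let e_a := ∑_{S ⊆ {1,…,n}, |S| = a} ∏_{i ∈ S} z_i, with the conventions e_{−1} = 0 and e_{n+1} = 0, and let T := z_1 + … + z_n. Then for every 0 ≤ a ≤ n, T·e_a = (a+1)·e_{a+1} + (n−a+1)·e_{a−1}, where the natural-number coefficients act on R by repeated addition. -/
/-- The elementary symmetric sums `e_a` of `z₁, …, z_n`, indexed by `a : ℤ`, with the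
convention `e_a = 0` for `a < 0` or `a > n`. -/
def esymZ (n : ℕ) {R : Type*} [CommRing R] (z : Fin n → R) (a : ℤ) : R :=
  if 0 ≤ a ∧ a ≤ (n : ℤ) then
    ∑ S ∈ Finset.powersetCard a.toNat (Finset.univ : Finset (Fin n)), ∏ i ∈ S, z i
  else 0

open Finset

section aux
variable {n : ℕ} {R : Type*} [CommRing R] (z : Fin n → R)

lemma auxA (a : ℕ) :
    ∑ S ∈ powersetCard a (univ : Finset (Fin n)), ∑ i ∈ Sᶜ, z i * ∏ j ∈ S, z j
      = (a + 1) • ∑ T ∈ powersetCard (a + 1) (univ : Finset (Fin n)), ∏ j ∈ T, z j := by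
  rw [smul_sum, Finset.sum_sigma']
  have h : ∀ T ∈ powersetCard (a+1) (univ : Finset (Fin n)),
      (a+1) • ∏ j ∈ T, z j = ∑ i ∈ T, ∏ j ∈ T, z j := by
    intro T hT
    rw [sum_const, (mem_powersetCard.mp hT).2]
  rw [Finset.sum_congr rfl h, Finset.sum_sigma']
  refine Finset.sum_nbij' (fun p => ⟨insert p.2 p.1, p.2⟩) (fun p => ⟨p.1.erase p.2, p.2⟩)
    ?_ ?_ ?_ ?_ ?_
  · rintro ⟨S, i⟩ hp
    simp only [mem_sigma, mem_powersetCard_univ, mem_compl] at hp ⊢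
    exact ⟨by rw [card_insert_of_notMem hp.2, hp.1], mem_insert_self _ _⟩
  · rintro ⟨T, i⟩ hp
    simp only [mem_sigma, mem_powersetCard_univ, mem_compl] at hp ⊢
    exact ⟨by rw [card_erase_of_mem hp.2, hp.1]; simp, notMem_erase _ _⟩
  · rintro ⟨S, i⟩ hp
    simp only [mem_sigma, mem_powersetCard_univ, mem_compl] at hp
    simp [erase_insert hp.2]
  · rintro ⟨T, i⟩ hp
    simp only [mem_sigma, mem_powersetCard_univ] at hp
    simp [insert_erase hp.2]
  · rintro ⟨S, i⟩ hp
    simp only [mem_sigma, mem_powersetCard_univ, mem_compl] at hp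
    exact (prod_insert hp.2).symm

lemma auxB (hz : ∀ i, z i ^ 2 = 1) (a : ℕ) (h1 : 1 ≤ a) (ha : a ≤ n) :
    ∑ S ∈ powersetCard a (univ : Finset (Fin n)), ∑ i ∈ S, z i * ∏ j ∈ S, z j
      = (n - a + 1) • ∑ U ∈ powersetCard (a - 1) (univ : Finset (Fin n)), ∏ j ∈ U, z j := by
  rw [smul_sum, Finset.sum_sigma']
  have h : ∀ U ∈ powersetCard (a-1) (univ : Finset (Fin n)),
      (n - a + 1) • ∏ j ∈ U, z j = ∑ i ∈ Uᶜ, ∏ j ∈ U, z j := by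
    intro U hU
    rw [sum_const, card_compl, Fintype.card_fin, (mem_powersetCard_univ.mp hU)]
    have : n - a + 1 = n - (a - 1) := by omega
    rw [this]
  rw [Finset.sum_congr rfl h, Finset.sum_sigma']
  refine Finset.sum_nbij' (fun p => ⟨p.1.erase p.2, p.2⟩) (fun p => ⟨insert p.2 p.1, p.2⟩)
    ?_ ?_ ?_ ?_ ?_
  · rintro ⟨S, i⟩ hp
    simp only [mem_sigma, mem_powersetCard_univ, mem_compl] at hp ⊢
    exact ⟨by rw [card_erase_of_mem hp.2, hp.1], notMem_erase _ _⟩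
  · rintro ⟨U, i⟩ hp
    simp only [mem_sigma, mem_powersetCard_univ, mem_compl] at hp ⊢
    exact ⟨by rw [card_insert_of_notMem hp.2, hp.1]; omega, mem_insert_self _ _⟩
  · rintro ⟨S, i⟩ hp
    simp only [mem_sigma, mem_powersetCard_univ] at hp
    simp [insert_erase hp.2]
  · rintro ⟨U, i⟩ hp
    simp only [mem_sigma, mem_powersetCard_univ, mem_compl] at hp
    simp [erase_insert hp.2]
  · rintro ⟨S, i⟩ hp
    simp only [mem_sigma, mem_powersetCard_univ] at hp
    rw [← mul_prod_erase S z hp.2, ← mul_assoc, ← sq, hz, one_mul]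

end aux

lemma esymZ_natCast {n : ℕ} {R : Type*} [CommRing R] (z : Fin n → R) (k : ℕ) :
    esymZ n z (k : ℤ) =
      ∑ S ∈ Finset.powersetCard k (Finset.univ : Finset (Fin n)), ∏ i ∈ S, z i := by
  unfold esymZ
  by_cases h : k ≤ n
  · simp [h]
  · rw [if_neg (by simpa using h), Finset.powersetCard_eq_empty.mpr (by simpa using h),
      Finset.sum_empty]

theorem stmt17 (n : ℕ) (hn : 1 ≤ n) (R : Type*) [CommRing R] (z : Fin n → R)
    (hz : ∀ i, z i ^ 2 = 1) (a : ℕ) (ha : a ≤ n) :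
    (∑ i, z i) * esymZ n z (a : ℤ)
      = (a + 1) • esymZ n z ((a : ℤ) + 1) + (n - a + 1) • esymZ n z ((a : ℤ) - 1) := by
  have e1 : esymZ n z ((a : ℤ) + 1) =
      ∑ S ∈ powersetCard (a + 1) (univ : Finset (Fin n)), ∏ i ∈ S, z i := by
    rw [show (a : ℤ) + 1 = ((a + 1 : ℕ) : ℤ) by push_cast; ring, esymZ_natCast]
  have key : (∑ i, z i) * esymZ n z (a : ℤ)
      = (∑ S ∈ powersetCard a (univ : Finset (Fin n)), ∑ i ∈ Sᶜ, z i * ∏ j ∈ S, z j)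
        + ∑ S ∈ powersetCard a (univ : Finset (Fin n)), ∑ i ∈ S, z i * ∏ j ∈ S, z j := by
    rw [esymZ_natCast, mul_sum, ← sum_add_distrib]
    refine sum_congr rfl fun S _ => ?_
    rw [sum_mul, ← Finset.sum_add_sum_compl S (fun i => z i * ∏ j ∈ S, z j), add_comm]
  rcases Nat.eq_zero_or_pos a with rfl | h1
  · have e2 : esymZ n z (((0 : ℕ) : ℤ) - 1) = 0 := by
      rw [esymZ]; norm_num
    rw [key, auxA, e1, e2, smul_zero, add_zero, Finset.powersetCard_zero]
    simp
  · have e3 : esymZ n z ((a : ℤ) - 1) =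
        ∑ S ∈ powersetCard (a - 1) (univ : Finset (Fin n)), ∏ i ∈ S, z i := by
      rw [show (a : ℤ) - 1 = ((a - 1 : ℕ) : ℤ) by omega, esymZ_natCast]
    rw [key, auxA, auxB z hz a h1 ha, e1, e3]
end
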